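/- arXiv:2102.08560 — 10 statements merged into one kernel-verified Lean document; each statement's English description precedes it below -/
import Mathlib

section
/- If a tangle T is stringable, i.e., there exists a continuous surjection F : [0,1] → T that is injective on the open interval (0,1), then T is homeomorphic to one of the six basic stringable tangles: the unit interval, the circle, the lollipop, the figure 8, the handcuffs, or the theta. -/
noncomputable section

/-- A subset of ℝ³ built by gluing together finitely many copies of `[0,1]`. -/
def IsTangleSet (S : Set (ℝ × ℝ × ℝ)) : Prop :=
  IsConnected S ∧
  ∃ (m : ℕ) (f : Fin m → ℝ → ℝ × ℝ × ℝ),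
    1 ≤ m ∧
    (∀ i, ContinuousOn (f i) (Set.Icc 0 1)) ∧
    (∀ i, Set.InjOn (f i) (Set.Ico 0 1)) ∧
    (∀ i, Set.InjOn (f i) (Set.Ioc 0 1)) ∧
    (S = ⋃ i, f i '' Set.Icc 0 1) ∧
    (∀ i j, i ≠ j →
      f i '' Set.Icc 0 1 ∩ f j '' Set.Icc 0 1 ⊆
        ({f i 0, f i 1} : Set (ℝ × ℝ × ℝ)) ∩ ({f j 0, f j 1} : Set (ℝ × ℝ × ℝ)))

/-- A tangle is a topological space homeomorphic to such a subset of ℝ³. -/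
def IsTangle (T : Type) [TopologicalSpace T] : Prop :=
  ∃ S : Set (ℝ × ℝ × ℝ), IsTangleSet S ∧ Nonempty (T ≃ₜ ↥S)

/-- Unit circle centered at `c`. -/
def circleAt (c : ℝ × ℝ) : Set (ℝ × ℝ) := {p | (p.1 - c.1) ^ 2 + (p.2 - c.2) ^ 2 = 1}

/-- Horizontal segment from `(x₁,0)` to `(x₂,0)`. -/
def segAt (x₁ x₂ : ℝ) : Set (ℝ × ℝ) := {p | p.1 ∈ Set.Icc x₁ x₂ ∧ p.2 = 0}

def unitSegT : Set (ℝ × ℝ) := segAt 0 1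
def circleT : Set (ℝ × ℝ) := circleAt (0, 0)
def lollipopT : Set (ℝ × ℝ) := circleAt (0, 0) ∪ segAt 1 2
def figure8T : Set (ℝ × ℝ) := circleAt (-1, 0) ∪ circleAt (1, 0)
def handcuffsT : Set (ℝ × ℝ) := circleAt (-2, 0) ∪ circleAt (2, 0) ∪ segAt (-1) 1
def thetaT : Set (ℝ × ℝ) := circleAt (0, 0) ∪ segAt (-1) 1

/-- A space is stringable if there is a continuous surjection from `[0,1]` onto it
that is injective on the open interval `(0,1)`. -/
def Stringable (T : Type) [TopologicalSpace T] : Prop :=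
  ∃ F : ↥(Set.Icc (0 : ℝ) 1) → T,
    Continuous F ∧ Function.Surjective F ∧
    Set.InjOn F {x : ↥(Set.Icc (0 : ℝ) 1) | (x : ℝ) ∈ Set.Ioo (0 : ℝ) 1}


open Real Set Function Topology


/-- point on unit circle at angle θ -/
def ept (θ : ℝ) : ℝ × ℝ := (Real.cos θ, Real.sin θ)

lemma ept_inj {θ₁ θ₂ : ℝ} (h1 : θ₁ ∈ Icc 0 (2*π)) (h2 : θ₂ ∈ Icc 0 (2*π))
    (h : ept θ₁ = ept θ₂) : θ₁ = θ₂ ∨ (θ₁ = 0 ∧ θ₂ = 2*π) ∨ (θ₁ = 2*π ∧ θ₂ = 0) := by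
  have hc : Real.cos θ₁ = Real.cos θ₂ := congrArg Prod.fst h
  have hs : Real.sin θ₁ = Real.sin θ₂ := congrArg Prod.snd h
  have hexp : Complex.exp (θ₁ * Complex.I) = Complex.exp (θ₂ * Complex.I) := by
    rw [Complex.exp_mul_I, Complex.exp_mul_I, ← Complex.ofReal_cos, ← Complex.ofReal_sin,
      ← Complex.ofReal_cos, ← Complex.ofReal_sin, hc, hs]
  obtain ⟨n, hn⟩ := Complex.exp_eq_exp_iff_exists_int.1 hexp
  have hre : θ₁ = θ₂ + n * (2*π) := by
    have := congrArg Complex.im hn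
    simpa using this
  have hπ := Real.pi_pos
  have hb1 : (-1 : ℤ) ≤ n := by
    by_contra hcon
    push_neg at hcon
    have hn2 : n ≤ -2 := by omega
    have : (n : ℝ) ≤ -2 := by exact_mod_cast hn2
    nlinarith [h1.1, h1.2, h2.1, h2.2]
  have hb2 : n ≤ 1 := by
    by_contra hcon
    push_neg at hcon
    have hn2 : 2 ≤ n := by omega
    have : (2 : ℝ) ≤ (n : ℝ) := by exact_mod_cast hn2
    nlinarith [h1.1, h1.2, h2.1, h2.2]
  interval_cases n
  · simp only [Int.cast_neg, Int.cast_one] at hre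
    right; left; constructor <;> linarith [h1.1, h1.2, h2.1, h2.2]
  · left; simp at hre; linarith
  · simp only [Int.cast_one] at hre
    right; right; constructor <;> linarith [h1.1, h1.2, h2.1, h2.2]

lemma ept_surj {p : ℝ × ℝ} (hp : p.1 ^ 2 + p.2 ^ 2 = 1) :
    ∃ θ ∈ Ico 0 (2*π), ept θ = p := by
  set z : ℂ := ⟨p.1, p.2⟩ with hz
  have habs : ‖z‖ = 1 := by
    have : ‖z‖ ^ 2 = 1 := by
      rw [Complex.sq_norm, Complex.normSq_mk]; nlinarith
    nlinarith [norm_nonneg z]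
  have hz0 : z ≠ 0 := by
    intro h0; rw [h0] at habs; simp at habs
  have hcos : Real.cos (Complex.arg z) = p.1 := by
    rw [Complex.cos_arg hz0, habs]; simp [hz]
  have hsin : Real.sin (Complex.arg z) = p.2 := by
    rw [Complex.sin_arg, habs]; simp [hz]
  have hrange := Complex.arg_mem_Ioc z
  have hπ := Real.pi_pos
  by_cases hneg : Complex.arg z < 0
  · refine ⟨Complex.arg z + 2*π, ⟨by linarith [hrange.1], by linarith⟩, ?_⟩
    unfold ept
    rw [Real.cos_add_two_pi, Real.sin_add_two_pi, hcos, hsin]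
  · exact ⟨Complex.arg z, ⟨le_of_not_gt hneg, by linarith [hrange.2]⟩,
      by unfold ept; rw [hcos, hsin]⟩

lemma homeo_of_rel {X T M : Type} [TopologicalSpace X] [TopologicalSpace T] [TopologicalSpace M]
    [CompactSpace X] [T2Space T] [T2Space M]
    (F : X → T) (G : X → M) (hFc : Continuous F) (hGc : Continuous G)
    (hFs : Surjective F) (hGs : Surjective G)
    (hrel : ∀ x y, F x = F y ↔ G x = G y) : Nonempty (T ≃ₜ M) := by
  have hFq : IsQuotientMap F := IsQuotientMap.of_surjective_continuous hFs hFc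
  have hGq : IsQuotientMap G := IsQuotientMap.of_surjective_continuous hGs hGc
  choose secF hsecF using hFs
  choose secG hsecG using hGs
  have keyF : ∀ x, F (secG (G x)) = F x := fun x => (hrel _ _).2 (hsecG (G x))
  have keyG : ∀ x, G (secF (F x)) = G x := fun x => (hrel _ _).1 (hsecF (F x))
  refine ⟨Homeomorph.mk ⟨fun t => G (secF t), fun m => F (secG m), ?_, ?_⟩ ?_ ?_⟩
  · intro t
    show F (secG (G (secF t))) = t
    rw [keyF, hsecF]
  · intro m
    show G (secF (F (secG m))) = m
    rw [keyG, hsecG]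
  · show Continuous fun t => G (secF t)
    rw [hFq.continuous_iff]
    have : (fun t => G (secF t)) ∘ F = G := funext keyG
    rw [this]; exact hGc
  · show Continuous fun m => F (secG m)
    rw [hGq.continuous_iff]
    have : (fun m => F (secG m)) ∘ G = F := funext keyF
    rw [this]; exact hFc


lemma ept_zero : ept 0 = (1, 0) := by simp [ept]
lemma ept_pi : ept π = (-1, 0) := by simp [ept]
lemma ept_two_pi : ept (2*π) = (1, 0) := by simp [ept, Real.cos_two_pi, Real.sin_two_pi]

/-- linear rescale sending u ↦ 0, v ↦ 1 -/
def lin (u v t : ℝ) : ℝ := (t - u) / (v - u)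

lemma lin_mem {u v t : ℝ} (h : u < v) (ht : t ∈ Icc u v) : lin u v t ∈ Icc 0 1 := by
  unfold lin
  constructor
  · exact div_nonneg (by linarith [ht.1]) (by linarith)
  · rw [div_le_one (by linarith)]; linarith [ht.2]

lemma lin_self (u v : ℝ) : lin u v u = 0 := by simp [lin]

lemma lin_end {u v : ℝ} (h : u ≠ v) : lin u v v = 1 :=
  div_self (sub_ne_zero.2 (Ne.symm h))

lemma lin_inj {u v s t : ℝ} (h : u ≠ v) (he : lin u v s = lin u v t) : s = t := by
  have hvu : v - u ≠ 0 := sub_ne_zero.2 (Ne.symm h)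
  simp only [lin] at he
  rw [div_left_inj' hvu] at he
  linarith

lemma lin_eq_zero {u v t : ℝ} (h : u ≠ v) : lin u v t = 0 ↔ t = u := by
  constructor
  · intro h0; exact lin_inj h (by rw [h0, lin_self])
  · rintro rfl; exact lin_self _ _

lemma lin_eq_one {u v t : ℝ} (h : u ≠ v) : lin u v t = 1 ↔ t = v := by
  constructor
  · intro h0; exact lin_inj h (by rw [h0, lin_end h])
  · rintro rfl; exact lin_end h

lemma lin_surj {u v : ℝ} (h : u < v) {r : ℝ} (hr : r ∈ Icc 0 1) :
    ∃ t ∈ Icc u v, lin u v t = r := by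
  refine ⟨u + r * (v - u), ⟨by nlinarith [hr.1, hr.2], by nlinarith [hr.1, hr.2]⟩, ?_⟩
  have hvu : v - u ≠ 0 := ne_of_gt (by linarith)
  simp only [lin]; rw [div_eq_iff hvu]; ring

lemma lin_cont (u v : ℝ) : Continuous (lin u v) := by
  unfold lin; fun_prop

lemma two_pi_lin_mem {u v t : ℝ} (h : u < v) (ht : t ∈ Icc u v) :
    2*π * lin u v t ∈ Icc 0 (2*π) := by
  have := lin_mem h ht
  have hπ := Real.pi_pos
  constructor
  · nlinarith [this.1]
  · nlinarith [this.2]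

/-- circle piece: traverses circleAt c once, starting and ending at (c.1+ε, c.2) -/
def cpc (c : ℝ × ℝ) (ε u v : ℝ) (t : ℝ) : ℝ × ℝ :=
  (c.1 + ε * Real.cos (2*π * lin u v t), c.2 + ε * Real.sin (2*π * lin u v t))

lemma cpc_cont (c : ℝ × ℝ) (ε u v : ℝ) : Continuous (cpc c ε u v) := by
  unfold cpc lin; fun_prop

lemma cpc_mem {ε : ℝ} (hε : ε = 1 ∨ ε = -1) (c : ℝ × ℝ) (u v t : ℝ) :
    cpc c ε u v t ∈ circleAt c := by
  have h2 : ε ^ 2 = 1 := by rcases hε with rfl | rfl <;> norm_num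
  have key : (ε * Real.cos (2*π * lin u v t)) ^ 2 + (ε * Real.sin (2*π * lin u v t)) ^ 2 = 1 := by
    nlinarith [Real.sin_sq_add_cos_sq (2*π * lin u v t)]
  simp only [circleAt, cpc, mem_setOf_eq, add_sub_cancel_left]
  exact key

lemma cpc_start (c : ℝ × ℝ) (ε u v : ℝ) : cpc c ε u v u = (c.1 + ε, c.2) := by
  simp [cpc, lin_self]

lemma cpc_end (c : ℝ × ℝ) (ε : ℝ) {u v : ℝ} (h : u ≠ v) : cpc c ε u v v = (c.1 + ε, c.2) := by
  simp [cpc, lin_end h, Real.cos_two_pi, Real.sin_two_pi]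

lemma cpc_rel {ε : ℝ} (hε : ε = 1 ∨ ε = -1) (c : ℝ × ℝ) {u v s t : ℝ} (huv : u < v)
    (hs : s ∈ Icc u v) (ht : t ∈ Icc u v) :
    cpc c ε u v s = cpc c ε u v t ↔ s = t ∨ (s = u ∧ t = v) ∨ (s = v ∧ t = u) := by
  have hεne : ε ≠ 0 := by rcases hε with rfl | rfl <;> norm_num
  have hne : u ≠ v := ne_of_lt huv
  have hπ := Real.pi_pos
  constructor
  · intro h
    have h1 : Real.cos (2*π * lin u v s) = Real.cos (2*π * lin u v t) := by
      have := congrArg Prod.fst h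
      simp only [cpc] at this
      have := add_left_cancel this
      exact mul_left_cancel₀ hεne this
    have h2 : Real.sin (2*π * lin u v s) = Real.sin (2*π * lin u v t) := by
      have := congrArg Prod.snd h
      simp only [cpc] at this
      have := add_left_cancel this
      exact mul_left_cancel₀ hεne this
    have he : ept (2*π * lin u v s) = ept (2*π * lin u v t) := by
      unfold ept; rw [h1, h2]
    rcases ept_inj (two_pi_lin_mem huv hs) (two_pi_lin_mem huv ht) he with h' | ⟨ha, hb⟩ | ⟨ha, hb⟩
    · left
      exact lin_inj hne (mul_left_cancel₀ (by positivity) h')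
    · right; left
      have hs0 : lin u v s = 0 := by nlinarith
      have ht1 : lin u v t = 1 := by nlinarith
      exact ⟨(lin_eq_zero hne).1 hs0, (lin_eq_one hne).1 ht1⟩
    · right; right
      have hs1 : lin u v s = 1 := by nlinarith
      have ht0 : lin u v t = 0 := by nlinarith
      exact ⟨(lin_eq_one hne).1 hs1, (lin_eq_zero hne).1 ht0⟩
  · rintro (rfl | ⟨rfl, rfl⟩ | ⟨rfl, rfl⟩)
    · rfl
    · rw [cpc_start, cpc_end _ _ hne]
    · rw [cpc_start, cpc_end _ _ hne]

lemma cpc_surj {ε : ℝ} (hε : ε = 1 ∨ ε = -1) (c : ℝ × ℝ) {u v : ℝ} (huv : u < v)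
    {p : ℝ × ℝ} (hp : p ∈ circleAt c) : ∃ t ∈ Icc u v, cpc c ε u v t = p := by
  have h2 : ε ^ 2 = 1 := by rcases hε with rfl | rfl <;> norm_num
  have hπ := Real.pi_pos
  have hq : (ε * (p.1 - c.1)) ^ 2 + (ε * (p.2 - c.2)) ^ 2 = 1 := by
    have : (p.1 - c.1) ^ 2 + (p.2 - c.2) ^ 2 = 1 := hp
    nlinarith
  obtain ⟨θ, hθ, he⟩ := ept_surj (p := (ε * (p.1 - c.1), ε * (p.2 - c.2))) hq
  have hr : θ / (2*π) ∈ Icc (0:ℝ) 1 := by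
    constructor
    · exact div_nonneg hθ.1 (by positivity)
    · rw [div_le_one (by positivity)]; exact le_of_lt hθ.2
  obtain ⟨t, htm, hlt⟩ := lin_surj huv hr
  refine ⟨t, htm, ?_⟩
  have hang : 2*π * lin u v t = θ := by rw [hlt]; field_simp
  have hc : Real.cos θ = ε * (p.1 - c.1) := congrArg Prod.fst he
  have hs : Real.sin θ = ε * (p.2 - c.2) := congrArg Prod.snd he
  simp only [cpc, hang, hc, hs]
  ext
  · show c.1 + ε * (ε * (p.1 - c.1)) = p.1
    linear_combination (p.1 - c.1) * h2
  · show c.2 + ε * (ε * (p.2 - c.2)) = p.2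
    linear_combination (p.2 - c.2) * h2

/-- segment piece from (x₁,0) at t=u to (x₂,0) at t=v -/
def spc (x₁ x₂ u v : ℝ) (t : ℝ) : ℝ × ℝ := (x₁ + (x₂ - x₁) * lin u v t, 0)

lemma spc_cont (x₁ x₂ u v : ℝ) : Continuous (spc x₁ x₂ u v) := by
  unfold spc lin; fun_prop

lemma spc_start (x₁ x₂ u v : ℝ) : spc x₁ x₂ u v u = (x₁, 0) := by simp [spc, lin_self]

lemma spc_end (x₁ x₂ : ℝ) {u v : ℝ} (h : u ≠ v) : spc x₁ x₂ u v v = (x₂, 0) := by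
  simp [spc, lin_end h]

lemma spc_mem {x₁ x₂ u v t : ℝ} (hx : x₁ < x₂) (huv : u < v) (ht : t ∈ Icc u v) :
    spc x₁ x₂ u v t ∈ segAt x₁ x₂ := by
  have h1 := lin_mem huv ht
  refine ⟨⟨?_, ?_⟩, rfl⟩ <;> show _ ≤ _ <;> simp only [spc] <;> nlinarith [h1.1, h1.2]

lemma spc_surj {x₁ x₂ u v : ℝ} (hx : x₁ < x₂) (huv : u < v) {p : ℝ × ℝ}
    (hp : p ∈ segAt x₁ x₂) : ∃ t ∈ Icc u v, spc x₁ x₂ u v t = p := by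
  obtain ⟨⟨h1, h2⟩, h3⟩ := hp
  have hr : (p.1 - x₁) / (x₂ - x₁) ∈ Icc (0:ℝ) 1 := by
    constructor
    · exact div_nonneg (by linarith) (by linarith)
    · rw [div_le_one (by linarith)]; linarith
  obtain ⟨t, htm, hlt⟩ := lin_surj huv hr
  refine ⟨t, htm, ?_⟩
  simp only [spc, hlt]
  have hne : x₂ - x₁ ≠ 0 := ne_of_gt (by linarith)
  ext
  · show x₁ + (x₂ - x₁) * ((p.1 - x₁) / (x₂ - x₁)) = p.1
    field_simp
    ring
  · exact h3.symm

lemma spc_rel {x₁ x₂ u v s t : ℝ} (hx : x₁ ≠ x₂) (huv : u ≠ v)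
    (h : spc x₁ x₂ u v s = spc x₁ x₂ u v t) : s = t := by
  have := congrArg Prod.fst h
  simp only [spc] at this
  have := add_left_cancel this
  exact lin_inj huv (mul_left_cancel₀ (sub_ne_zero.2 (Ne.symm hx)) this)

lemma spc_fst {x₁ x₂ u v t : ℝ} : (spc x₁ x₂ u v t).1 = x₁ + (x₂ - x₁) * lin u v t := rfl



abbrev UI : Type := ↥(Set.Icc (0:ℝ) 1)

def GRel (A B : Set ℝ) (s t : ℝ) : Prop := s = t ∨ (s ∈ A ∧ t ∈ A) ∨ (s ∈ B ∧ t ∈ B)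

def ModelPkg (M : Set (ℝ × ℝ)) (A B : Set ℝ) : Prop :=
  ∃ g : ℝ → ℝ × ℝ, Continuous g ∧ (∀ t ∈ Icc (0:ℝ) 1, g t ∈ M) ∧ (M ⊆ g '' Icc 0 1) ∧
    ∀ s ∈ Icc (0:ℝ) 1, ∀ t ∈ Icc (0:ℝ) 1, (g s = g t ↔ GRel A B s t)

lemma ModelPkg.swap {M A B} (h : ModelPkg M A B) : ModelPkg M B A := by
  obtain ⟨g, h1, h2, h3, h4⟩ := h
  exact ⟨g, h1, h2, h3, fun s hs t ht => (h4 s hs t ht).trans (by unfold GRel; tauto)⟩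

lemma ModelPkg.rev {M A B A' B'} (h : ModelPkg M A B)
    (hA' : ∀ s, s ∈ A' ↔ 1 - s ∈ A) (hB' : ∀ s, s ∈ B' ↔ 1 - s ∈ B) : ModelPkg M A' B' := by
  obtain ⟨g, h1, h2, h3, h4⟩ := h
  refine ⟨fun t => g (1 - t), by fun_prop, ?_, ?_, ?_⟩
  · intro t ht
    exact h2 (1 - t) ⟨by linarith [ht.2], by linarith [ht.1]⟩
  · intro p hp
    obtain ⟨t, ht, hgt⟩ := h3 hp
    refine ⟨1 - t, ⟨by linarith [ht.2], by linarith [ht.1]⟩, ?_⟩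
    show g (1 - (1 - t)) = p
    rw [sub_sub_cancel]; exact hgt
  · intro s hs t ht
    have hs' : 1 - s ∈ Icc (0:ℝ) 1 := ⟨by linarith [hs.2], by linarith [hs.1]⟩
    have ht' : 1 - t ∈ Icc (0:ℝ) 1 := ⟨by linarith [ht.2], by linarith [ht.1]⟩
    rw [h4 _ hs' _ ht']
    unfold GRel
    rw [hA' s, hA' t, hB' s, hB' t]
    constructor <;> rintro (h | h | h)
    · left; linarith
    · right; left; exact h
    · right; right; exact h
    · left; linarith [h]
    · right; left; exact h
    · right; right; exact h

def pt0 : UI := ⟨0, by norm_num⟩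
def pt1 : UI := ⟨1, by norm_num⟩

lemma UI.tri (x : UI) : x = pt0 ∨ x = pt1 ∨ (x : ℝ) ∈ Ioo (0:ℝ) 1 := by
  obtain ⟨h1, h2⟩ := x.2
  rcases eq_or_lt_of_le h1 with h | h
  · exact Or.inl (Subtype.ext h.symm)
  rcases eq_or_lt_of_le h2 with h' | h'
  · exact Or.inr (Or.inl (Subtype.ext h'))
  · exact Or.inr (Or.inr ⟨h, h'⟩)

lemma F_rel {T : Type} (F : UI → T) (hinj : InjOn F {x : UI | (x : ℝ) ∈ Ioo (0:ℝ) 1})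
    {A B : Set ℝ}
    (hA : ∀ x : UI, F x = F pt0 ↔ (x : ℝ) ∈ A) (hB : ∀ x : UI, F x = F pt1 ↔ (x : ℝ) ∈ B) :
    ∀ x y : UI, F x = F y ↔ GRel A B ↑x ↑y := by
  intro x y
  constructor
  · intro h
    by_cases hxy : x = y
    · exact Or.inl (congrArg _ hxy)
    have key : (F x = F pt0 ∧ F y = F pt0) ∨ (F x = F pt1 ∧ F y = F pt1) := by
      rcases UI.tri x with rfl | rfl | hx
      · exact Or.inl ⟨rfl, h.symm⟩
      · exact Or.inr ⟨rfl, h.symm⟩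
      rcases UI.tri y with rfl | rfl | hy
      · exact Or.inl ⟨h, rfl⟩
      · exact Or.inr ⟨h, rfl⟩
      · exact absurd (hinj hx hy h) hxy
    rcases key with ⟨h1, h2⟩ | ⟨h1, h2⟩
    · exact Or.inr (Or.inl ⟨(hA x).1 h1, (hA y).1 h2⟩)
    · exact Or.inr (Or.inr ⟨(hB x).1 h1, (hB y).1 h2⟩)
  · rintro (hxy | ⟨h1, h2⟩ | ⟨h1, h2⟩)
    · rw [Subtype.ext hxy]
    · exact ((hA x).2 h1).trans ((hA y).2 h2).symm
    · exact ((hB x).2 h1).trans ((hB y).2 h2).symm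

lemma pkg_homeo {T : Type} [TopologicalSpace T] [T2Space T] {F : UI → T}
    (hFc : Continuous F) (hFs : Surjective F) {M : Set (ℝ × ℝ)} {A B : Set ℝ}
    (hpkg : ModelPkg M A B)
    (hFrel : ∀ x y : UI, F x = F y ↔ GRel A B ↑x ↑y) : Nonempty (T ≃ₜ ↥M) := by
  obtain ⟨g, hgc, hmem, hsurj, hgrel⟩ := hpkg
  have hcoe : Continuous (fun x : UI => (x : ℝ)) := continuous_subtype_val
  set G : UI → ↥M := fun x => ⟨g x, hmem x x.2⟩ with hG
  have hGc : Continuous G := Continuous.subtype_mk (hgc.comp hcoe) _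
  have hGs : Surjective G := by
    rintro ⟨p, hp⟩
    obtain ⟨t, ht, hgt⟩ := hsurj hp
    exact ⟨⟨t, ht⟩, Subtype.ext hgt⟩
  refine homeo_of_rel F G hFc hGc hFs hGs ?_
  intro x y
  rw [hFrel x y, ← hgrel x x.2 y y.2]
  exact ⟨fun h => Subtype.ext h, fun h => congrArg Subtype.val h⟩

lemma pkg_seg : ModelPkg unitSegT {0} {1} := by
  refine ⟨fun t => (t, 0), by fun_prop, ?_, ?_, ?_⟩
  · intro t ht; exact ⟨ht, rfl⟩
  · rintro ⟨px, py⟩ ⟨h1, h2⟩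
    exact ⟨px, h1, by simp [h2.symm]⟩
  · intro s hs t ht
    unfold GRel
    simp only [mem_singleton_iff, Prod.mk.injEq]
    constructor
    · rintro ⟨rfl, -⟩; exact Or.inl rfl
    · rintro (rfl | ⟨rfl, rfl⟩ | ⟨rfl, rfl⟩) <;> simp

lemma pkg_circle : ModelPkg circleT ({0, 1} : Set ℝ) ({0, 1} : Set ℝ) := by
  refine ⟨cpc (0,0) 1 0 1, cpc_cont _ _ _ _, ?_, ?_, ?_⟩
  · intro t _; exact cpc_mem (Or.inl rfl) _ _ _ _
  · intro p hp
    obtain ⟨t, ht, he⟩ := cpc_surj (Or.inl rfl) (0,0) one_pos (p := p) hp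
    exact ⟨t, ht, he⟩
  · intro s hs t ht
    rw [cpc_rel (Or.inl rfl) _ one_pos hs ht]
    unfold GRel
    simp only [mem_insert_iff, mem_singleton_iff]
    constructor
    · rintro (rfl | ⟨rfl, rfl⟩ | ⟨rfl, rfl⟩)
      · exact Or.inl rfl
      · exact Or.inr (Or.inl ⟨Or.inl rfl, Or.inr rfl⟩)
      · exact Or.inr (Or.inl ⟨Or.inr rfl, Or.inl rfl⟩)
    · rintro (rfl | ⟨rfl | rfl, rfl | rfl⟩ | ⟨rfl | rfl, rfl | rfl⟩) <;> norm_num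

lemma circle_seg12 {p : ℝ × ℝ} (h1 : p ∈ circleAt (0,0)) (h2 : p ∈ segAt 1 2) :
    p = (1, 0) := by
  obtain ⟨⟨ha, hb⟩, hc⟩ := h2
  have h1' : (p.1 - 0) ^ 2 + (p.2 - 0) ^ 2 = 1 := h1
  have : p.1 = 1 := by nlinarith
  ext
  · exact this
  · exact hc

lemma pkg_lollipop {a : ℝ} (ha : a ∈ Ioo (0:ℝ) 1) : ModelPkg lollipopT ({0, a} : Set ℝ) ({1} : Set ℝ) := by
  obtain ⟨ha0, ha1⟩ := ha
  have hane : (0:ℝ) ≠ a := ne_of_lt ha0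
  have ha1' : a ≠ 1 := ne_of_lt ha1
  refine ⟨fun t => if t ≤ a then cpc (0,0) 1 0 a t else spc 1 2 a 1 t, ?_, ?_, ?_, ?_⟩
  · refine Continuous.if_le (cpc_cont _ _ _ _) (spc_cont _ _ _ _) continuous_id
      continuous_const ?_
    intro t htEq
    rw [htEq, cpc_end _ _ hane, spc_start]
    norm_num
  · intro t ht
    by_cases h : t ≤ a
    · simp only [if_pos h]
      exact Or.inl (cpc_mem (Or.inl rfl) _ _ _ _)
    · simp only [if_neg h]
      exact Or.inr (spc_mem one_lt_two ha1 ⟨le_of_lt (not_le.1 h), ht.2⟩)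
  · rintro p (hp | hp)
    · obtain ⟨t, ht, he⟩ := cpc_surj (Or.inl rfl) (0,0) ha0 (p := p) hp
      refine ⟨t, ⟨ht.1, le_trans ht.2 (le_of_lt ha1)⟩, ?_⟩
      simp only [if_pos ht.2]; exact he
    · obtain ⟨t, ht, he⟩ := spc_surj one_lt_two ha1 (p := p) hp
      by_cases h : t ≤ a
      · have hta : t = a := le_antisymm h ht.1
        subst hta
        refine ⟨t, ⟨by linarith, ht.2⟩, ?_⟩
        simp only [if_pos h]
        rw [← he, spc_start, cpc_end _ _ hane]
        norm_num
      · refine ⟨t, ⟨by linarith [ht.1], ht.2⟩, ?_⟩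
        simp only [if_neg h]; exact he
  · intro s hs t ht
    unfold GRel
    simp only [mem_insert_iff, mem_singleton_iff]
    by_cases hsa : s ≤ a <;> by_cases hta : t ≤ a
    · rw [if_pos hsa, if_pos hta,
        cpc_rel (Or.inl rfl) _ ha0 ⟨hs.1, hsa⟩ ⟨ht.1, hta⟩]
      constructor
      · rintro (rfl | ⟨rfl, rfl⟩ | ⟨rfl, rfl⟩)
        · exact Or.inl rfl
        · exact Or.inr (Or.inl ⟨Or.inl rfl, Or.inr rfl⟩)
        · exact Or.inr (Or.inl ⟨Or.inr rfl, Or.inl rfl⟩)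
      · rintro (rfl | ⟨rfl | rfl, rfl | rfl⟩ | ⟨rfl, rfl⟩) <;> norm_num
    · -- s ≤ a < t
      rw [if_pos hsa, if_neg hta]
      push_neg at hta
      constructor
      · intro h
        exfalso
        have hmem1 : cpc (0,0) 1 0 a s ∈ circleAt (0,0) := cpc_mem (Or.inl rfl) _ _ _ _
        have hmem2 : spc 1 2 a 1 t ∈ segAt 1 2 := spc_mem one_lt_two ha1 ⟨le_of_lt hta, ht.2⟩
        have hpt : spc 1 2 a 1 t = (1, 0) := circle_seg12 (h ▸ hmem1) hmem2
        have : spc 1 2 a 1 t = spc 1 2 a 1 a := by rw [hpt, spc_start]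
        have := spc_rel (by norm_num) ha1' this
        linarith
      · rintro (rfl | ⟨rfl | rfl, rfl | rfl⟩ | ⟨rfl, rfl⟩) <;> linarith
    · -- t ≤ a < s
      rw [if_neg hsa, if_pos hta]
      push_neg at hsa
      constructor
      · intro h
        exfalso
        have hmem1 : cpc (0,0) 1 0 a t ∈ circleAt (0,0) := cpc_mem (Or.inl rfl) _ _ _ _
        have hmem2 : spc 1 2 a 1 s ∈ segAt 1 2 := spc_mem one_lt_two ha1 ⟨le_of_lt hsa, hs.2⟩
        have hpt : spc 1 2 a 1 s = (1, 0) := circle_seg12 (h ▸ hmem1) hmem2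
        have : spc 1 2 a 1 s = spc 1 2 a 1 a := by rw [hpt, spc_start]
        have := spc_rel (by norm_num) ha1' this
        linarith
      · rintro (rfl | ⟨rfl | rfl, rfl | rfl⟩ | ⟨rfl, rfl⟩) <;> linarith
    · -- a < s, a < t
      rw [if_neg hsa, if_neg hta]
      push_neg at hsa hta
      constructor
      · intro h
        exact Or.inl (spc_rel (by norm_num) ha1' h)
      · rintro (rfl | ⟨rfl | rfl, rfl | rfl⟩ | ⟨rfl, rfl⟩) <;> first | rfl | linarith

lemma GRel_symm {A B : Set ℝ} {s t : ℝ} : GRel A B s t ↔ GRel A B t s := by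
  unfold GRel; tauto

lemma circle_circle_fig8 {p : ℝ × ℝ} (h1 : p ∈ circleAt (-1,0)) (h2 : p ∈ circleAt (1,0)) :
    p = (0, 0) := by
  have h1' : (p.1 - (-1,0).1) ^ 2 + (p.2 - (-1,0).2) ^ 2 = 1 := h1
  have h2' : (p.1 - (1,0).1) ^ 2 + (p.2 - (1,0).2) ^ 2 = 1 := h2
  simp only at h1' h2'
  have hx : p.1 = 0 := by nlinarith
  have hy : p.2 = 0 := by nlinarith
  ext <;> assumption

lemma pkg_fig8 {a : ℝ} (ha : a ∈ Ioo (0:ℝ) 1) :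
    ModelPkg figure8T ({0, a, 1} : Set ℝ) ({0, a, 1} : Set ℝ) := by
  obtain ⟨ha0, ha1⟩ := ha
  have hane : (0:ℝ) ≠ a := ne_of_lt ha0
  have ha1' : a ≠ 1 := ne_of_lt ha1
  set g : ℝ → ℝ × ℝ := fun t => if t ≤ a then cpc (-1,0) 1 0 a t else cpc (1,0) (-1) a 1 t
    with hg
  have hval0 : cpc (-1,0) 1 0 a 0 = (0, 0) := by rw [cpc_start]; norm_num
  have hvala : cpc (-1,0) 1 0 a a = (0, 0) := by rw [cpc_end _ _ hane]; norm_num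
  have hvala' : cpc (1,0) (-1) a 1 a = (0, 0) := by rw [cpc_start]; norm_num
  have hval1 : cpc (1,0) (-1) a 1 1 = (0, 0) := by rw [cpc_end _ _ ha1']; norm_num
  -- given value (0,0), parameters on each piece
  have hpar1 : ∀ s ∈ Icc (0:ℝ) a, cpc (-1,0) 1 0 a s = (0,0) → s = 0 ∨ s = a := by
    intro s hs h
    have : cpc (-1,0) 1 0 a s = cpc (-1,0) 1 0 a 0 := by rw [hval0, h]
    rcases (cpc_rel (Or.inl rfl) _ ha0 hs ⟨le_refl 0, ha0.le⟩).1 this with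
      rfl | ⟨rfl, h2⟩ | ⟨rfl, h2⟩
    · exact Or.inl rfl
    · exact Or.inl rfl
    · exact Or.inr rfl
  have hpar2 : ∀ s ∈ Icc a (1:ℝ), cpc (1,0) (-1) a 1 s = (0,0) → s = a ∨ s = 1 := by
    intro s hs h
    have : cpc (1,0) (-1) a 1 s = cpc (1,0) (-1) a 1 a := by rw [hvala', h]
    rcases (cpc_rel (Or.inr rfl) _ ha1 hs ⟨le_refl a, ha1.le⟩).1 this with
      rfl | ⟨rfl, h2⟩ | ⟨rfl, h2⟩
    · exact Or.inl rfl
    · exact Or.inl rfl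
    · exact Or.inr rfl
  refine ⟨g, ?_, ?_, ?_, ?_⟩
  · refine Continuous.if_le (cpc_cont _ _ _ _) (cpc_cont _ _ _ _) continuous_id
      continuous_const ?_
    intro t htEq
    rw [htEq, cpc_end _ _ hane, cpc_start]
    norm_num
  · intro t ht
    by_cases h : t ≤ a
    · simp only [hg, if_pos h]
      exact Or.inl (cpc_mem (Or.inl rfl) _ _ _ _)
    · simp only [hg, if_neg h]
      exact Or.inr (cpc_mem (Or.inr rfl) _ _ _ _)
  · rintro p (hp | hp)
    · obtain ⟨t, ht, he⟩ := cpc_surj (Or.inl rfl) (-1,0) ha0 (p := p) hp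
      exact ⟨t, ⟨ht.1, le_trans ht.2 ha1.le⟩, by simp only [hg, if_pos ht.2]; exact he⟩
    · obtain ⟨t, ht, he⟩ := cpc_surj (Or.inr rfl) (1,0) ha1 (p := p) hp
      by_cases h : t ≤ a
      · have hta : t = a := le_antisymm h ht.1
        subst hta
        refine ⟨t, ⟨ha0.le, ht.2⟩, ?_⟩
        simp only [hg, if_pos h]
        rw [← he, hvala, hvala']
      · exact ⟨t, ⟨le_trans ha0.le ht.1, ht.2⟩, by simp only [hg, if_neg h]; exact he⟩
  · -- relation
    have key : ∀ s ∈ Icc (0:ℝ) 1, ∀ t ∈ Icc (0:ℝ) 1, s ≤ t →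
        (g s = g t ↔ GRel {0, a, 1} {0, a, 1} s t) := by
      intro s hs t ht hst
      unfold GRel
      simp only [mem_insert_iff, mem_singleton_iff]
      by_cases hsa : s ≤ a <;> by_cases hta : t ≤ a
      · simp only [hg, if_pos hsa, if_pos hta]
        rw [cpc_rel (Or.inl rfl) _ ha0 ⟨hs.1, hsa⟩ ⟨ht.1, hta⟩]
        constructor
        · rintro (rfl | ⟨rfl, rfl⟩ | ⟨rfl, rfl⟩)
          · exact Or.inl rfl
          · exact Or.inr (Or.inl ⟨by norm_num, by norm_num⟩)
          · exact Or.inr (Or.inl ⟨by norm_num, by norm_num⟩)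
        · rintro (rfl | ⟨rfl | rfl | rfl, rfl | rfl | rfl⟩ | ⟨rfl | rfl | rfl, rfl | rfl | rfl⟩) <;>
            first | tauto | linarith
      · -- s ≤ a < t
        push_neg at hta
        simp only [hg, if_pos hsa, if_neg (not_le.2 hta)]
        constructor
        · intro h
          have hm1 : cpc (-1,0) 1 0 a s ∈ circleAt (-1,0) := cpc_mem (Or.inl rfl) _ _ _ _
          have hm2 : cpc (1,0) (-1) a 1 t ∈ circleAt (1,0) := cpc_mem (Or.inr rfl) _ _ _ _
          have hpt : cpc (-1,0) 1 0 a s = (0,0) := circle_circle_fig8 hm1 (h ▸ hm2)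
          have hs' := hpar1 s ⟨hs.1, hsa⟩ hpt
          have ht' := hpar2 t ⟨hta.le, ht.2⟩ (by rw [← h]; exact hpt)
          refine Or.inr (Or.inl ⟨?_, ?_⟩) <;> tauto
        · intro hrel
          have hkey : (s = 0 ∨ s = a) ∧ t = 1 := by
            rcases hrel with heq | ⟨hs', ht'⟩ | ⟨hs', ht'⟩
            · exfalso; rw [heq] at hsa; exact absurd hsa (not_le.2 hta)
            all_goals
              refine ⟨?_, ?_⟩
              · rcases hs' with rfl | rfl | rfl
                · exact Or.inl rfl
                · exact Or.inr rfl
                · linarith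
              · rcases ht' with rfl | rfl | rfl
                · linarith
                · linarith
                · rfl
          obtain ⟨hseq, rfl⟩ := hkey
          rcases hseq with rfl | rfl
          · rw [hval0, hval1]
          · rw [hvala, hval1]
      · linarith
      · -- a < s ≤ t
        push_neg at hsa
        simp only [hg, if_neg (not_le.2 hsa), if_neg (not_le.2 (lt_of_lt_of_le hsa hst))]
        rw [cpc_rel (Or.inr rfl) _ ha1 ⟨hsa.le, hs.2⟩ ⟨(lt_of_lt_of_le hsa hst).le, ht.2⟩]
        constructor
        · rintro (rfl | ⟨rfl, rfl⟩ | ⟨rfl, rfl⟩)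
          · exact Or.inl rfl
          · exact Or.inr (Or.inl ⟨by norm_num, by norm_num⟩)
          · exact Or.inr (Or.inl ⟨by norm_num, by norm_num⟩)
        · rintro (rfl | ⟨rfl | rfl | rfl, rfl | rfl | rfl⟩ | ⟨rfl | rfl | rfl, rfl | rfl | rfl⟩) <;>
            first | tauto | linarith
    intro s hs t ht
    rcases le_total s t with h | h
    · exact key s hs t ht h
    · rw [show (g s = g t) ↔ (g t = g s) from eq_comm, key t ht s hs h]
      exact GRel_symm

lemma GRel_symm' {A B : Set ℝ} {s t : ℝ} : GRel A B s t ↔ GRel A B t s := by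
  unfold GRel; tauto

lemma hc_I1 {p : ℝ × ℝ} (h1 : p ∈ circleAt (-2,0)) (h2 : p ∈ segAt (-1) 1) : p = (-1, 0) := by
  have h1' : (p.1 - (-2,0).1) ^ 2 + (p.2 - (-2,0).2) ^ 2 = 1 := h1
  obtain ⟨⟨ha, hb⟩, hc⟩ := h2
  simp only at h1'
  have hx : p.1 = -1 := by nlinarith
  ext <;> assumption

lemma hc_I2 {p : ℝ × ℝ} (h1 : p ∈ circleAt (2,0)) (h2 : p ∈ segAt (-1) 1) : p = (1, 0) := by
  have h1' : (p.1 - (2,0).1) ^ 2 + (p.2 - (2,0).2) ^ 2 = 1 := h1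
  obtain ⟨⟨ha, hb⟩, hc⟩ := h2
  simp only at h1'
  have hx : p.1 = 1 := by nlinarith
  ext <;> assumption

lemma hc_I3 {p : ℝ × ℝ} (h1 : p ∈ circleAt (-2,0)) (h2 : p ∈ circleAt (2,0)) : False := by
  have h1' : (p.1 - (-2,0).1) ^ 2 + (p.2 - (-2,0).2) ^ 2 = 1 := h1
  have h2' : (p.1 - (2,0).1) ^ 2 + (p.2 - (2,0).2) ^ 2 = 1 := h2
  simp only at h1' h2'
  nlinarith [sq_nonneg p.2, sq_nonneg p.1]

lemma pkg_handcuffs {a b : ℝ} (ha0 : 0 < a) (hab : a < b) (hb1 : b < 1) :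
    ModelPkg handcuffsT ({0, a} : Set ℝ) ({b, 1} : Set ℝ) := by
  have hane : (0:ℝ) ≠ a := ne_of_lt ha0
  have habne : a ≠ b := ne_of_lt hab
  have hb1' : b ≠ 1 := ne_of_lt hb1
  set g : ℝ → ℝ × ℝ := fun t =>
    if t ≤ a then cpc (-2,0) 1 0 a t
    else if t ≤ b then spc (-1) 1 a b t
    else cpc (2,0) (-1) b 1 t with hg
  have hval10 : cpc (-2,0) 1 0 a 0 = (-1, 0) := by rw [cpc_start]; norm_num
  have hval1a : cpc (-2,0) 1 0 a a = (-1, 0) := by rw [cpc_end _ _ hane]; norm_num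
  have hvalsa : spc (-1) 1 a b a = (-1, 0) := spc_start _ _ _ _
  have hvalsb : spc (-1) 1 a b b = (1, 0) := spc_end _ _ habne
  have hval3b : cpc (2,0) (-1) b 1 b = (1, 0) := by rw [cpc_start]; norm_num
  have hval31 : cpc (2,0) (-1) b 1 1 = (1, 0) := by rw [cpc_end _ _ hb1']; norm_num
  have hpar1 : ∀ s ∈ Icc (0:ℝ) a, cpc (-2,0) 1 0 a s = (-1,0) → s = 0 ∨ s = a := by
    intro s hs h
    have : cpc (-2,0) 1 0 a s = cpc (-2,0) 1 0 a 0 := by rw [hval10, h]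
    rcases (cpc_rel (Or.inl rfl) _ ha0 hs ⟨le_refl 0, ha0.le⟩).1 this with
      rfl | ⟨rfl, h2⟩ | ⟨rfl, h2⟩
    · exact Or.inl rfl
    · exact Or.inl rfl
    · exact Or.inr rfl
  have hpar3 : ∀ t ∈ Icc b (1:ℝ), cpc (2,0) (-1) b 1 t = (1,0) → t = b ∨ t = 1 := by
    intro t ht h
    have : cpc (2,0) (-1) b 1 t = cpc (2,0) (-1) b 1 b := by rw [hval3b, h]
    rcases (cpc_rel (Or.inr rfl) _ hb1 ht ⟨le_refl b, hb1.le⟩).1 this with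
      rfl | ⟨rfl, h2⟩ | ⟨rfl, h2⟩
    · exact Or.inl rfl
    · exact Or.inl rfl
    · exact Or.inr rfl
  have hparsl : ∀ s ∈ Icc a b, spc (-1) 1 a b s = (-1,0) → s = a := by
    intro s hs h
    have heq : spc (-1) 1 a b s = spc (-1) 1 a b a := by rw [h, hvalsa]
    exact spc_rel (by norm_num : (-1:ℝ) ≠ 1) habne heq
  have hparsr : ∀ s ∈ Icc a b, spc (-1) 1 a b s = (1,0) → s = b := by
    intro s hs h
    have heq : spc (-1) 1 a b s = spc (-1) 1 a b b := by rw [h, hvalsb]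
    exact spc_rel (by norm_num : (-1:ℝ) ≠ 1) habne heq
  refine ⟨g, ?_, ?_, ?_, ?_⟩
  · refine Continuous.if_le (cpc_cont _ _ _ _) ?_ continuous_id continuous_const ?_
    · refine Continuous.if_le (spc_cont _ _ _ _) (cpc_cont _ _ _ _) continuous_id
        continuous_const ?_
      intro t htEq
      rw [htEq, hvalsb, hval3b]
    · intro t htEq
      rw [htEq, hval1a, if_pos hab.le, hvalsa]
  · intro t ht
    by_cases h1 : t ≤ a
    · simp only [hg, if_pos h1]
      exact Or.inl (Or.inl (cpc_mem (Or.inl rfl) _ _ _ _))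
    · by_cases h2 : t ≤ b
      · simp only [hg, if_neg h1, if_pos h2]
        exact Or.inr (spc_mem (by norm_num) hab ⟨le_of_lt (not_le.1 h1), h2⟩)
      · simp only [hg, if_neg h1, if_neg h2]
        exact Or.inl (Or.inr (cpc_mem (Or.inr rfl) _ _ _ _))
  · rintro p ((hp | hp) | hp)
    · obtain ⟨t, ht, he⟩ := cpc_surj (Or.inl rfl) (-2,0) ha0 (p := p) hp
      exact ⟨t, ⟨ht.1, by linarith [ht.2]⟩, by simp only [hg, if_pos ht.2]; exact he⟩
    · obtain ⟨t, ht, he⟩ := cpc_surj (Or.inr rfl) (2,0) hb1 (p := p) hp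
      have h1 : ¬ t ≤ a := by linarith [ht.1]
      by_cases h2 : t ≤ b
      · have htb : t = b := le_antisymm h2 ht.1
        subst htb
        refine ⟨t, ⟨by linarith, ht.2⟩, ?_⟩
        simp only [hg, if_neg h1, if_pos h2]
        rw [← he, hval3b, hvalsb]
      · exact ⟨t, ⟨by linarith [ht.1], ht.2⟩, by simp only [hg, if_neg h1, if_neg h2]; exact he⟩
    · obtain ⟨t, ht, he⟩ := spc_surj (by norm_num) hab (p := p) hp
      by_cases h1 : t ≤ a
      · have hta : t = a := le_antisymm h1 ht.1
        subst hta
        refine ⟨t, ⟨by linarith, by linarith [ht.2]⟩, ?_⟩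
        simp only [hg, if_pos h1]
        rw [← he, hvalsa, hval1a]
      · refine ⟨t, ⟨by linarith [ht.1], by linarith [ht.2]⟩, ?_⟩
        simp only [hg, if_neg h1, if_pos ht.2]
        exact he
  · have key : ∀ s ∈ Icc (0:ℝ) 1, ∀ t ∈ Icc (0:ℝ) 1, s ≤ t →
        (g s = g t ↔ GRel {0, a} {b, 1} s t) := by
      intro s hs t ht hst
      unfold GRel
      simp only [mem_insert_iff, mem_singleton_iff]
      by_cases hsa : s ≤ a
      · by_cases hta : t ≤ a
        · -- (1,1)
          simp only [hg, if_pos hsa, if_pos hta]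
          rw [cpc_rel (Or.inl rfl) _ ha0 ⟨hs.1, hsa⟩ ⟨ht.1, hta⟩]
          constructor
          · rintro (rfl | ⟨rfl, rfl⟩ | ⟨rfl, rfl⟩)
            · exact Or.inl rfl
            · exact Or.inr (Or.inl ⟨Or.inl rfl, Or.inr rfl⟩)
            · exact Or.inr (Or.inl ⟨Or.inr rfl, Or.inl rfl⟩)
          · rintro (rfl | ⟨rfl | rfl, rfl | rfl⟩ | ⟨rfl | rfl, rfl | rfl⟩) <;>
              first | tauto | linarith
        · push_neg at hta
          by_cases htb : t ≤ b
          · -- (1,2)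
            simp only [hg, if_pos hsa, if_neg (not_le.2 hta), if_pos htb]
            constructor
            · intro h
              exfalso
              have hm1 : cpc (-2,0) 1 0 a s ∈ circleAt (-2,0) := cpc_mem (Or.inl rfl) _ _ _ _
              have hm2 : spc (-1) 1 a b t ∈ segAt (-1) 1 :=
                spc_mem (by norm_num) hab ⟨hta.le, htb⟩
              have hpt : spc (-1) 1 a b t = (-1,0) := hc_I1 (h ▸ hm1) hm2
              have := hparsl t ⟨hta.le, htb⟩ hpt
              linarith
            · rintro (rfl | ⟨rfl | rfl, rfl | rfl⟩ | ⟨rfl | rfl, rfl | rfl⟩) <;> linarith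
          · -- (1,3)
            push_neg at htb
            simp only [hg, if_pos hsa, if_neg (not_le.2 hta), if_neg (not_le.2 htb)]
            constructor
            · intro h
              exact absurd (hc_I3 (h ▸ cpc_mem (Or.inl rfl) (-2,0) 0 a s)
                (cpc_mem (Or.inr rfl) _ _ _ _)) id
            · rintro (rfl | ⟨rfl | rfl, rfl | rfl⟩ | ⟨rfl | rfl, rfl | rfl⟩) <;> linarith
      · push_neg at hsa
        have hta : ¬ t ≤ a := by push_neg; linarith
        by_cases hsb : s ≤ b
        · by_cases htb : t ≤ b
          · -- (2,2)
            simp only [hg, if_neg (not_le.2 hsa), if_pos hsb, if_neg hta, if_pos htb]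
            constructor
            · intro h
              exact Or.inl (spc_rel (by norm_num : (-1:ℝ) ≠ 1) habne h)
            · rintro (rfl | ⟨rfl | rfl, rfl | rfl⟩ | ⟨rfl | rfl, rfl | rfl⟩) <;>
                first | rfl | linarith
          · -- (2,3)
            push_neg at htb
            simp only [hg, if_neg (not_le.2 hsa), if_pos hsb, if_neg hta, if_neg (not_le.2 htb)]
            constructor
            · intro h
              have hm1 : spc (-1) 1 a b s ∈ segAt (-1) 1 :=
                spc_mem (by norm_num) hab ⟨hsa.le, hsb⟩
              have hm2 : cpc (2,0) (-1) b 1 t ∈ circleAt (2,0) := cpc_mem (Or.inr rfl) _ _ _ _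
              have hpt : spc (-1) 1 a b s = (1,0) := hc_I2 (h ▸ hm2) hm1
              have hseq := hparsr s ⟨hsa.le, hsb⟩ hpt
              have hteq := hpar3 t ⟨htb.le, ht.2⟩ (by rw [← h, hpt])
              rcases hteq with rfl | rfl
              · linarith
              · exact Or.inr (Or.inr ⟨Or.inl hseq, Or.inr rfl⟩)
            · rintro (rfl | ⟨rfl | rfl, rfl | rfl⟩ | ⟨hs', ht'⟩) <;> try linarith
              have hseq : s = b := by rcases hs' with rfl | rfl <;> first | rfl | linarith
              have hteq : t = 1 := by rcases ht' with rfl | rfl <;> first | rfl | linarith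
              subst hseq; subst hteq
              rw [hvalsb, hval31]
        · -- (3,3)
          push_neg at hsb
          have htb : ¬ t ≤ b := by push_neg; linarith
          simp only [hg, if_neg (not_le.2 hsa), if_neg (not_le.2 hsb), if_neg hta, if_neg htb]
          rw [cpc_rel (Or.inr rfl) _ hb1 ⟨hsb.le, hs.2⟩ ⟨(not_le.1 htb).le, ht.2⟩]
          constructor
          · rintro (rfl | ⟨rfl, rfl⟩ | ⟨rfl, rfl⟩)
            · exact Or.inl rfl
            · exact Or.inr (Or.inr ⟨Or.inl rfl, Or.inr rfl⟩)
            · exact Or.inr (Or.inr ⟨Or.inr rfl, Or.inl rfl⟩)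
          · rintro (rfl | ⟨rfl | rfl, rfl | rfl⟩ | ⟨rfl | rfl, rfl | rfl⟩) <;>
              first | tauto | linarith
    intro s hs t ht
    rcases le_total s t with h | h
    · exact key s hs t ht h
    · rw [show (g s = g t) ↔ (g t = g s) from eq_comm, key t ht s hs h]
      exact GRel_symm'

lemma GRel_symm'' {A B : Set ℝ} {s t : ℝ} : GRel A B s t ↔ GRel A B t s := by
  unfold GRel; tauto

lemma ept_mem (θ : ℝ) : ept θ ∈ circleAt (0,0) := by
  show (Real.cos θ - 0) ^ 2 + (Real.sin θ - 0) ^ 2 = 1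
  simp [Real.cos_sq_add_sin_sq]

lemma ept_cont : Continuous ept := by unfold ept; fun_prop

lemma th_I {p : ℝ × ℝ} (h1 : p ∈ circleAt (0,0)) (h2 : p ∈ segAt (-1) 1) :
    p = (1, 0) ∨ p = (-1, 0) := by
  have h1' : (p.1 - (0,0).1) ^ 2 + (p.2 - (0,0).2) ^ 2 = 1 := h1
  obtain ⟨⟨ha, hb⟩, hc⟩ := h2
  simp only at h1'
  have hz : (p.1 - 1) * (p.1 + 1) = 0 := by nlinarith
  rcases mul_eq_zero.1 hz with h | h
  · left; ext
    · show p.1 = (1:ℝ); linarith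
    · exact hc
  · right; ext
    · show p.1 = (-1:ℝ); linarith
    · exact hc

lemma pkg_theta {a b : ℝ} (hb0 : 0 < b) (hba : b < a) (ha1 : a < 1) :
    ModelPkg thetaT ({0, a} : Set ℝ) ({b, 1} : Set ℝ) := by
  have hπ := Real.pi_pos
  have hbne : (0:ℝ) ≠ b := ne_of_lt hb0
  have hbane : b ≠ a := ne_of_lt hba
  have ha1' : a ≠ 1 := ne_of_lt ha1
  set u : ℝ → ℝ × ℝ := fun t => ept (π * lin 0 b t) with hu
  set w : ℝ → ℝ × ℝ := fun t => ept (2*π - π * lin a 1 t) with hw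
  set g : ℝ → ℝ × ℝ := fun t => if t ≤ b then u t else if t ≤ a then spc (-1) 1 b a t else w t
    with hg
  have hang_u : ∀ t ∈ Icc (0:ℝ) b, π * lin 0 b t ∈ Icc 0 (2*π) := by
    intro t ht
    have := lin_mem hb0 ht
    constructor
    · nlinarith [this.1]
    · nlinarith [this.2]
  have hang_u' : ∀ t ∈ Icc (0:ℝ) b, π * lin 0 b t ≤ π := by
    intro t ht
    have := lin_mem hb0 ht
    nlinarith [this.2]
  have hang_w : ∀ t ∈ Icc a (1:ℝ), 2*π - π * lin a 1 t ∈ Icc 0 (2*π) := by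
    intro t ht
    have := lin_mem ha1 ht
    constructor
    · nlinarith [this.2]
    · nlinarith [this.1]
  have hang_w' : ∀ t ∈ Icc a (1:ℝ), π ≤ 2*π - π * lin a 1 t := by
    intro t ht
    have := lin_mem ha1 ht
    nlinarith [this.2]
  have hu0 : u 0 = (1, 0) := by rw [hu]; simp only [lin_self, mul_zero]; exact ept_zero
  have hub : u b = (-1, 0) := by
    rw [hu]; simp only [lin_end hbne, mul_one]; exact ept_pi
  have hwa : w a = (1, 0) := by
    rw [hw]; simp only [lin_self, mul_zero, sub_zero]; exact ept_two_pi
  have hw1 : w 1 = (-1, 0) := by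
    rw [hw]; simp only [lin_end ha1', mul_one]
    rw [show 2*π - π = π by ring]; exact ept_pi
  have hvsb : spc (-1) 1 b a b = (-1, 0) := spc_start _ _ _ _
  have hvsa : spc (-1) 1 b a a = (1, 0) := spc_end _ _ hbane
  -- parameter determination
  have hparu1 : ∀ s ∈ Icc (0:ℝ) b, u s = (1, 0) → s = 0 := by
    intro s hs h
    rw [hu, ← ept_zero] at h
    rcases ept_inj (hang_u s hs) ⟨le_refl 0, by positivity⟩ h with
      h' | ⟨h', h''⟩ | ⟨h', h''⟩
    · have : lin 0 b s = 0 := by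
        have := mul_left_cancel₀ (ne_of_gt hπ) (by rw [h', mul_zero] : π * lin 0 b s = π * 0)
        exact this
      exact (lin_eq_zero hbne).1 this
    · exact absurd h''.symm (by positivity : (0:ℝ) < 2*π).ne'
    · linarith [hang_u' s hs]
  have hparu2 : ∀ s ∈ Icc (0:ℝ) b, u s = (-1, 0) → s = b := by
    intro s hs h
    rw [hu, ← ept_pi] at h
    rcases ept_inj (hang_u s hs) ⟨hπ.le, by linarith⟩ h with h' | ⟨h', h''⟩ | ⟨h', h''⟩
    · have : lin 0 b s = 1 := mul_left_cancel₀ (ne_of_gt hπ) (by rw [h', mul_one])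
      exact (lin_eq_one hbne).1 this
    · linarith
    · linarith
  have hparw1 : ∀ t ∈ Icc a (1:ℝ), w t = (1, 0) → t = a := by
    intro t ht h
    rw [hw, ← ept_two_pi] at h
    rcases ept_inj (hang_w t ht) ⟨le_of_lt (by positivity : (0:ℝ) < 2*π), le_refl _⟩ h with
      h' | ⟨h', h''⟩ | ⟨h', h''⟩
    · have : lin a 1 t = 0 := by
        have := hang_w' t ht
        nlinarith [h']
      exact (lin_eq_zero ha1').1 this
    · linarith [hang_w' t ht]
    · linarith
  have hparw2 : ∀ t ∈ Icc a (1:ℝ), w t = (-1, 0) → t = 1 := by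
    intro t ht h
    rw [hw, ← ept_pi] at h
    rcases ept_inj (hang_w t ht) ⟨hπ.le, by linarith⟩ h with h' | ⟨h', h''⟩ | ⟨h', h''⟩
    · have : lin a 1 t = 1 := by nlinarith [h']
      exact (lin_eq_one ha1').1 this
    · linarith [hang_w' t ht]
    · linarith
  have huinj : ∀ s ∈ Icc (0:ℝ) b, ∀ t ∈ Icc (0:ℝ) b, u s = u t → s = t := by
    intro s hs t ht h
    rw [hu] at h
    rcases ept_inj (hang_u s hs) (hang_u t ht) h with h' | ⟨h', h''⟩ | ⟨h', h''⟩
    · exact lin_inj hbne (mul_left_cancel₀ (ne_of_gt hπ) h')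
    · linarith [hang_u' t ht]
    · linarith [hang_u' s hs]
  have hwinj : ∀ s ∈ Icc a (1:ℝ), ∀ t ∈ Icc a (1:ℝ), w s = w t → s = t := by
    intro s hs t ht h
    rw [hw] at h
    rcases ept_inj (hang_w s hs) (hang_w t ht) h with h' | ⟨h', h''⟩ | ⟨h', h''⟩
    · have : lin a 1 s = lin a 1 t := by
        have : π * lin a 1 s = π * lin a 1 t := by linarith
        exact mul_left_cancel₀ (ne_of_gt hπ) this
      exact lin_inj ha1' this
    · linarith [hang_w' s hs]
    · linarith [hang_w' t ht]
  have huw : ∀ s ∈ Icc (0:ℝ) b, ∀ t ∈ Icc a (1:ℝ), u s = w t →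
      (s = b ∧ t = 1) ∨ (s = 0 ∧ t = a) := by
    intro s hs t ht h
    rw [hu, hw] at h
    rcases ept_inj (hang_u s hs) (hang_w t ht) h with h' | ⟨h', h''⟩ | ⟨h', h''⟩
    · -- both angles = π
      have h1 : π * lin 0 b s = π := le_antisymm (hang_u' s hs) (h' ▸ hang_w' t ht)
      have h2 : 2*π - π * lin a 1 t = π := by linarith [h' ▸ h1]
      left
      constructor
      · have : lin 0 b s = 1 := mul_left_cancel₀ (ne_of_gt hπ) (by rw [h1, mul_one])
        exact (lin_eq_one hbne).1 this
      · have : lin a 1 t = 1 := by nlinarith [h2]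
        exact (lin_eq_one ha1').1 this
    · right
      constructor
      · have : lin 0 b s = 0 := by
          have : π * lin 0 b s = π * 0 := by rw [h', mul_zero]
          exact mul_left_cancel₀ (ne_of_gt hπ) this
        exact (lin_eq_zero hbne).1 this
      · have : lin a 1 t = 0 := by nlinarith [h'']
        exact (lin_eq_zero ha1').1 this
    · exfalso; linarith [hang_u' s hs]
  refine ⟨g, ?_, ?_, ?_, ?_⟩
  · -- continuity
    have hcu : Continuous u := by
      rw [hu]; exact ept_cont.comp (by unfold lin; fun_prop)
    have hcw : Continuous w := by
      rw [hw]; exact ept_cont.comp (by unfold lin; fun_prop)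
    refine Continuous.if_le hcu ?_ continuous_id continuous_const ?_
    · refine Continuous.if_le (spc_cont _ _ _ _) hcw continuous_id continuous_const ?_
      intro t htEq
      rw [htEq, hvsa, hwa]
    · intro t htEq
      rw [htEq, hub, if_pos hba.le, hvsb]
  · -- maps into thetaT
    intro t ht
    by_cases h1 : t ≤ b
    · simp only [hg, if_pos h1]
      exact Or.inl (ept_mem _)
    · by_cases h2 : t ≤ a
      · simp only [hg, if_neg h1, if_pos h2]
        exact Or.inr (spc_mem (by norm_num) hba ⟨(not_le.1 h1).le, h2⟩)
      · simp only [hg, if_neg h1, if_neg h2]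
        exact Or.inl (ept_mem _)
  · -- surjectivity
    rintro p (hp | hp)
    · have hp' : p.1 ^ 2 + p.2 ^ 2 = 1 := by
        have : (p.1 - (0,0).1) ^ 2 + (p.2 - (0,0).2) ^ 2 = 1 := hp
        simpa using this
      obtain ⟨θ, hθ, he⟩ := ept_surj hp'
      by_cases hθπ : θ ≤ π
      · have hr : θ / π ∈ Icc (0:ℝ) 1 := ⟨div_nonneg hθ.1 hπ.le, by rw [div_le_one hπ]; exact hθπ⟩
        obtain ⟨t, ht, hlt⟩ := lin_surj hb0 hr
        refine ⟨t, ⟨ht.1, by linarith [ht.2]⟩, ?_⟩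
        simp only [hg, if_pos ht.2, hu]
        rw [hlt]
        rw [show π * (θ / π) = θ by field_simp]
        exact he
      · push_neg at hθπ
        have hr : (2*π - θ) / π ∈ Icc (0:ℝ) 1 := by
          constructor
          · exact div_nonneg (by linarith [hθ.2]) hπ.le
          · rw [div_le_one hπ]; linarith
        obtain ⟨t, ht, hlt⟩ := lin_surj ha1 hr
        have htne : t ≠ a := by
          intro h
          subst h
          rw [lin_self] at hlt
          rcases div_eq_zero_iff.1 hlt.symm with h' | h' <;> linarith [hθ.2]
        have hta : a < t := lt_of_le_of_ne ht.1 (Ne.symm htne)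
        refine ⟨t, ⟨by linarith [ht.1], ht.2⟩, ?_⟩
        simp only [hg, if_neg (not_le.2 (lt_trans hba hta)), if_neg (not_le.2 hta), hw]
        rw [hlt, show 2*π - π * ((2*π - θ) / π) = θ by field_simp; ring]
        exact he
    · obtain ⟨t, ht, he⟩ := spc_surj (by norm_num) hba (p := p) hp
      by_cases h1 : t ≤ b
      · have htb : t = b := le_antisymm h1 ht.1
        subst htb
        refine ⟨t, ⟨hb0.le, by linarith [ht.2]⟩, ?_⟩
        simp only [hg, if_pos h1]
        rw [← he, hvsb, hub]
      · refine ⟨t, ⟨by linarith [ht.1], by linarith [ht.2]⟩, ?_⟩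
        simp only [hg, if_neg h1, if_pos ht.2]
        exact he
  · -- relation
    have key : ∀ s ∈ Icc (0:ℝ) 1, ∀ t ∈ Icc (0:ℝ) 1, s ≤ t →
        (g s = g t ↔ GRel {0, a} {b, 1} s t) := by
      intro s hs t ht hst
      unfold GRel
      simp only [mem_insert_iff, mem_singleton_iff]
      by_cases hsb : s ≤ b
      · by_cases htb : t ≤ b
        · -- (1,1)
          simp only [hg, if_pos hsb, if_pos htb]
          constructor
          · intro h
            exact Or.inl (huinj s ⟨hs.1, hsb⟩ t ⟨ht.1, htb⟩ h)
          · rintro (rfl | ⟨rfl | rfl, rfl | rfl⟩ | ⟨rfl | rfl, rfl | rfl⟩) <;>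
              first | rfl | linarith
        · push_neg at htb
          by_cases hta : t ≤ a
          · -- (1,2)
            simp only [hg, if_pos hsb, if_neg (not_le.2 htb), if_pos hta]
            constructor
            · intro h
              have hm1 : u s ∈ circleAt (0,0) := ept_mem _
              have hm2 : spc (-1) 1 b a t ∈ segAt (-1) 1 :=
                spc_mem (by norm_num) hba ⟨htb.le, hta⟩
              rcases th_I (h ▸ hm1 : spc (-1) 1 b a t ∈ circleAt (0,0)) hm2 with hpt | hpt
              · have hs' := hparu1 s ⟨hs.1, hsb⟩ (by rw [h, hpt])
                have ht' : t = a := by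
                  have heq : spc (-1) 1 b a t = spc (-1) 1 b a a := by rw [hpt, hvsa]
                  exact spc_rel (by norm_num : (-1:ℝ) ≠ 1) hbane heq
                exact Or.inr (Or.inl ⟨Or.inl hs', Or.inr ht'⟩)
              · have ht' : t = b := by
                  have heq : spc (-1) 1 b a t = spc (-1) 1 b a b := by rw [hpt, hvsb]
                  exact spc_rel (by norm_num : (-1:ℝ) ≠ 1) hbane heq
                exact absurd ht' (ne_of_gt htb)
            · rintro (rfl | ⟨rfl | rfl, rfl | rfl⟩ | ⟨rfl | rfl, rfl | rfl⟩) <;>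
                first | (rw [hu0, hvsa]) | linarith
          · -- (1,3)
            push_neg at hta
            simp only [hg, if_pos hsb, if_neg (not_le.2 htb), if_neg (not_le.2 hta)]
            constructor
            · intro h
              rcases huw s ⟨hs.1, hsb⟩ t ⟨hta.le, ht.2⟩ h with ⟨rfl, rfl⟩ | ⟨rfl, rfl⟩
              · exact Or.inr (Or.inr ⟨Or.inl rfl, Or.inr rfl⟩)
              · linarith
            · rintro (rfl | ⟨rfl | rfl, rfl | rfl⟩ | ⟨rfl | rfl, rfl | rfl⟩) <;>
                first | (rw [hub, hw1]) | linarith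
      · push_neg at hsb
        have htb : ¬ t ≤ b := by push_neg; linarith
        by_cases hsa : s ≤ a
        · by_cases hta : t ≤ a
          · -- (2,2)
            simp only [hg, if_neg (not_le.2 hsb), if_pos hsa, if_neg htb, if_pos hta]
            constructor
            · intro h
              exact Or.inl (spc_rel (by norm_num : (-1:ℝ) ≠ 1) hbane h)
            · rintro (rfl | ⟨rfl | rfl, rfl | rfl⟩ | ⟨rfl | rfl, rfl | rfl⟩) <;>
                first | rfl | linarith
          · -- (2,3)
            push_neg at hta
            simp only [hg, if_neg (not_le.2 hsb), if_pos hsa, if_neg htb, if_neg (not_le.2 hta)]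
            constructor
            · intro h
              exfalso
              have hm1 : spc (-1) 1 b a s ∈ segAt (-1) 1 :=
                spc_mem (by norm_num) hba ⟨hsb.le, hsa⟩
              have hm2 : w t ∈ circleAt (0,0) := ept_mem _
              rcases th_I (show spc (-1) 1 b a s ∈ circleAt (0,0) by rw [h]; exact hm2) hm1 with
                hpt | hpt
              · have := hparw1 t ⟨hta.le, ht.2⟩ (by rw [← h, hpt])
                linarith
              · have : s = b := by
                  have heq : spc (-1) 1 b a s = spc (-1) 1 b a b := by rw [hpt, hvsb]
                  exact spc_rel (by norm_num : (-1:ℝ) ≠ 1) hbane heq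
                linarith
            · rintro (rfl | ⟨rfl | rfl, rfl | rfl⟩ | ⟨rfl | rfl, rfl | rfl⟩) <;> linarith
        · -- (3,3)
          push_neg at hsa
          have hta : ¬ t ≤ a := by push_neg; linarith
          simp only [hg, if_neg (not_le.2 hsb), if_neg (not_le.2 hsa), if_neg htb, if_neg hta]
          constructor
          · intro h
            exact Or.inl (hwinj s ⟨hsa.le, hs.2⟩ t ⟨(not_le.1 hta).le, ht.2⟩ h)
          · rintro (rfl | ⟨rfl | rfl, rfl | rfl⟩ | ⟨rfl | rfl, rfl | rfl⟩) <;>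
              first | rfl | linarith
    intro s hs t ht
    rcases le_total s t with h | h
    · exact key s hs t ht h
    · rw [show (g s = g t) ↔ (g t = g s) from eq_comm, key t ht s hs h]
      exact GRel_symm''

lemma UI.feq {T : Type} (F : UI → T) {x y : UI} (h : (x : ℝ) = (y : ℝ)) : F x = F y :=
  congrArg F (Subtype.ext h)

/-- Every stringable tangle is homeomorphic to one of the six basic stringable
tangles: the unit interval, the circle, the lollipop, the figure 8, the handcuffs,
or the theta. -/
theorem stmt_1 (T : Type) [TopologicalSpace T] (hT : IsTangle T) (hS : Stringable T) :
    Nonempty (T ≃ₜ ↥unitSegT) ∨ Nonempty (T ≃ₜ ↥circleT) ∨ Nonempty (T ≃ₜ ↥lollipopT) ∨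
    Nonempty (T ≃ₜ ↥figure8T) ∨ Nonempty (T ≃ₜ ↥handcuffsT) ∨ Nonempty (T ≃ₜ ↥thetaT) := by
  obtain ⟨S, _, ⟨e⟩⟩ := hT
  haveI : T2Space T := e.isEmbedding.t2Space
  obtain ⟨F, hFc, hFs, hinj⟩ := hS
  by_cases hA : ∃ x : UI, (x : ℝ) ∈ Ioo (0:ℝ) 1 ∧ F x = F pt0
  · obtain ⟨xa, hxa, hFa⟩ := hA
    by_cases hB : ∃ x : UI, (x : ℝ) ∈ Ioo (0:ℝ) 1 ∧ F x = F pt1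
    · obtain ⟨xb, hxb, hFb⟩ := hB
      by_cases hab : xa = xb
      · -- figure eight
        subst hab
        have h01 : F pt1 = F pt0 := hFb.symm.trans hFa
        have hA' : ∀ x : UI, F x = F pt0 ↔ (x : ℝ) ∈ ({0, ↑xa, 1} : Set ℝ) := by
          intro x
          simp only [mem_insert_iff, mem_singleton_iff]
          constructor
          · intro h
            rcases UI.tri x with rfl | rfl | hx
            · exact Or.inl rfl
            · exact Or.inr (Or.inr rfl)
            · exact Or.inr (Or.inl (congrArg _ (hinj hx hxa (h.trans hFa.symm))))
          · rintro (h | h | h)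
            · exact UI.feq F h
            · exact (UI.feq F h).trans hFa
            · exact (UI.feq F h).trans h01
        have hB' : ∀ x : UI, F x = F pt1 ↔ (x : ℝ) ∈ ({0, ↑xa, 1} : Set ℝ) := by
          intro x
          simp only [mem_insert_iff, mem_singleton_iff]
          constructor
          · intro h
            rcases UI.tri x with rfl | rfl | hx
            · exact Or.inl rfl
            · exact Or.inr (Or.inr rfl)
            · exact Or.inr (Or.inl (congrArg _ (hinj hx hxb (h.trans hFb.symm))))
          · rintro (h | h | h)
            · exact (UI.feq F h).trans h01.symm
            · exact (UI.feq F h).trans hFb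
            · exact UI.feq F h
        exact Or.inr (Or.inr (Or.inr (Or.inl
          (pkg_homeo hFc hFs (pkg_fig8 hxa) (F_rel F hinj hA' hB')))))
      · -- two distinct interior glue points: handcuffs or theta
        have habR : (xa : ℝ) ≠ (xb : ℝ) := fun h => hab (Subtype.ext h)
        have h01 : F pt0 ≠ F pt1 := by
          intro h
          exact hab (hinj hxa hxb (hFa.trans (h.trans hFb.symm)))
        have hA' : ∀ x : UI, F x = F pt0 ↔ (x : ℝ) ∈ ({0, ↑xa} : Set ℝ) := by
          intro x
          simp only [mem_insert_iff, mem_singleton_iff]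
          constructor
          · intro h
            rcases UI.tri x with rfl | rfl | hx
            · exact Or.inl rfl
            · exact absurd h.symm h01
            · exact Or.inr (congrArg _ (hinj hx hxa (h.trans hFa.symm)))
          · rintro (h | h)
            · exact UI.feq F h
            · exact (UI.feq F h).trans hFa
        have hB' : ∀ x : UI, F x = F pt1 ↔ (x : ℝ) ∈ ({↑xb, 1} : Set ℝ) := by
          intro x
          simp only [mem_insert_iff, mem_singleton_iff]
          constructor
          · intro h
            rcases UI.tri x with rfl | rfl | hx
            · exact absurd h h01
            · exact Or.inr rfl
            · exact Or.inl (congrArg _ (hinj hx hxb (h.trans hFb.symm)))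
          · rintro (h | h)
            · exact (UI.feq F h).trans hFb
            · exact UI.feq F h
        rcases lt_or_gt_of_ne habR with hlt | hgt
        · -- handcuffs
          exact Or.inr (Or.inr (Or.inr (Or.inr (Or.inl
            (pkg_homeo hFc hFs (pkg_handcuffs hxa.1 hlt hxb.2)
              (F_rel F hinj hA' hB'))))))
        · -- theta
          exact Or.inr (Or.inr (Or.inr (Or.inr (Or.inr
            (pkg_homeo hFc hFs (pkg_theta hxb.1 hgt hxa.2)
              (F_rel F hinj hA' hB'))))))
    · -- lollipop (loop at the start)
      have h01 : F pt0 ≠ F pt1 := by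
        intro h
        exact hB ⟨xa, hxa, hFa.trans h⟩
      have hA' : ∀ x : UI, F x = F pt0 ↔ (x : ℝ) ∈ ({0, ↑xa} : Set ℝ) := by
        intro x
        simp only [mem_insert_iff, mem_singleton_iff]
        constructor
        · intro h
          rcases UI.tri x with rfl | rfl | hx
          · exact Or.inl rfl
          · exact absurd h.symm h01
          · exact Or.inr (congrArg _ (hinj hx hxa (h.trans hFa.symm)))
        · rintro (h | h)
          · exact UI.feq F h
          · exact (UI.feq F h).trans hFa
      have hB' : ∀ x : UI, F x = F pt1 ↔ (x : ℝ) ∈ ({1} : Set ℝ) := by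
        intro x
        simp only [mem_singleton_iff]
        constructor
        · intro h
          rcases UI.tri x with rfl | rfl | hx
          · exact absurd h h01
          · exact rfl
          · exact absurd ⟨x, hx, h⟩ hB
        · intro h
          exact UI.feq F h
      exact Or.inr (Or.inr (Or.inl
        (pkg_homeo hFc hFs (pkg_lollipop hxa) (F_rel F hinj hA' hB'))))
  · by_cases hB : ∃ x : UI, (x : ℝ) ∈ Ioo (0:ℝ) 1 ∧ F x = F pt1
    · -- lollipop (loop at the end) : use reversed package
      obtain ⟨xb, hxb, hFb⟩ := hB
      have h01 : F pt0 ≠ F pt1 := by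
        intro h
        exact hA ⟨xb, hxb, hFb.trans h.symm⟩
      have hA' : ∀ x : UI, F x = F pt0 ↔ (x : ℝ) ∈ ({0} : Set ℝ) := by
        intro x
        simp only [mem_singleton_iff]
        constructor
        · intro h
          rcases UI.tri x with rfl | rfl | hx
          · exact rfl
          · exact absurd h.symm h01
          · exact absurd ⟨x, hx, h⟩ hA
        · intro h
          exact UI.feq F h
      have hB' : ∀ x : UI, F x = F pt1 ↔ (x : ℝ) ∈ ({↑xb, 1} : Set ℝ) := by
        intro x
        simp only [mem_insert_iff, mem_singleton_iff]
        constructor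
        · intro h
          rcases UI.tri x with rfl | rfl | hx
          · exact absurd h h01
          · exact Or.inr rfl
          · exact Or.inl (congrArg _ (hinj hx hxb (h.trans hFb.symm)))
        · rintro (h | h)
          · exact (UI.feq F h).trans hFb
          · exact UI.feq F h
      have hpkg : ModelPkg lollipopT ({0} : Set ℝ) ({↑xb, 1} : Set ℝ) := by
        have h1 : (1 - (xb:ℝ)) ∈ Ioo (0:ℝ) 1 := ⟨by linarith [hxb.2], by linarith [hxb.1]⟩
        refine (ModelPkg.rev (pkg_lollipop h1) ?_ ?_).swap
        · intro s
          simp only [mem_insert_iff, mem_singleton_iff]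
          constructor
          · rintro (rfl | rfl)
            · right; ring
            · left; ring
          · rintro (h | h)
            · right; linarith
            · left; linarith
        · intro s
          simp only [mem_singleton_iff]
          constructor
          · rintro rfl; ring
          · intro h; linarith
      exact Or.inr (Or.inr (Or.inl
        (pkg_homeo hFc hFs hpkg (F_rel F hinj hA' hB'))))
    · by_cases h01 : F pt0 = F pt1
      · -- circle
        have hA' : ∀ x : UI, F x = F pt0 ↔ (x : ℝ) ∈ ({0, 1} : Set ℝ) := by
          intro x
          simp only [mem_insert_iff, mem_singleton_iff]
          constructor
          · intro h
            rcases UI.tri x with rfl | rfl | hx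
            · exact Or.inl rfl
            · exact Or.inr rfl
            · exact absurd ⟨x, hx, h⟩ hA
          · rintro (h | h)
            · exact UI.feq F h
            · exact (UI.feq F h).trans h01.symm
        have hB' : ∀ x : UI, F x = F pt1 ↔ (x : ℝ) ∈ ({0, 1} : Set ℝ) := by
          intro x
          simp only [mem_insert_iff, mem_singleton_iff]
          constructor
          · intro h
            rcases UI.tri x with rfl | rfl | hx
            · exact Or.inl rfl
            · exact Or.inr rfl
            · exact absurd ⟨x, hx, h.trans h01.symm⟩ hA
          · rintro (h | h)
            · exact (UI.feq F h).trans h01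
            · exact UI.feq F h
        exact Or.inr (Or.inl (pkg_homeo hFc hFs pkg_circle (F_rel F hinj hA' hB')))
      · -- unit segment
        have hA' : ∀ x : UI, F x = F pt0 ↔ (x : ℝ) ∈ ({0} : Set ℝ) := by
          intro x
          simp only [mem_singleton_iff]
          constructor
          · intro h
            rcases UI.tri x with rfl | rfl | hx
            · exact rfl
            · exact absurd h.symm h01
            · exact absurd ⟨x, hx, h⟩ hA
          · intro h
            exact UI.feq F h
        have hB' : ∀ x : UI, F x = F pt1 ↔ (x : ℝ) ∈ ({1} : Set ℝ) := by
          intro x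
          simp only [mem_singleton_iff]
          constructor
          · intro h
            rcases UI.tri x with rfl | rfl | hx
            · exact absurd h h01
            · exact rfl
            · exact absurd ⟨x, hx, h⟩ hB
          · intro h
            exact UI.feq F h
        exact Or.inl (pkg_homeo hFc hFs pkg_seg (F_rel F hinj hA' hB'))
end
end

section
/- Let T be a Hausdorff topological space, t ≥ 0 and k ≥ 2 integers, and X ⊆ T a set with exactly t elements such that T ∖ X has exactly t + k connected components D₁,…,D_{t+k}. Let n ≥ t + 1 be an integer and let μ be a Borel measure on T with μ(X) = 0, μ(D_j) = (t+1)/(t+k−1) for 1 ≤ j ≤ t+k−1, and μ(D_{t+k}) = n − t. Then no partition of T into n connected Borel subsets T₁,…,Tₙ is envy-free for n agents sharing the common valuation μ: in every such partition there exist indices i, j with μ(T_i) < μ(T_j). -/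
open MeasureTheory

/-- Gap ≥ 2 Lemma (continuous version). Let `T` be a Hausdorff space, `X` a set of
exactly `t` points whose removal leaves exactly `t + k` connected components
`D 0, …, D (t+k-1)` (with `k ≥ 2`), and let `μ` be a Borel measure giving `X` measure
zero, each of the first `t + k - 1` components measure `(t+1)/(t+k-1)`, and the last
component measure `n - t`, where `n ≥ t + 1`. Then no partition of `T` into `n`
connected Borel pieces is envy-free for `n` agents sharing the common valuation `μ`. -/
theorem stmt_4 (T : Type) [TopologicalSpace T] [T2Space T]
    [MeasurableSpace T] [BorelSpace T]
    (t k n : ℕ) (hk : 2 ≤ k) (hn : t + 1 ≤ n)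
    (X : Set T) (hXfin : X.Finite) (hXcard : X.ncard = t)
    (D : Fin (t + k) → Set T)
    (hDcomp : ∀ j, ∃ x ∈ Xᶜ, D j = connectedComponentIn Xᶜ x)
    (hDdisj : Pairwise fun i j => Disjoint (D i) (D j))
    (hDcover : ∀ x ∈ Xᶜ, ∃ j, x ∈ D j)
    (μ : Measure T)
    (hμX : μ X = 0)
    (hμD : ∀ j : Fin (t + k), (j : ℕ) < t + k - 1 →
      μ (D j) = ((t + 1 : ℕ) : ENNReal) / ((t + k - 1 : ℕ) : ENNReal))
    (hμlast : ∀ j : Fin (t + k), (j : ℕ) = t + k - 1 → μ (D j) = ((n - t : ℕ) : ENNReal)) :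
    ∀ A : Fin n → Set T,
      (∀ i, IsPreconnected (A i)) →
      (∀ i, MeasurableSet (A i)) →
      (Pairwise fun i j => Disjoint (A i) (A j)) →
      (⋃ i, A i) = Set.univ →
      ∃ i j, μ (A i) < μ (A j) := by
  intro A hconn hmeas hdisj hcover
  by_contra hcon
  push_neg at hcon
  classical
  have hXcl : IsClosed X := hXfin.isClosed
  have hXm : MeasurableSet X := hXcl.measurableSet
  have hDsub : ∀ j, D j ⊆ Xᶜ := by
    intro j
    obtain ⟨x, hx, hD⟩ := hDcomp j
    rw [hD]; exact connectedComponentIn_subset _ _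
  have hDeq : ∀ j, ∀ x ∈ D j, D j = connectedComponentIn Xᶜ x := by
    intro j x hx
    obtain ⟨y, hy, hD⟩ := hDcomp j
    rw [hD] at hx ⊢
    exact connectedComponentIn_eq hx
  have hDm : ∀ j, MeasurableSet (D j) := by
    intro j
    obtain ⟨x, hx, hD⟩ := hDcomp j
    rw [hD]
    have hpc : IsPreconnected (closure (connectedComponentIn Xᶜ x) ∩ Xᶜ) :=
      isPreconnected_connectedComponentIn.subset_closure
        (Set.subset_inter subset_closure (connectedComponentIn_subset _ _))
        Set.inter_subset_left
    have h1 : connectedComponentIn Xᶜ x = closure (connectedComponentIn Xᶜ x) ∩ Xᶜ :=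
      Set.Subset.antisymm
        (Set.subset_inter subset_closure (connectedComponentIn_subset _ _))
        (hpc.subset_connectedComponentIn
          ⟨subset_closure (mem_connectedComponentIn hx), hx⟩ Set.inter_subset_right)
    rw [h1]
    exact isClosed_closure.measurableSet.inter hXcl.isOpen_compl.measurableSet
  have hDunion : (⋃ j, D j) = Xᶜ := by
    apply Set.Subset.antisymm (Set.iUnion_subset hDsub)
    intro x hx
    obtain ⟨j, hj⟩ := hDcover x hx
    exact Set.mem_iUnion.2 ⟨j, hj⟩
  set L : Fin (t + k) := ⟨t + k - 1, by omega⟩ with hL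
  -- total measure is n + 1
  have hsumD : μ Set.univ = ((n + 1 : ℕ) : ENNReal) := by
    have h1 : μ Set.univ = μ X + μ Xᶜ := (measure_add_measure_compl hXm).symm
    have h2 : μ Xᶜ = ∑ j : Fin (t + k), μ (D j) := by
      rw [← hDunion, measure_iUnion hDdisj hDm, tsum_fintype]
    have h3 : ∑ j : Fin (t + k), μ (D j)
        = ∑ j ∈ Finset.univ.erase L, μ (D j) + μ (D L) :=
      (Finset.sum_erase_add _ _ (Finset.mem_univ L)).symm
    have h4 : ∀ j ∈ Finset.univ.erase L, μ (D j)
        = ((t + 1 : ℕ) : ENNReal) / ((t + k - 1 : ℕ) : ENNReal) := by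
      intro j hj
      apply hμD
      have hjL : j ≠ L := (Finset.mem_erase.1 hj).1
      have hne : (j : ℕ) ≠ t + k - 1 := by
        intro hcc
        exact hjL (Fin.ext (by simp [hL, hcc]))
      have := j.isLt
      omega
    have h5 : μ (D L) = ((n - t : ℕ) : ENNReal) := hμlast L rfl
    have hcard : (Finset.univ.erase L).card = t + k - 1 := by
      rw [Finset.card_erase_of_mem (Finset.mem_univ L), Finset.card_univ, Fintype.card_fin]
    have h6 : ∑ j ∈ Finset.univ.erase L, μ (D j)
        = ((t + k - 1 : ℕ) : ENNReal)
          * (((t + 1 : ℕ) : ENNReal) / ((t + k - 1 : ℕ) : ENNReal)) := by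
      rw [Finset.sum_congr rfl h4, Finset.sum_const, hcard, nsmul_eq_mul]
    have hne0 : ((t + k - 1 : ℕ) : ENNReal) ≠ 0 := by
      simp only [ne_eq, Nat.cast_eq_zero]; omega
    have h7 : ((t + k - 1 : ℕ) : ENNReal)
          * (((t + 1 : ℕ) : ENNReal) / ((t + k - 1 : ℕ) : ENNReal))
        = ((t + 1 : ℕ) : ENNReal) :=
      ENNReal.mul_div_cancel hne0 (ENNReal.natCast_ne_top _)
    rw [h1, hμX, zero_add, h2, h3, h6, h7, h5, ← Nat.cast_add]
    congr 1
    omega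
  have hnpos : 0 < n := by omega
  set i0 : Fin n := ⟨0, hnpos⟩ with hi0
  set c : ENNReal := μ (A i0) with hc
  have hceq : ∀ i, μ (A i) = c := fun i => le_antisymm (hcon i0 i) (hcon i i0)
  have hsumA : (n : ENNReal) * c = ((n + 1 : ℕ) : ENNReal) := by
    have h1 : μ Set.univ = ∑ i : Fin n, μ (A i) := by
      rw [← hcover, measure_iUnion hdisj hmeas, tsum_fintype]
    have h2 : ∑ i : Fin n, μ (A i) = (n : ENNReal) * c := by
      rw [Finset.sum_congr rfl (fun i _ => hceq i), Finset.sum_const, Finset.card_univ,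
        Fintype.card_fin, nsmul_eq_mul]
    rw [← h2, ← h1, hsumD]
  have hc1 : 1 < c := by
    by_contra hle
    push_neg at hle
    have h1 : (n : ENNReal) * c ≤ (n : ENNReal) * 1 := mul_le_mul_right hle _
    rw [hsumA, mul_one] at h1
    have h2 : (n + 1 : ℕ) ≤ n := by exact_mod_cast h1
    omega
  -- every piece disjoint from X is contained in D L
  have hsubL : ∀ i, Disjoint (A i) X → A i ⊆ D L := by
    intro i hdis
    have hne : (A i).Nonempty := by
      rw [Set.nonempty_iff_ne_empty]
      intro hc'
      have h0 := hceq i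
      rw [hc', measure_empty] at h0
      rw [← h0] at hc1
      exact absurd hc1 (by simp)
    obtain ⟨x, hx⟩ := hne
    have hsubXc : A i ⊆ Xᶜ := Set.subset_compl_iff_disjoint_right.2 hdis
    have hAsub : A i ⊆ connectedComponentIn Xᶜ x :=
      (hconn i).subset_connectedComponentIn hx hsubXc
    obtain ⟨j, hj⟩ := hDcover x (hsubXc hx)
    have hAD : A i ⊆ D j := (hDeq j x hj) ▸ hAsub
    by_cases hjL : (j : ℕ) = t + k - 1
    · have hq : j = L := Fin.ext (by simp [hL, hjL])
      rwa [hq] at hAD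
    · exfalso
      have hjlt := j.isLt
      have hlt : (j : ℕ) < t + k - 1 := by omega
      have hcle : c ≤ ((t + 1 : ℕ) : ENNReal) / ((t + k - 1 : ℕ) : ENNReal) := by
        rw [← hceq i, ← hμD j hlt]
        exact measure_mono hAD
      have hle1 : ((t + 1 : ℕ) : ENNReal) / ((t + k - 1 : ℕ) : ENNReal) ≤ 1 := by
        apply ENNReal.div_le_of_le_mul
        rw [one_mul]
        exact_mod_cast (by omega : t + 1 ≤ t + k - 1)
      exact absurd (lt_of_lt_of_le hc1 (hcle.trans hle1)) (lt_irrefl 1)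
  -- at most t pieces meet X
  set S : Finset (Fin n) := Finset.univ.filter (fun i => Disjoint (A i) X) with hS
  set Sc : Finset (Fin n) := Finset.univ.filter (fun i => ¬ Disjoint (A i) X) with hSc
  have hcardSc : Sc.card ≤ t := by
    rcases Finset.eq_empty_or_nonempty Sc with hE | hE
    · simp [hE]
    · obtain ⟨i₁, hi₁⟩ := hE
      obtain ⟨x₁, -, -⟩ := Set.not_disjoint_iff.1 (Finset.mem_filter.1 hi₁).2
      haveI : Inhabited T := ⟨x₁⟩
      set f : Fin n → T := fun i =>
        if h : ∃ x ∈ A i, x ∈ X then h.choose else default with hf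
      have hmem : ∀ i ∈ Sc, f i ∈ A i ∧ f i ∈ X := by
        intro i hi
        have hh : ∃ x ∈ A i, x ∈ X := Set.not_disjoint_iff.1 (Finset.mem_filter.1 hi).2
        simp only [hf, dif_pos hh]
        exact hh.choose_spec
      have h1 : Sc.card ≤ hXfin.toFinset.card := by
        apply Finset.card_le_card_of_injOn f
        · intro i hi
          exact hXfin.mem_toFinset.2 (hmem i hi).2
        · intro i hi j hj hfij
          by_contra hij
          exact Set.disjoint_left.1 (hdisj hij) (hmem i (by exact_mod_cast hi)).1
            (hfij ▸ (hmem j (by exact_mod_cast hj)).1)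
      rwa [← Set.ncard_eq_toFinset_card X hXfin, hXcard] at h1
  have hcardS : n - t ≤ S.card := by
    have key : S.card + Sc.card = n := by
      have h := Finset.card_filter_add_card_filter_not
        (s := (Finset.univ : Finset (Fin n))) (fun i => Disjoint (A i) X)
      rw [Finset.card_univ, Fintype.card_fin] at h
      rw [hS, hSc]
      convert h using 3
    omega
  -- total measure of pieces inside D L exceeds its measure: contradiction
  have hUsub : (⋃ i ∈ S, A i) ⊆ D L :=
    Set.iUnion₂_subset fun i hi => hsubL i (Finset.mem_filter.1 hi).2
  have hmeasU : μ (⋃ i ∈ S, A i) = ∑ i ∈ S, μ (A i) :=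
    measure_biUnion_finset (fun i _ j _ hij => hdisj hij) (fun i _ => hmeas i)
  have hsum : ∑ i ∈ S, μ (A i) = (S.card : ENNReal) * c := by
    rw [Finset.sum_congr rfl (fun i _ => hceq i), Finset.sum_const, nsmul_eq_mul]
  have hle : (S.card : ENNReal) * c ≤ ((n - t : ℕ) : ENNReal) := by
    rw [← hsum, ← hmeasU, ← hμlast L rfl]
    exact measure_mono hUsub
  have h2 : ((n - t : ℕ) : ENNReal) * c ≤ (S.card : ENNReal) * c :=
    mul_le_mul_left (by exact_mod_cast hcardS) c
  have hne0' : ((n - t : ℕ) : ENNReal) ≠ 0 := by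
    simp only [ne_eq, Nat.cast_eq_zero]; omega
  have hlt : ((n - t : ℕ) : ENNReal) * 1 < ((n - t : ℕ) : ENNReal) * c :=
    (ENNReal.mul_lt_mul_iff_right hne0' (ENNReal.natCast_ne_top _)).2 hc1
  rw [mul_one] at hlt
  exact absurd (lt_of_lt_of_le hlt (h2.trans hle)) (lt_irrefl _)
end

section
/- Let G = (V,E) be a finite simple graph, k ≥ 1 and n, t integers with n ≥ t + 1, and X ⊆ V with |X| = t. Suppose the graph G − X (the subgraph induced on V ∖ X) has at least t + 2 connected components and every connected component of G − X has more than k·n·(n − t) vertices. Then there is a weight function w : V → [0,∞) such that, when all n agents use the common additive valuation ν(S) = Σ_{v∈S} w(v), every contiguous allocation A₁,…,Aₙ fails to be envy-free up to k goods: there exist agents i, j such that ν(A_i) < ν(A_j ∖ S) for every S ⊆ A_j with |S| ≤ k. In particular, no contiguous allocation is EFk_outer. -/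
/-- `C` is a connected component of the subgraph of `G` induced on `s`:
a maximal subset of `s` inducing a connected subgraph. -/
def IsCompOf {V : Type} (G : SimpleGraph V) (s C : Set V) : Prop :=
  C.Nonempty ∧ C ⊆ s ∧ (G.induce C).Connected ∧
  ∀ D : Set V, C ⊆ D → D ⊆ s → (G.induce D).Connected → D = C

lemma IsCompOf.disjoint {V : Type} [Fintype V] {G : SimpleGraph V} {s C D : Set V}
    (hC : IsCompOf G s C) (hD : IsCompOf G s D) (hne : C ≠ D) : Disjoint C D := by
  rw [Set.disjoint_left]
  intro x hxC hxD
  have hu : (G.induce (C ∪ D)).Connected :=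
    SimpleGraph.induce_union_connected hC.2.2.1.preconnected hD.2.2.1.preconnected ⟨x, hxC, hxD⟩
  have h1 : C ∪ D = C := hC.2.2.2 _ Set.subset_union_left
    (Set.union_subset hC.2.1 hD.2.1) hu
  have h2 : C ∪ D = D := hD.2.2.2 _ Set.subset_union_right
    (Set.union_subset hC.2.1 hD.2.1) hu
  exact hne (h1 ▸ h2)

lemma exists_comp_of_connected {V : Type} [Fintype V] {G : SimpleGraph V} {s B : Set V}
    (hB : B.Nonempty) (hBs : B ⊆ s) (hconn : (G.induce B).Connected) :
    ∃ C : Set V, IsCompOf G s C ∧ B ⊆ C := by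
  classical
  set 𝒟 : Set (Set V) := {D | B ⊆ D ∧ D ⊆ s ∧ (G.induce D).Connected} with h𝒟
  have hfin : 𝒟.Finite := Set.toFinite _
  obtain ⟨C, hC𝒟, hCmax⟩ := Set.Finite.exists_maximalFor Set.ncard 𝒟 hfin
    ⟨B, Set.Subset.rfl, hBs, hconn⟩
  refine ⟨C, ⟨hB.mono hC𝒟.1, hC𝒟.2.1, hC𝒟.2.2, ?_⟩, hC𝒟.1⟩
  intro D hCD hDs hDconn
  have hD𝒟 : D ∈ 𝒟 := ⟨hC𝒟.1.trans hCD, hDs, hDconn⟩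
  have hle : C.ncard ≤ D.ncard := Set.ncard_le_ncard hCD (Set.toFinite _)
  have := hCmax (j := D) hD𝒟 hle
  exact (Set.eq_of_subset_of_ncard_le hCD this (Set.toFinite _)).symm

/-- Gap ≥ 2 Lemma (discrete version). If removing a `t`-element set `X` of vertices
from `G` leaves at least `t + 2` connected components, each with more than
`k·n·(n − t)` vertices, then for `n ≥ t + 1` agents there is a common additive
valuation for which every contiguous allocation fails to be envy-free up to `k`
goods (hence fails EFk-outer). -/
theorem stmt_5 {V : Type} [Fintype V] [DecidableEq V] (G : SimpleGraph V)
    (k n t : ℕ) (hk : 1 ≤ k) (hn : t + 1 ≤ n)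
    (X : Finset V) (hX : X.card = t)
    (hcomps : t + 2 ≤ {C : Set V | IsCompOf G ((↑X : Set V)ᶜ) C}.ncard)
    (hbig : ∀ C : Set V, IsCompOf G ((↑X : Set V)ᶜ) C → k * n * (n - t) < C.ncard) :
    ∃ w : V → ℝ, (∀ v, 0 ≤ w v) ∧
      ∀ A : Fin n → Finset V,
        (Pairwise fun i j => Disjoint (A i) (A j)) →
        Finset.univ.biUnion A = Finset.univ →
        (∀ i, (G.induce ((A i : Finset V) : Set V)).Preconnected) →
        ∃ i j, ∀ S : Finset V, S ⊆ A j → S.card ≤ k →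
          ∑ x ∈ A i, w x < ∑ x ∈ A j \ S, w x := by
  classical
  set s : Set V := (↑X : Set V)ᶜ with hs
  have htn : t ≤ n := le_trans (Nat.le_succ t) hn
  have hnt1 : 1 ≤ n - t := by omega
  have hn0 : 0 < n := by omega
  obtain ⟨𝒞, h𝒞sub, h𝒞card⟩ := Set.exists_subset_card_eq hcomps
  have h𝒞fin : 𝒞.Finite := Set.toFinite _
  set F : Finset (Set V) := h𝒞fin.toFinset with hF
  have hmemF : ∀ {C : Set V}, C ∈ F ↔ C ∈ 𝒞 := fun {C} => Set.Finite.mem_toFinset _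
  have hFcard : F.card = t + 2 := by
    rw [← Set.ncard_eq_toFinset_card 𝒞 h𝒞fin] ; exact h𝒞card
  have hcomp : ∀ C ∈ F, IsCompOf G s C := fun C hC => h𝒞sub (hmemF.mp hC)
  obtain ⟨C₁, hC₁F⟩ : F.Nonempty := Finset.card_pos.mp (by omega)
  -- the weights
  set val : Set V → ℝ := fun C => if C = C₁ then ((n * (n - t) : ℕ) : ℝ) else (n : ℝ)
    with hval
  have hval_nonneg : ∀ C, 0 ≤ val C := by
    intro C; simp only [hval]; split <;> positivity
  have hval_le : ∀ C, val C ≤ ((n * (n - t) : ℕ) : ℝ) := by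
    intro C; simp only [hval]; split
    · exact le_refl _
    · exact_mod_cast Nat.cast_le.mpr (Nat.le_mul_of_pos_right n (by omega))
  set w : V → ℝ := fun v => ∑ C ∈ F, if v ∈ C then val C / (C.ncard : ℝ) else 0 with hw
  have hw0 : ∀ v, 0 ≤ w v := by
    intro v
    apply Finset.sum_nonneg
    intro C _
    split
    · exact div_nonneg (hval_nonneg C) (Nat.cast_nonneg _)
    · exact le_refl _
  -- pointwise value on a component
  have hwpt : ∀ C ∈ F, ∀ x ∈ C, w x = val C / (C.ncard : ℝ) := by
    intro C hCF x hxC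
    simp only [hw]
    rw [Finset.sum_eq_single_of_mem C hCF]
    · rw [if_pos hxC]
    · intro D hDF hDC
      rw [if_neg]
      intro hxD
      exact Set.disjoint_left.mp
        ((hcomp D hDF).disjoint (hcomp C hCF) hDC) hxD hxC
  -- cardinality bound on components
  have hcard_big : ∀ C ∈ F, (k * n * (n - t) : ℕ) + 1 ≤ C.ncard :=
    fun C hCF => hbig C (hcomp C hCF)
  -- uniform upper bound on weights
  set Wmax : ℝ := ((n * (n - t) : ℕ) : ℝ) / (((k * n * (n - t) : ℕ) : ℝ) + 1) with hWmax
  have hWmax0 : 0 ≤ Wmax := by positivity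
  have hwle : ∀ x, w x ≤ Wmax := by
    intro x
    by_cases hx : ∃ C ∈ F, x ∈ C
    · obtain ⟨C, hCF, hxC⟩ := hx
      rw [hwpt C hCF x hxC, hWmax]
      apply div_le_div₀ (Nat.cast_nonneg _) (hval_le C)
      · positivity
      · have := hcard_big C hCF
        have : ((k * n * (n - t) : ℕ) : ℝ) + 1 ≤ (C.ncard : ℝ) := by
          exact_mod_cast this
        linarith
    · push_neg at hx
      have hzero : w x = 0 := by
        simp only [hw]
        exact Finset.sum_eq_zero (fun C hCF => by rw [if_neg (hx C hCF)])
      rw [hzero]; exact hWmax0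
  have hkW : (k : ℝ) * Wmax < 1 := by
    rw [hWmax, mul_div_assoc']
    rw [div_lt_one (by positivity)]
    have hcast : ((k * n * (n - t) : ℕ) : ℝ) = (k : ℝ) * ((n * (n - t) : ℕ) : ℝ) := by
      push_cast; ring
    rw [hcast]
    linarith
  -- total weight of each chosen component
  have hCsum : ∀ C ∈ F, ∑ x ∈ C.toFinset, w x = val C := by
    intro C hCF
    have h1 : ∀ x ∈ C.toFinset, w x = val C / (C.ncard : ℝ) := by
      intro x hx; exact hwpt C hCF x (Set.mem_toFinset.mp hx)
    rw [Finset.sum_congr rfl h1, Finset.sum_const, nsmul_eq_mul,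
      ← Set.ncard_eq_toFinset_card']
    have hCne : C.ncard ≠ 0 := by
      have := (hcomp C hCF).1
      have := Set.ncard_pos (Set.toFinite C) |>.mpr this
      omega
    field_simp
  -- total weight of everything
  have htot : ∑ x ∈ Finset.univ, w x = ((n * (n - t) : ℕ) : ℝ) + ((t : ℝ) + 1) * n := by
    rw [hw]
    rw [Finset.sum_comm]
    have h1 : ∀ C ∈ F, ∑ x ∈ Finset.univ, (if x ∈ C then val C / (C.ncard : ℝ) else 0)
        = val C := by
      intro C hCF
      simp_rw [← Set.mem_toFinset (s := C)]
      rw [Finset.sum_ite_mem, Finset.univ_inter, Finset.sum_const, nsmul_eq_mul,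
        ← Set.ncard_eq_toFinset_card']
      have hCne : C.ncard ≠ 0 := by
        have := (hcomp C hCF).1
        have := Set.ncard_pos (Set.toFinite C) |>.mpr this
        omega
      field_simp
    rw [Finset.sum_congr rfl h1]
    rw [← Finset.add_sum_erase F val hC₁F]
    have h2 : ∀ C ∈ F.erase C₁, val C = (n : ℝ) := by
      intro C hC
      rw [hval]
      simp only
      rw [if_neg (Finset.ne_of_mem_erase hC)]
    rw [Finset.sum_congr rfl h2, Finset.sum_const, nsmul_eq_mul,
      Finset.card_erase_of_mem hC₁F, hFcard]
    simp only [hval, if_pos rfl]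
    push_cast
    ring
  -- the allocation argument
  refine ⟨w, hw0, ?_⟩
  intro A hdisj hcover hpre
  by_contra hcon
  push_neg at hcon
  set ν : Fin n → ℝ := fun i => ∑ x ∈ A i, w x with hν
  have hνsum : ∑ i, ν i = ∑ x ∈ Finset.univ, w x := by
    rw [← hcover, Finset.sum_biUnion (fun i _ j _ hij => hdisj hij)]
  haveI : Nonempty (Fin n) := ⟨⟨0, hn0⟩⟩
  -- some agent has value at least n+1 (the average)
  obtain ⟨j₀, -, hj₀⟩ : ∃ j ∈ Finset.univ, ((n : ℝ) + 1) ≤ ν j := by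
    apply Finset.exists_le_of_sum_le Finset.univ_nonempty
    rw [hνsum, htot, Finset.sum_const, nsmul_eq_mul, Finset.card_univ,
      Fintype.card_fin]
    have hc : ((n - t : ℕ) : ℝ) = (n : ℝ) - (t : ℝ) := Nat.cast_sub htn
    push_cast [hc]
    apply le_of_eq
    ring
  -- every small set has value < 1
  have hS1 : ∀ S : Finset V, S.card ≤ k → ∑ x ∈ S, w x < 1 := by
    intro S hSk
    calc ∑ x ∈ S, w x ≤ ∑ _x ∈ S, Wmax := Finset.sum_le_sum (fun x _ => hwle x)
    _ = S.card * Wmax := by rw [Finset.sum_const, nsmul_eq_mul]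
    _ ≤ (k : ℝ) * Wmax := by
        apply mul_le_mul_of_nonneg_right _ hWmax0
        exact_mod_cast hSk
    _ < 1 := hkW
  -- hence every agent has value more than n
  have hub : ∀ i, (n : ℝ) < ν i := by
    intro i
    obtain ⟨S, hSsub, hSk, hSle⟩ := hcon i j₀
    have h1 : ∑ x ∈ A j₀ \ S, w x = ν j₀ - ∑ x ∈ S, w x :=
      Finset.sum_sdiff_eq_sub hSsub
    have h2 := hS1 S hSk
    rw [h1] at hSle
    linarith
  -- dirty agents
  set Dty : Finset (Fin n) := Finset.univ.filter (fun i => (A i ∩ X).Nonempty)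
    with hDty
  have hVne : Nonempty V := ⟨(hcomp C₁ hC₁F).1.choose⟩
  have hDcard : Dty.card ≤ t := by
    rw [← hX]
    apply Finset.card_le_card_of_injOn
      (fun i => if h : (A i ∩ X).Nonempty then h.choose else Classical.arbitrary V)
    · intro i hi
      have hi' : (A i ∩ X).Nonempty := (Finset.mem_filter.mp hi).2
      simp only [dif_pos hi']
      exact (Finset.mem_inter.mp hi'.choose_spec).2
    · intro i hi j hj hij
      have hi' : (A i ∩ X).Nonempty := (Finset.mem_filter.mp (Finset.mem_coe.mp hi)).2
      have hj' : (A j ∩ X).Nonempty := (Finset.mem_filter.mp (Finset.mem_coe.mp hj)).2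
      simp only [dif_pos hi', dif_pos hj'] at hij
      by_contra hne
      exact Finset.disjoint_left.mp (hdisj hne)
        (Finset.mem_inter.mp hi'.choose_spec).1
        (hij ▸ (Finset.mem_inter.mp hj'.choose_spec).1)
  -- clean agents live inside C₁
  have hclean : ∀ i, i ∉ Dty → ((A i : Finset V) : Set V) ⊆ C₁ := by
    intro i hi
    have hidisj : ∀ x ∈ A i, x ∉ X := by
      intro x hxA hxX
      exact hi (Finset.mem_filter.mpr ⟨Finset.mem_univ i, ⟨x, Finset.mem_inter.mpr ⟨hxA, hxX⟩⟩⟩)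
    have hsub : ((A i : Finset V) : Set V) ⊆ s := by
      intro x hx
      rw [hs]
      exact fun hxX => hidisj x hx hxX
    have hAne : (A i).Nonempty := by
      rw [Finset.nonempty_iff_ne_empty]
      intro hAe
      have h0 : ν i = 0 := by simp [hν, hAe]
      have h1 := hub i
      rw [h0] at h1
      have h2 : (0:ℝ) ≤ (n:ℝ) := by positivity
      linarith
    obtain ⟨x₀, hx₀⟩ := hAne
    haveI : Nonempty ((A i : Finset V) : Set V) := ⟨⟨x₀, by simpa using hx₀⟩⟩
    have hconn : (G.induce ((A i : Finset V) : Set V)).Connected := ⟨hpre i⟩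
    obtain ⟨C, hCcomp, hsubC⟩ := exists_comp_of_connected
      ⟨x₀, by simpa using hx₀⟩ hsub hconn
    by_cases hCF : C ∈ F
    · by_cases hCC₁ : C = C₁
      · rwa [hCC₁] at hsubC
      · exfalso
        have hle : ν i ≤ ∑ x ∈ C.toFinset, w x := by
          rw [hν]
          apply Finset.sum_le_sum_of_subset_of_nonneg
          · intro x hx
            exact Set.mem_toFinset.mpr (hsubC (by simpa using hx))
          · intro x _ _; exact hw0 x
        rw [hCsum C hCF] at hle
        have hvC : val C = (n : ℝ) := by simp only [hval]; rw [if_neg hCC₁]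
        rw [hvC] at hle
        exact absurd hle (not_le.mpr (hub i))
    · exfalso
      have hzero : ν i = 0 := by
        rw [hν]
        apply Finset.sum_eq_zero
        intro x hx
        simp only [hw]
        apply Finset.sum_eq_zero
        intro D hDF
        rw [if_neg]
        intro hxD
        have hxC : x ∈ C := hsubC (by simpa using hx)
        by_cases hDC : D = C
        · exact hCF (hDC ▸ hDF)
        · exact Set.disjoint_left.mp ((hcomp D hDF).disjoint
            (by { rw [hs] at hCcomp; exact hCcomp }) hDC) hxD hxC
      have := hub i
      rw [hzero] at this
      have h0n : (0:ℝ) ≤ (n:ℝ) := by positivity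
      linarith
  -- final counting contradiction
  set cleans : Finset (Fin n) := Finset.univ \ Dty with hcleans
  have hclcard : n - t ≤ cleans.card := by
    rw [hcleans, Finset.card_sdiff_of_subset (Finset.subset_univ _), Finset.card_univ,
      Fintype.card_fin]
    omega
  have hclne : cleans.Nonempty := Finset.card_pos.mp (by omega)
  have hup : ∑ i ∈ cleans, ν i ≤ ((n * (n - t) : ℕ) : ℝ) := by
    have h1 : ∑ i ∈ cleans, ν i = ∑ x ∈ cleans.biUnion A, w x := by
      rw [Finset.sum_biUnion (fun i _ j _ hij => hdisj hij)]
    rw [h1]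
    have h2 : cleans.biUnion A ⊆ C₁.toFinset := by
      intro x hx
      obtain ⟨i, hi, hxA⟩ := Finset.mem_biUnion.mp hx
      have : i ∉ Dty := (Finset.mem_sdiff.mp hi).2
      exact Set.mem_toFinset.mpr (hclean i this (by simpa using hxA))
    calc ∑ x ∈ cleans.biUnion A, w x ≤ ∑ x ∈ C₁.toFinset, w x :=
          Finset.sum_le_sum_of_subset_of_nonneg h2 (fun x _ _ => hw0 x)
    _ = val C₁ := hCsum C₁ hC₁F
    _ = ((n * (n - t) : ℕ) : ℝ) := by simp [hval]
  have hlow : ((n * (n - t) : ℕ) : ℝ) < ∑ i ∈ cleans, ν i := by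
    have h1 : ∑ i ∈ cleans, ((n : ℝ)) < ∑ i ∈ cleans, ν i :=
      Finset.sum_lt_sum_of_nonempty hclne (fun i _ => hub i)
    have h2 : ((n - t : ℕ) : ℝ) * (n : ℝ) ≤ (cleans.card : ℝ) * (n : ℝ) := by
      apply mul_le_mul_of_nonneg_right _ (by positivity)
      exact_mod_cast hclcard
    rw [Finset.sum_const, nsmul_eq_mul] at h1
    have h3 : ((n * (n - t) : ℕ) : ℝ) = ((n - t : ℕ) : ℝ) * (n : ℝ) := by
      push_cast; ring
    linarith
  linarith
end

section
/- Fix integers k ≥ 1 and n ≥ 4. Let G be a lips graph in which each of the five defining paths has more than k·n·(n−3) internal vertices. Then G fails to guarantee EFk_outer allocations for n agents: there exists a weight function w on the vertices of G such that, when all n agents use the common additive valuation ν(S) = Σ_{v∈S} w(v), no contiguous allocation A₁,…,Aₙ is envy-free up to k goods, and hence none is EFk_outer. -/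
/-- The internal vertices of a walk: vertices on its support other than its endpoints. -/
def walkInternals {V : Type} {G : SimpleGraph V} {x y : V} (p : G.Walk x y) : Set V :=
  {v | v ∈ p.support} \ {x, y}

/-- The set of edges traversed by a walk. -/
def walkEdgeSet {V : Type} {G : SimpleGraph V} {x y : V} (p : G.Walk x y) : Set (Sym2 V) :=
  {e | e ∈ p.edges}

/-- The five paths `p1, p2 : a — b`, `p3, p4 : b — c`, `p5 : a — c` witness that `G` is a
lips graph with distinguished vertices `a`, `b`, `c`. -/
def LipsWitness {V : Type} (G : SimpleGraph V) (a b c : V)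
    (p1 p2 : G.Walk a b) (p3 p4 : G.Walk b c) (p5 : G.Walk a c) : Prop :=
  a ≠ b ∧ a ≠ c ∧ b ≠ c ∧
  (p1.IsPath ∧ p2.IsPath ∧ p3.IsPath ∧ p4.IsPath ∧ p5.IsPath) ∧
  (p1 ≠ p2 ∧ p3 ≠ p4) ∧
  (Disjoint (walkInternals p1) (walkInternals p2) ∧
   Disjoint (walkInternals p1) (walkInternals p3) ∧
   Disjoint (walkInternals p1) (walkInternals p4) ∧
   Disjoint (walkInternals p1) (walkInternals p5) ∧
   Disjoint (walkInternals p2) (walkInternals p3) ∧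
   Disjoint (walkInternals p2) (walkInternals p4) ∧
   Disjoint (walkInternals p2) (walkInternals p5) ∧
   Disjoint (walkInternals p3) (walkInternals p4) ∧
   Disjoint (walkInternals p3) (walkInternals p5) ∧
   Disjoint (walkInternals p4) (walkInternals p5)) ∧
  (Disjoint (walkInternals p1) ({a, b, c} : Set V) ∧
   Disjoint (walkInternals p2) ({a, b, c} : Set V) ∧
   Disjoint (walkInternals p3) ({a, b, c} : Set V) ∧
   Disjoint (walkInternals p4) ({a, b, c} : Set V) ∧
   Disjoint (walkInternals p5) ({a, b, c} : Set V)) ∧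
  (Disjoint (walkEdgeSet p1) (walkEdgeSet p2) ∧
   Disjoint (walkEdgeSet p1) (walkEdgeSet p3) ∧
   Disjoint (walkEdgeSet p1) (walkEdgeSet p4) ∧
   Disjoint (walkEdgeSet p1) (walkEdgeSet p5) ∧
   Disjoint (walkEdgeSet p2) (walkEdgeSet p3) ∧
   Disjoint (walkEdgeSet p2) (walkEdgeSet p4) ∧
   Disjoint (walkEdgeSet p2) (walkEdgeSet p5) ∧
   Disjoint (walkEdgeSet p3) (walkEdgeSet p4) ∧
   Disjoint (walkEdgeSet p3) (walkEdgeSet p5) ∧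
   Disjoint (walkEdgeSet p4) (walkEdgeSet p5)) ∧
  (walkEdgeSet p1 ∪ walkEdgeSet p2 ∪ walkEdgeSet p3 ∪ walkEdgeSet p4 ∪ walkEdgeSet p5 =
    G.edgeSet) ∧
  (∀ v : V, v ∈ p1.support ∨ v ∈ p2.support ∨ v ∈ p3.support ∨ v ∈ p4.support ∨
    v ∈ p5.support)

/-- Auxiliary: an endpoint of an edge of a walk which is not an endpoint of the walk is an
internal vertex of the walk. -/
lemma mem_walkInternals_of_edge {V : Type} {G : SimpleGraph V} {x y v u : V} (p : G.Walk x y)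
    (he : s(v, u) ∈ p.edges) (hv : v ∉ ({x, y} : Set V)) : v ∈ walkInternals p :=
  ⟨p.fst_mem_support_of_mem_edges he, hv⟩

/-- Auxiliary: second-endpoint version. -/
lemma mem_walkInternals_of_edge' {V : Type} {G : SimpleGraph V} {x y v u : V} (p : G.Walk x y)
    (he : s(v, u) ∈ p.edges) (hu : u ∉ ({x, y} : Set V)) : u ∈ walkInternals p :=
  ⟨p.snd_mem_support_of_mem_edges he, hu⟩

/-- Auxiliary: a connected (in the induced subgraph) finset all of whose members avoid a
"hub" set stays inside any set `X` that is closed under stepping along edges avoiding hubs,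
provided one of its members is in `X`. -/
lemma confine_aux {V : Type} {G : SimpleGraph V} (Hb : Set V) (X : Set V)
    (hX : ∀ v u : V, G.Adj v u → v ∈ X → u ∉ Hb → u ∈ X)
    (B : Finset V) (hfree : ∀ z ∈ B, z ∉ Hb)
    (hpre : (G.induce ((B : Finset V) : Set V)).Preconnected)
    (v0 : V) (hv0 : v0 ∈ B) (hv0X : v0 ∈ X) (u : V) (hu : u ∈ B) : u ∈ X := by
  obtain ⟨p⟩ := hpre ⟨v0, by simpa using hv0⟩ ⟨u, by simpa using hu⟩
  have key : ∀ (x y : ((B : Finset V) : Set V))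
      (q : (G.induce ((B : Finset V) : Set V)).Walk x y), (x : V) ∈ X → (y : V) ∈ X := by
    intro x y q
    induction q with
    | nil => exact id
    | @cons x' z y' hadj q ih =>
      intro hx
      have hGadj : G.Adj (x' : V) (z : V) := hadj
      exact ih (hX _ _ hGadj hx (hfree _ (by simpa using z.2)))
  exact key _ _ p hv0X

set_option maxHeartbeats 1000000 in
/-- Negative transfer for lips graphs. Fix `k ≥ 1` and `n ≥ 4`. If each of the five
defining paths of a lips graph has more than `k·n·(n−3)` internal vertices, then there
is a common additive valuation for which no contiguous allocation to `n` agents is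
envy-free up to `k` goods (hence none is EFk-outer). -/
theorem stmt_6 {V : Type} [Fintype V] [DecidableEq V] (k n : ℕ) (hk : 1 ≤ k) (hn : 4 ≤ n)
    (G : SimpleGraph V) (a b c : V)
    (p1 p2 : G.Walk a b) (p3 p4 : G.Walk b c) (p5 : G.Walk a c)
    (hlips : LipsWitness G a b c p1 p2 p3 p4 p5)
    (hbig1 : k * n * (n - 3) < (walkInternals p1).ncard)
    (hbig2 : k * n * (n - 3) < (walkInternals p2).ncard)
    (hbig3 : k * n * (n - 3) < (walkInternals p3).ncard)
    (hbig4 : k * n * (n - 3) < (walkInternals p4).ncard)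
    (hbig5 : k * n * (n - 3) < (walkInternals p5).ncard) :
    ∃ w : V → ℝ, (∀ v, 0 ≤ w v) ∧
      ∀ A : Fin n → Finset V,
        (Pairwise fun i j => Disjoint (A i) (A j)) →
        Finset.univ.biUnion A = Finset.univ →
        (∀ i, (G.induce ((A i : Finset V) : Set V)).Preconnected) →
        ∃ i j, ∀ S : Finset V, S ⊆ A j → S.card ≤ k →
          ∑ x ∈ A i, w x < ∑ x ∈ A j \ S, w x := by
  classical
  obtain ⟨hab, hac, hbc, -, -, ⟨h12, h13, h14, h15, h23, h24, h25, h34, h35, h45⟩,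
    ⟨hH1, hH2, hH3, hH4, hH5⟩, -, hecov, hsupp⟩ := hlips
  have h3n : (3 : ℕ) ≤ n := by omega
  have hnR : (4 : ℝ) ≤ (n : ℝ) := by exact_mod_cast hn
  have hn1R : (0 : ℝ) < (n : ℝ) + 1 := by linarith
  have hn3R : (1 : ℝ) ≤ (n : ℝ) - 3 := by linarith
  set K : ℕ := k * n * (n - 3) with hKdef
  have hK4 : 4 ≤ K := by
    calc (4 : ℕ) = 1 * 4 * 1 := by norm_num
    _ ≤ k * n * (n - 3) := Nat.mul_le_mul (Nat.mul_le_mul hk hn) (by omega)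
  have hKR : (K : ℝ) = (k : ℝ) * (n : ℝ) * ((n : ℝ) - 3) := by
    rw [hKdef, Nat.cast_mul, Nat.cast_mul, Nat.cast_sub h3n]
    norm_num
  have hKpos : (0 : ℝ) < (K : ℝ) + 1 := by positivity
  -- the interiors as finsets
  have hf1 : (walkInternals p1).Finite := Set.toFinite _
  have hf2 : (walkInternals p2).Finite := Set.toFinite _
  have hf3 : (walkInternals p3).Finite := Set.toFinite _
  have hf4 : (walkInternals p4).Finite := Set.toFinite _
  have hf5 : (walkInternals p5).Finite := Set.toFinite _
  set J1 : Finset V := hf1.toFinset with hJ1def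
  set J2 : Finset V := hf2.toFinset with hJ2def
  set J3 : Finset V := hf3.toFinset with hJ3def
  set J4 : Finset V := hf4.toFinset with hJ4def
  set J5 : Finset V := hf5.toFinset with hJ5def
  have hm1 : K < J1.card := by
    rw [← Set.ncard_eq_toFinset_card _ hf1]; exact hbig1
  have hm2 : K < J2.card := by
    rw [← Set.ncard_eq_toFinset_card _ hf2]; exact hbig2
  have hm3 : K < J3.card := by
    rw [← Set.ncard_eq_toFinset_card _ hf3]; exact hbig3
  have hm4 : K < J4.card := by
    rw [← Set.ncard_eq_toFinset_card _ hf4]; exact hbig4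
  have hm5 : K < J5.card := by
    rw [← Set.ncard_eq_toFinset_card _ hf5]; exact hbig5
  have hm1R : (K : ℝ) + 1 ≤ (J1.card : ℝ) := by exact_mod_cast hm1
  have hm2R : (K : ℝ) + 1 ≤ (J2.card : ℝ) := by exact_mod_cast hm2
  have hm3R : (K : ℝ) + 1 ≤ (J3.card : ℝ) := by exact_mod_cast hm3
  have hm4R : (K : ℝ) + 1 ≤ (J4.card : ℝ) := by exact_mod_cast hm4
  have hm5R : (K : ℝ) + 1 ≤ (J5.card : ℝ) := by exact_mod_cast hm5
  have hm1pos : (0 : ℝ) < (J1.card : ℝ) := lt_of_lt_of_le hKpos hm1R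
  have hm2pos : (0 : ℝ) < (J2.card : ℝ) := lt_of_lt_of_le hKpos hm2R
  have hm3pos : (0 : ℝ) < (J3.card : ℝ) := lt_of_lt_of_le hKpos hm3R
  have hm4pos : (0 : ℝ) < (J4.card : ℝ) := lt_of_lt_of_le hKpos hm4R
  have hm5pos : (0 : ℝ) < (J5.card : ℝ) := lt_of_lt_of_le hKpos hm5R
  -- weights
  set W1 : ℝ := (n : ℝ) * ((n : ℝ) - 3) / ((n : ℝ) + 1) with hW1def
  set Ws : ℝ := (n : ℝ) / ((n : ℝ) + 1) with hWsdef
  have hW1pos : 0 < W1 := by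
    rw [hW1def]; exact div_pos (mul_pos (by linarith) (by linarith)) hn1R
  have hWspos : 0 < Ws := div_pos (by linarith) hn1R
  have hWsW1 : Ws ≤ W1 := by
    rw [hW1def, hWsdef, div_le_div_iff₀ hn1R hn1R]
    nlinarith [mul_nonneg (mul_nonneg (by linarith : (0:ℝ) ≤ (n:ℝ))
      (by linarith : (0:ℝ) ≤ (n:ℝ) + 1)) (by linarith : (0:ℝ) ≤ (n:ℝ) - 4)]
  set w : V → ℝ := fun v =>
    if v ∈ J1 then W1 / (J1.card : ℝ) else
    if v ∈ J2 then Ws / (J2.card : ℝ) else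
    if v ∈ J3 then Ws / (J3.card : ℝ) else
    if v ∈ J4 then Ws / (J4.card : ℝ) else
    if v ∈ J5 then Ws / (J5.card : ℝ) else 0 with hwdef
  have hwnn : ∀ v, 0 ≤ w v := by
    intro v
    rw [hwdef]; dsimp only
    split_ifs
    · exact le_of_lt (div_pos hW1pos hm1pos)
    · exact le_of_lt (div_pos hWspos hm2pos)
    · exact le_of_lt (div_pos hWspos hm3pos)
    · exact le_of_lt (div_pos hWspos hm4pos)
    · exact le_of_lt (div_pos hWspos hm5pos)
    · exact le_refl 0
  have hwub : ∀ v, w v ≤ W1 / ((K : ℝ) + 1) := by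
    intro v
    rw [hwdef]; dsimp only
    split_ifs
    · exact div_le_div₀ hW1pos.le le_rfl hKpos hm1R
    · exact div_le_div₀ hW1pos.le hWsW1 hKpos hm2R
    · exact div_le_div₀ hW1pos.le hWsW1 hKpos hm3R
    · exact div_le_div₀ hW1pos.le hWsW1 hKpos hm4R
    · exact div_le_div₀ hW1pos.le hWsW1 hKpos hm5R
    · exact le_of_lt (div_pos hW1pos hKpos)
  -- disjointness of the J's
  have mkd : ∀ {s t : Set V} (hs : s.Finite) (ht : t.Finite),
      Disjoint s t → Disjoint hs.toFinset ht.toFinset := by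
    intro s t hs ht hst
    rw [Set.Finite.disjoint_toFinset]; exact hst
  have d12 : Disjoint J1 J2 := mkd hf1 hf2 h12
  have d13 : Disjoint J1 J3 := mkd hf1 hf3 h13
  have d14 : Disjoint J1 J4 := mkd hf1 hf4 h14
  have d15 : Disjoint J1 J5 := mkd hf1 hf5 h15
  have d23 : Disjoint J2 J3 := mkd hf2 hf3 h23
  have d24 : Disjoint J2 J4 := mkd hf2 hf4 h24
  have d25 : Disjoint J2 J5 := mkd hf2 hf5 h25
  have d34 : Disjoint J3 J4 := mkd hf3 hf4 h34
  have d35 : Disjoint J3 J5 := mkd hf3 hf5 h35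
  have d45 : Disjoint J4 J5 := mkd hf4 hf5 h45
  -- sums of w over the J's
  have hJ1sum : ∑ x ∈ J1, w x = W1 := by
    have he : ∀ x ∈ J1, w x = W1 / (J1.card : ℝ) := by
      intro x hx; rw [hwdef]; dsimp only; rw [if_pos hx]
    rw [Finset.sum_congr rfl he, Finset.sum_const, nsmul_eq_mul, mul_comm,
      div_mul_cancel₀ _ hm1pos.ne']
  have hJ2sum : ∑ x ∈ J2, w x = Ws := by
    have he : ∀ x ∈ J2, w x = Ws / (J2.card : ℝ) := by
      intro x hx; rw [hwdef]; dsimp only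
      rw [if_neg (Finset.disjoint_right.mp d12 hx), if_pos hx]
    rw [Finset.sum_congr rfl he, Finset.sum_const, nsmul_eq_mul, mul_comm,
      div_mul_cancel₀ _ hm2pos.ne']
  have hJ3sum : ∑ x ∈ J3, w x = Ws := by
    have he : ∀ x ∈ J3, w x = Ws / (J3.card : ℝ) := by
      intro x hx; rw [hwdef]; dsimp only
      rw [if_neg (Finset.disjoint_right.mp d13 hx), if_neg (Finset.disjoint_right.mp d23 hx),
        if_pos hx]
    rw [Finset.sum_congr rfl he, Finset.sum_const, nsmul_eq_mul, mul_comm,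
      div_mul_cancel₀ _ hm3pos.ne']
  have hJ4sum : ∑ x ∈ J4, w x = Ws := by
    have he : ∀ x ∈ J4, w x = Ws / (J4.card : ℝ) := by
      intro x hx; rw [hwdef]; dsimp only
      rw [if_neg (Finset.disjoint_right.mp d14 hx), if_neg (Finset.disjoint_right.mp d24 hx),
        if_neg (Finset.disjoint_right.mp d34 hx), if_pos hx]
    rw [Finset.sum_congr rfl he, Finset.sum_const, nsmul_eq_mul, mul_comm,
      div_mul_cancel₀ _ hm4pos.ne']
  have hJ5sum : ∑ x ∈ J5, w x = Ws := by
    have he : ∀ x ∈ J5, w x = Ws / (J5.card : ℝ) := by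
      intro x hx; rw [hwdef]; dsimp only
      rw [if_neg (Finset.disjoint_right.mp d15 hx), if_neg (Finset.disjoint_right.mp d25 hx),
        if_neg (Finset.disjoint_right.mp d35 hx), if_neg (Finset.disjoint_right.mp d45 hx),
        if_pos hx]
    rw [Finset.sum_congr rfl he, Finset.sum_const, nsmul_eq_mul, mul_comm,
      div_mul_cancel₀ _ hm5pos.ne']
  -- total sum
  have hUsum : ∑ x ∈ Finset.univ, w x = (n : ℝ) := by
    have hzero : ∀ x ∈ (Finset.univ : Finset V), x ∉ J1 ∪ J2 ∪ J3 ∪ J4 ∪ J5 → w x = 0 := by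
      intro x _ hx
      simp only [Finset.mem_union, not_or] at hx
      obtain ⟨⟨⟨⟨n1, n2⟩, n3⟩, n4⟩, n5⟩ := hx
      rw [hwdef]; dsimp only
      rw [if_neg n1, if_neg n2, if_neg n3, if_neg n4, if_neg n5]
    have dA : Disjoint (J1 ∪ J2) J3 := Finset.disjoint_union_left.mpr ⟨d13, d23⟩
    have dB : Disjoint (J1 ∪ J2 ∪ J3) J4 :=
      Finset.disjoint_union_left.mpr ⟨Finset.disjoint_union_left.mpr ⟨d14, d24⟩, d34⟩
    have dC : Disjoint (J1 ∪ J2 ∪ J3 ∪ J4) J5 :=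
      Finset.disjoint_union_left.mpr
        ⟨Finset.disjoint_union_left.mpr
          ⟨Finset.disjoint_union_left.mpr ⟨d15, d25⟩, d35⟩, d45⟩
    rw [← Finset.sum_subset (Finset.subset_univ (J1 ∪ J2 ∪ J3 ∪ J4 ∪ J5)) hzero]
    rw [Finset.sum_union dC, Finset.sum_union dB, Finset.sum_union dA, Finset.sum_union d12]
    rw [hJ1sum, hJ2sum, hJ3sum, hJ4sum, hJ5sum, hW1def, hWsdef]
    field_simp
    ring
  -- the hub set
  set Hb : Set V := {a, b, c} with hHbdef
  have hsubab : ({a, b} : Set V) ⊆ Hb := by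
    intro z hz
    simp only [Set.mem_insert_iff, Set.mem_singleton_iff] at hz
    simp only [hHbdef, Set.mem_insert_iff, Set.mem_singleton_iff]
    tauto
  have hsubbc : ({b, c} : Set V) ⊆ Hb := by
    intro z hz
    simp only [Set.mem_insert_iff, Set.mem_singleton_iff] at hz
    simp only [hHbdef, Set.mem_insert_iff, Set.mem_singleton_iff]
    tauto
  have hsubac : ({a, c} : Set V) ⊆ Hb := by
    intro z hz
    simp only [Set.mem_insert_iff, Set.mem_singleton_iff] at hz
    simp only [hHbdef, Set.mem_insert_iff, Set.mem_singleton_iff]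
    tauto
  -- adjacent non-hub vertices lie in a common interior
  have colocate : ∀ v u : V, G.Adj v u → v ∉ Hb → u ∉ Hb →
      (v ∈ walkInternals p1 ∧ u ∈ walkInternals p1) ∨
      (v ∈ walkInternals p2 ∧ u ∈ walkInternals p2) ∨
      (v ∈ walkInternals p3 ∧ u ∈ walkInternals p3) ∨
      (v ∈ walkInternals p4 ∧ u ∈ walkInternals p4) ∨
      (v ∈ walkInternals p5 ∧ u ∈ walkInternals p5) := by
    intro v u hadj hv hu
    have he : s(v, u) ∈ G.edgeSet := G.mem_edgeSet.mpr hadj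
    rw [← hecov] at he
    rcases he with ((((h | h) | h) | h) | h)
    · exact Or.inl ⟨mem_walkInternals_of_edge p1 h (fun hm => hv (hsubab hm)),
        mem_walkInternals_of_edge' p1 h (fun hm => hu (hsubab hm))⟩
    · exact Or.inr (Or.inl ⟨mem_walkInternals_of_edge p2 h (fun hm => hv (hsubab hm)),
        mem_walkInternals_of_edge' p2 h (fun hm => hu (hsubab hm))⟩)
    · exact Or.inr (Or.inr (Or.inl ⟨mem_walkInternals_of_edge p3 h (fun hm => hv (hsubbc hm)),
        mem_walkInternals_of_edge' p3 h (fun hm => hu (hsubbc hm))⟩))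
    · exact Or.inr (Or.inr (Or.inr (Or.inl
        ⟨mem_walkInternals_of_edge p4 h (fun hm => hv (hsubbc hm)),
         mem_walkInternals_of_edge' p4 h (fun hm => hu (hsubbc hm))⟩)))
    · exact Or.inr (Or.inr (Or.inr (Or.inr
        ⟨mem_walkInternals_of_edge p5 h (fun hm => hv (hsubac hm)),
         mem_walkInternals_of_edge' p5 h (fun hm => hu (hsubac hm))⟩)))
  -- each interior is closed under non-hub steps
  have hclosed1 : ∀ v u : V, G.Adj v u → v ∈ walkInternals p1 → u ∉ Hb →
      u ∈ walkInternals p1 := by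
    intro v u hadj hv hu
    have hvH : v ∉ Hb := Set.disjoint_left.mp hH1 hv
    rcases colocate v u hadj hvH hu with ⟨-, h⟩ | ⟨hs, -⟩ | ⟨hs, -⟩ | ⟨hs, -⟩ | ⟨hs, -⟩
    · exact h
    · exact absurd hs (Set.disjoint_left.mp h12 hv)
    · exact absurd hs (Set.disjoint_left.mp h13 hv)
    · exact absurd hs (Set.disjoint_left.mp h14 hv)
    · exact absurd hs (Set.disjoint_left.mp h15 hv)
  have hclosed2 : ∀ v u : V, G.Adj v u → v ∈ walkInternals p2 → u ∉ Hb →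
      u ∈ walkInternals p2 := by
    intro v u hadj hv hu
    have hvH : v ∉ Hb := Set.disjoint_left.mp hH2 hv
    rcases colocate v u hadj hvH hu with ⟨hs, -⟩ | ⟨-, h⟩ | ⟨hs, -⟩ | ⟨hs, -⟩ | ⟨hs, -⟩
    · exact absurd hs (Set.disjoint_right.mp h12 hv)
    · exact h
    · exact absurd hs (Set.disjoint_left.mp h23 hv)
    · exact absurd hs (Set.disjoint_left.mp h24 hv)
    · exact absurd hs (Set.disjoint_left.mp h25 hv)
  have hclosed3 : ∀ v u : V, G.Adj v u → v ∈ walkInternals p3 → u ∉ Hb →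
      u ∈ walkInternals p3 := by
    intro v u hadj hv hu
    have hvH : v ∉ Hb := Set.disjoint_left.mp hH3 hv
    rcases colocate v u hadj hvH hu with ⟨hs, -⟩ | ⟨hs, -⟩ | ⟨-, h⟩ | ⟨hs, -⟩ | ⟨hs, -⟩
    · exact absurd hs (Set.disjoint_right.mp h13 hv)
    · exact absurd hs (Set.disjoint_right.mp h23 hv)
    · exact h
    · exact absurd hs (Set.disjoint_left.mp h34 hv)
    · exact absurd hs (Set.disjoint_left.mp h35 hv)
  have hclosed4 : ∀ v u : V, G.Adj v u → v ∈ walkInternals p4 → u ∉ Hb →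
      u ∈ walkInternals p4 := by
    intro v u hadj hv hu
    have hvH : v ∉ Hb := Set.disjoint_left.mp hH4 hv
    rcases colocate v u hadj hvH hu with ⟨hs, -⟩ | ⟨hs, -⟩ | ⟨hs, -⟩ | ⟨-, h⟩ | ⟨hs, -⟩
    · exact absurd hs (Set.disjoint_right.mp h14 hv)
    · exact absurd hs (Set.disjoint_right.mp h24 hv)
    · exact absurd hs (Set.disjoint_right.mp h34 hv)
    · exact h
    · exact absurd hs (Set.disjoint_left.mp h45 hv)
  have hclosed5 : ∀ v u : V, G.Adj v u → v ∈ walkInternals p5 → u ∉ Hb →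
      u ∈ walkInternals p5 := by
    intro v u hadj hv hu
    have hvH : v ∉ Hb := Set.disjoint_left.mp hH5 hv
    rcases colocate v u hadj hvH hu with ⟨hs, -⟩ | ⟨hs, -⟩ | ⟨hs, -⟩ | ⟨hs, -⟩ | ⟨-, h⟩
    · exact absurd hs (Set.disjoint_right.mp h15 hv)
    · exact absurd hs (Set.disjoint_right.mp h25 hv)
    · exact absurd hs (Set.disjoint_right.mp h35 hv)
    · exact absurd hs (Set.disjoint_right.mp h45 hv)
    · exact h
  -- main body
  refine ⟨w, hwnn, ?_⟩
  intro A hdisj hcover hconn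
  by_contra hcon
  push_neg at hcon
  -- total of the values
  have hνtot : ∑ i : Fin n, ∑ x ∈ A i, w x = (n : ℝ) := by
    have h1 := Finset.sum_biUnion (s := (Finset.univ : Finset (Fin n))) (t := A) (f := w)
      (fun i _ j _ hij => hdisj hij)
    rw [hcover] at h1
    rw [← h1, hUsum]
  -- the ε bound
  set ε : ℝ := (k : ℝ) * (W1 / ((K : ℝ) + 1)) with hεdef
  have hεlt : ε < 1 / ((n : ℝ) + 1) := by
    have heq : ε = (K : ℝ) / (((n : ℝ) + 1) * ((K : ℝ) + 1)) := by
      rw [hεdef, hW1def, hKR]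
      field_simp
    rw [heq, div_lt_div_iff₀ (by positivity) hn1R]
    nlinarith [Nat.cast_nonneg (α := ℝ) K]
  have hεsmall : ε < 1 / 5 := by
    have h5 : (1 : ℝ) / ((n : ℝ) + 1) ≤ 1 / 5 := by
      apply div_le_div_of_nonneg_left (by norm_num) (by norm_num) (by linarith)
    linarith
  -- some agent has value at least 1
  have hmax : ∃ j0 : Fin n, 1 ≤ ∑ x ∈ A j0, w x := by
    by_contra hno
    push_neg at hno
    have hne : (Finset.univ : Finset (Fin n)).Nonempty := ⟨⟨0, by omega⟩, Finset.mem_univ _⟩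
    have hlt := Finset.sum_lt_sum_of_nonempty hne (fun i _ => hno i)
    rw [hνtot] at hlt
    have h2 : ∑ _i : Fin n, (1 : ℝ) = (n : ℝ) := by simp
    rw [h2] at hlt
    exact lt_irrefl _ hlt
  obtain ⟨j0, hj0⟩ := hmax
  -- every agent has value at least 1 - ε
  have hνlb : ∀ i, 1 - ε ≤ ∑ x ∈ A i, w x := by
    intro i
    obtain ⟨S, hS1, hS2, hS3⟩ := hcon i j0
    have hsd : ∑ x ∈ A j0 \ S, w x = ∑ x ∈ A j0, w x - ∑ x ∈ S, w x :=
      Finset.sum_sdiff_eq_sub hS1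
    have h2 : ∑ x ∈ S, w x ≤ (S.card : ℝ) * (W1 / ((K : ℝ) + 1)) := by
      have := Finset.sum_le_card_nsmul S w (W1 / ((K : ℝ) + 1)) (fun x _ => hwub x)
      simpa [nsmul_eq_mul] using this
    have h3 : (S.card : ℝ) * (W1 / ((K : ℝ) + 1)) ≤ ε := by
      rw [hεdef]
      exact mul_le_mul_of_nonneg_right (by exact_mod_cast hS2)
        (le_of_lt (div_pos hW1pos hKpos))
    linarith
  have hcrit : Ws < 1 - ε := by
    have h1 : (1 : ℝ) - Ws = 1 / ((n : ℝ) + 1) := by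
      rw [hWsdef]; field_simp; ring
    linarith
  -- hub-free agents live in J1
  have hN1 : ∀ i, (∀ z ∈ A i, z ∉ Hb) → ∀ x ∈ A i, x ∈ J1 := by
    intro i hfree
    have hcases : (∀ x ∈ A i, x ∈ walkInternals p1) ∨
        (∀ x ∈ A i, x ∈ walkInternals p2) ∨
        (∀ x ∈ A i, x ∈ walkInternals p3) ∨
        (∀ x ∈ A i, x ∈ walkInternals p4) ∨
        (∀ x ∈ A i, x ∈ walkInternals p5) := by
      rcases Finset.eq_empty_or_nonempty (A i) with hemp | ⟨v0, hv0⟩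
      · left; intro x hx; rw [hemp] at hx; exact absurd hx (Finset.notMem_empty x)
      · rcases hsupp v0 with h | h | h | h | h
        · left
          intro x hx
          exact confine_aux Hb (walkInternals p1) hclosed1 (A i) hfree (hconn i) v0 hv0
            ⟨h, fun hm => hfree v0 hv0 (hsubab hm)⟩ x hx
        · right; left
          intro x hx
          exact confine_aux Hb (walkInternals p2) hclosed2 (A i) hfree (hconn i) v0 hv0
            ⟨h, fun hm => hfree v0 hv0 (hsubab hm)⟩ x hx
        · right; right; left
          intro x hx
          exact confine_aux Hb (walkInternals p3) hclosed3 (A i) hfree (hconn i) v0 hv0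
            ⟨h, fun hm => hfree v0 hv0 (hsubbc hm)⟩ x hx
        · right; right; right; left
          intro x hx
          exact confine_aux Hb (walkInternals p4) hclosed4 (A i) hfree (hconn i) v0 hv0
            ⟨h, fun hm => hfree v0 hv0 (hsubbc hm)⟩ x hx
        · right; right; right; right
          intro x hx
          exact confine_aux Hb (walkInternals p5) hclosed5 (A i) hfree (hconn i) v0 hv0
            ⟨h, fun hm => hfree v0 hv0 (hsubac hm)⟩ x hx
    have hsmall : ∀ (Jt : Finset V), (∑ x ∈ Jt, w x = Ws) → (A i ⊆ Jt) → False := by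
      intro Jt hJt hsubJ
      have hle : ∑ x ∈ A i, w x ≤ ∑ x ∈ Jt, w x :=
        Finset.sum_le_sum_of_subset_of_nonneg hsubJ (fun x _ _ => hwnn x)
      rw [hJt] at hle
      linarith [hνlb i, hcrit]
    rcases hcases with h | h | h | h | h
    · intro x hx; exact hf1.mem_toFinset.mpr (h x hx)
    · exact (hsmall J2 hJ2sum (fun x hx => hf2.mem_toFinset.mpr (h x hx))).elim
    · exact (hsmall J3 hJ3sum (fun x hx => hf3.mem_toFinset.mpr (h x hx))).elim
    · exact (hsmall J4 hJ4sum (fun x hx => hf4.mem_toFinset.mpr (h x hx))).elim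
    · exact (hsmall J5 hJ5sum (fun x hx => hf5.mem_toFinset.mpr (h x hx))).elim
  -- there are at least n - 3 hub-free agents
  set N : Finset (Fin n) := Finset.univ.filter (fun i => ∀ z ∈ A i, z ∉ Hb) with hNdef
  have hNcard : n - 3 ≤ N.card := by
    set M : Finset (Fin n) := Finset.univ.filter (fun i => ¬ ∀ z ∈ A i, z ∉ Hb) with hMdef
    have hmap : ∀ i ∈ M, ∃ z, z ∈ A i ∧ z ∈ Hb := by
      intro i hi
      rw [hMdef, Finset.mem_filter] at hi
      have := hi.2
      push_neg at this
      obtain ⟨z, hz1, hz2⟩ := this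
      exact ⟨z, hz1, hz2⟩
    set g : Fin n → V := fun i => if h : ∃ z, z ∈ A i ∧ z ∈ Hb then h.choose else a with hgdef
    have hg : ∀ i ∈ M, g i ∈ A i ∧ g i ∈ Hb := by
      intro i hi
      have hex := hmap i hi
      rw [hgdef]; dsimp only
      rw [dif_pos hex]
      exact hex.choose_spec
    have hcardM : M.card ≤ 3 := by
      have h1 : M.card ≤ ({a, b, c} : Finset V).card := by
        apply Finset.card_le_card_of_injOn g
        · intro i hi
          have h2 := (hg i hi).2
          rw [hHbdef] at h2
          simp only [Set.mem_insert_iff, Set.mem_singleton_iff] at h2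
          simp only [Finset.mem_coe, Finset.mem_insert, Finset.mem_singleton]
          exact h2
        · intro i hi j hj hij
          by_contra hne
          have ha1 := (hg i (by simpa using hi)).1
          have ha2 := (hg j (by simpa using hj)).1
          rw [hij] at ha1
          exact (Finset.disjoint_left.mp (hdisj hne) ha1) ha2
      have h2 : ({a, b, c} : Finset V).card ≤ 3 := by
        have := Finset.card_insert_le a ({b, c} : Finset V)
        have := Finset.card_insert_le b ({c} : Finset V)
        simp only [Finset.card_singleton] at *
        omega
      omega
    have hsplit : N.card + M.card = n := by
      rw [hNdef, hMdef, Finset.card_filter_add_card_filter_not]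
      simp
    omega
  -- final contradiction
  have hbiU : N.biUnion A ⊆ J1 := by
    intro x hx
    rw [Finset.mem_biUnion] at hx
    obtain ⟨i, hiN, hxA⟩ := hx
    have hfree : ∀ z ∈ A i, z ∉ Hb := by
      rw [hNdef, Finset.mem_filter] at hiN
      exact hiN.2
    exact hN1 i hfree x hxA
  have hNsum : ∑ i ∈ N, ∑ x ∈ A i, w x ≤ W1 := by
    have h1 : ∑ x ∈ N.biUnion A, w x = ∑ i ∈ N, ∑ x ∈ A i, w x :=
      Finset.sum_biUnion (fun i _ j _ hij => hdisj hij)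
    rw [← h1]
    calc ∑ x ∈ N.biUnion A, w x ≤ ∑ x ∈ J1, w x :=
        Finset.sum_le_sum_of_subset_of_nonneg hbiU (fun x _ _ => hwnn x)
    _ = W1 := hJ1sum
  have hlow : (N.card : ℝ) * (1 - ε) ≤ ∑ i ∈ N, ∑ x ∈ A i, w x := by
    have := Finset.card_nsmul_le_sum N (fun i => ∑ x ∈ A i, w x) (1 - ε)
      (fun i _ => hνlb i)
    simpa [nsmul_eq_mul] using this
  have hcardR : ((n : ℝ) - 3) ≤ (N.card : ℝ) := by
    have h1 : ((n - 3 : ℕ) : ℝ) ≤ (N.card : ℝ) := Nat.cast_le.mpr hNcard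
    rw [Nat.cast_sub h3n] at h1
    simpa using h1
  have hfin1 : ((n : ℝ) - 3) * (1 - ε) ≤ W1 := by
    have h0 : (0 : ℝ) ≤ 1 - ε := by linarith
    calc ((n : ℝ) - 3) * (1 - ε) ≤ (N.card : ℝ) * (1 - ε) :=
        mul_le_mul_of_nonneg_right hcardR h0
    _ ≤ ∑ i ∈ N, ∑ x ∈ A i, w x := hlow
    _ ≤ W1 := hNsum
  have hW1eq : W1 = ((n : ℝ) - 3) * Ws := by
    rw [hW1def, hWsdef]; ring
  have hp : ((n : ℝ) - 3) * Ws < ((n : ℝ) - 3) * (1 - ε) :=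
    mul_lt_mul_of_pos_left hcrit (by linarith)
  rw [hW1eq] at hfin1
  linarith
end

section
/- Let T be a stringable tangle, i.e., a tangle admitting a continuous surjection F : [0,1] → T that is injective on the open interval (0,1). Then for every finite subset X ⊆ T with |X| = t, the complement T ∖ X has at most t + 1 connected components; in other words, no stringable tangle has a gap ≥ 2 cutset of any cardinality. -/
noncomputable section

lemma icc_preconn_aux (s s' : ↥(Set.Icc (0 : ℝ) 1)) : IsPreconnected (Set.Icc s s') := by
  rw [← Topology.IsInducing.subtypeVal.isPreconnected_image]
  have : Subtype.val '' (Set.Icc s s') = Set.Icc (s:ℝ) (s':ℝ) := by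
    ext r
    constructor
    · rintro ⟨u, hu, rfl⟩; exact ⟨hu.1, hu.2⟩
    · rintro ⟨h1, h2⟩
      exact ⟨⟨r, ⟨le_trans s.2.1 h1, le_trans h2 s'.2.2⟩⟩, ⟨h1, h2⟩, rfl⟩
  rw [this]
  exact isPreconnected_Icc

/-- No stringable tangle has a gap ≥ 2 cutset: removing any finite set of `t` points
from a stringable tangle leaves at most `t + 1` connected components. -/
theorem stmt_8 (T : Type) [TopologicalSpace T] (hT : IsTangle T) (hS : Stringable T)
    (t : ℕ) (X : Set T) (hXfin : X.Finite) (hXcard : X.ncard = t) :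
    {C : Set T | ∃ x ∈ Xᶜ, C = connectedComponentIn Xᶜ x}.Finite ∧
    {C : Set T | ∃ x ∈ Xᶜ, C = connectedComponentIn Xᶜ x}.ncard ≤ t + 1 := by
  obtain ⟨F, hFc, hFs, hFi⟩ := hS
  set P : Set ↥(Set.Icc (0 : ℝ) 1) := F ⁻¹' X with hP
  set A : Set ↥(Set.Icc (0 : ℝ) 1) := {x : ↥(Set.Icc (0 : ℝ) 1) | (x : ℝ) ∈ Set.Ioo (0:ℝ) 1} ∩ P with hA
  have hAinj : Set.InjOn F A := hFi.mono Set.inter_subset_left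
  have hAimg : F '' A ⊆ X := by rintro y ⟨u, hu, rfl⟩; exact hu.2
  have hAfin : A.Finite := Set.Finite.of_finite_image (hXfin.subset hAimg) hAinj
  have hAcard : A.ncard ≤ t := by
    rw [← hXcard, ← Set.ncard_image_of_injOn hAinj]
    exact Set.ncard_le_ncard hAimg hXfin
  set z : ↥(Set.Icc (0 : ℝ) 1) := ⟨0, by norm_num⟩ with hz
  set B : Set ↥(Set.Icc (0 : ℝ) 1) := insert z A with hB
  have hBfin : B.Finite := hAfin.insert z
  have hBcard : B.ncard ≤ t + 1 := le_trans (Set.ncard_insert_le z A) (by omega)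
  have hzle : ∀ s : ↥(Set.Icc (0 : ℝ) 1), z ≤ s := fun s => Subtype.coe_le_coe.mp s.2.1
  -- the max function
  have hne : ∀ s : ↥(Set.Icc (0 : ℝ) 1), ((hBfin.inter_of_left (Set.Iic s)).toFinset).Nonempty := by
    intro s
    exact ⟨z, by simp [hB, hzle s]⟩
  set μ : ↥(Set.Icc (0 : ℝ) 1) → ↥(Set.Icc (0 : ℝ) 1) := fun s => ((hBfin.inter_of_left (Set.Iic s)).toFinset).max' (hne s) with hμ
  have hμmem : ∀ s : ↥(Set.Icc (0 : ℝ) 1), μ s ∈ B ∩ Set.Iic s := by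
    intro s
    have := ((hBfin.inter_of_left (Set.Iic s)).toFinset).max'_mem (hne s)
    rwa [Set.Finite.mem_toFinset] at this
  have hμmax : ∀ s : ↥(Set.Icc (0 : ℝ) 1), ∀ b ∈ B ∩ Set.Iic s, b ≤ μ s := by
    intro s b hb
    exact Finset.le_max' _ b (by simpa using hb)
  -- key lemma
  have key : ∀ s ∈ Pᶜ, ∀ s' ∈ Pᶜ, μ s = μ s' →
      connectedComponentIn Xᶜ (F s) = connectedComponentIn Xᶜ (F s') := by
    have main : ∀ s ∈ Pᶜ, ∀ s' ∈ Pᶜ, s ≤ s' → μ s = μ s' →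
        connectedComponentIn Xᶜ (F s) = connectedComponentIn Xᶜ (F s') := by
      intro s hs s' hs' hle hμeq
      have hdisj : Set.Icc s s' ∩ P = ∅ := by
        ext u
        simp only [Set.mem_inter_iff, Set.mem_Icc, Set.mem_empty_iff_false, iff_false, not_and]
        rintro ⟨hu1, hu2⟩ hup
        rcases u.2.1.lt_or_eq with h0 | h0
        · rcases u.2.2.lt_or_eq with h1 | h1
          · -- u ∈ A ⊆ B
            have huB : u ∈ B := Or.inr ⟨⟨h0, h1⟩, hup⟩
            have : u ≤ μ s' := hμmax s' u ⟨huB, hu2⟩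
            have : u ≤ μ s := hμeq ▸ this
            have hμs : μ s ≤ s := (hμmem s).2
            have : u = s := le_antisymm (this.trans hμs) hu1
            exact hs (this ▸ hup)
          · -- u = 1, so u = s'
            have : u = s' := le_antisymm hu2 (Subtype.coe_le_coe.mp (by rw [h1]; exact s'.2.2))
            exact hs' (this ▸ hup)
        · -- u = 0, so u = s
          have : u = s := le_antisymm (Subtype.coe_le_coe.mp (by rw [← h0]; exact s.2.1)) hu1
          exact hs (this ▸ hup)
      have hconn : IsPreconnected (F '' Set.Icc s s') := (icc_preconn_aux s s').image F hFc.continuousOn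
      have hsub : F '' Set.Icc s s' ⊆ Xᶜ := by
        rintro y ⟨u, hu, rfl⟩
        intro hy
        have : u ∈ Set.Icc s s' ∩ P := ⟨hu, hy⟩
        rw [hdisj] at this
        exact this
      have h1 : F s' ∈ connectedComponentIn Xᶜ (F s) := by
        apply hconn.subset_connectedComponentIn (Set.mem_image_of_mem F ⟨le_refl s, hle⟩) hsub
        exact Set.mem_image_of_mem F ⟨hle, le_refl s'⟩
      exact connectedComponentIn_eq h1
    intro s hs s' hs' hμeq
    rcases le_total s s' with h | h
    · exact main s hs s' hs' h hμeq
    · exact (main s' hs' s hs h hμeq.symm).symm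
  -- the set of components
  set σ : ↥(Set.Icc (0 : ℝ) 1) → Set T := fun b => connectedComponentIn Xᶜ (F (Function.invFunOn μ Pᶜ b)) with hσ
  set M : Set ↥(Set.Icc (0 : ℝ) 1) := μ '' Pᶜ with hM
  have hMB : M ⊆ B := by rintro b ⟨s, _, rfl⟩; exact (hμmem s).1
  have hMfin : M.Finite := hBfin.subset hMB
  have hSeq : {C : Set T | ∃ x ∈ Xᶜ, C = connectedComponentIn Xᶜ x} = σ '' M := by
    ext C
    constructor
    · rintro ⟨x, hx, rfl⟩
      obtain ⟨s, rfl⟩ := hFs x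
      have hs : s ∈ Pᶜ := hx
      refine ⟨μ s, ⟨s, hs, rfl⟩, ?_⟩
      have h1 : Function.invFunOn μ Pᶜ (μ s) ∈ Pᶜ := Function.invFunOn_mem ⟨s, hs, rfl⟩
      have h2 : μ (Function.invFunOn μ Pᶜ (μ s)) = μ s := Function.invFunOn_eq ⟨s, hs, rfl⟩
      exact key _ h1 s hs h2
    · rintro ⟨b, ⟨s, hs, rfl⟩, rfl⟩
      have h1 : Function.invFunOn μ Pᶜ (μ s) ∈ Pᶜ := Function.invFunOn_mem ⟨s, hs, rfl⟩
      exact ⟨F (Function.invFunOn μ Pᶜ (μ s)), h1, rfl⟩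
  rw [hSeq]
  refine ⟨hMfin.image σ, ?_⟩
  calc (σ '' M).ncard ≤ M.ncard := Set.ncard_image_le hMfin
    _ ≤ B.ncard := Set.ncard_le_ncard hMB hBfin
    _ ≤ t + 1 := hBcard
end
end

section
/- Let three agents have monotone valuations over the items of an enumeration P = (v₁,…,v_m), and suppose v_r is a median lumpy tie over P. Then for every pair {i,k} of the three agents there is an allocation of all items of P to i and k in which one of them receives L(v_r) ∪ {v_r} and the other receives R(v_r), or one receives L(v_r) and the other receives R(v_r) ∪ {v_r}, such that: ν_i(A_i) ≥ ν_i(A_k ∖ {v_r}) and ν_k(A_k) ≥ ν_k(A_i ∖ {v_r}) (the allocation is envy-free up to {v_r}), and moreover each of the two agents values their own bundle at least as much as each of the two bundles L(v_r) and R(v_r). -/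
/-- The bundle `{v s, …, v t}` of items (empty if `s > t`). -/
def segF {V : Type} [DecidableEq V] (v : ℕ → V) (s t : ℕ) : Finset V :=
  (Finset.Icc s t).image v

/-- `v r` is a lumpy tie over the enumeration `v 1, …, v m` for the valuation `ν`. -/
def IsLumpyTie {V : Type} [DecidableEq V] (v : ℕ → V) (m : ℕ) (ν : Finset V → ℝ)
    (r : ℕ) : Prop :=
  ν (segF v 1 (r - 1) ∪ {v r}) ≥ ν (segF v (r + 1) m) ∧
  ν (segF v (r + 1) m ∪ {v r}) ≥ ν (segF v 1 (r - 1))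

/-- `v r` is a median lumpy tie over `v 1, …, v m` for three agents. -/
def IsMedianLumpyTie {V : Type} [DecidableEq V] (v : ℕ → V) (m : ℕ)
    (ν : Fin 3 → Finset V → ℝ) (r : ℕ) : Prop :=
  ∃ a b c : ℕ, (1 ≤ a ∧ a ≤ m) ∧ (1 ≤ b ∧ b ≤ m) ∧ (1 ≤ c ∧ c ≤ m) ∧
    IsLumpyTie v m (ν 0) a ∧ IsLumpyTie v m (ν 1) b ∧ IsLumpyTie v m (ν 2) c ∧
    r = max (min a b) (min (max a b) c)

lemma seg_mono {V : Type} [DecidableEq V] (v : ℕ → V) {s t s' t' : ℕ}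
    (hs : s' ≤ s) (ht : t ≤ t') : segF v s t ⊆ segF v s' t' :=
  Finset.image_subset_image (Finset.Icc_subset_Icc hs ht)

lemma seg_left_split {V : Type} [DecidableEq V] (v : ℕ → V) {p : ℕ} (hp : 1 ≤ p) :
    segF v 1 (p - 1) ∪ {v p} = segF v 1 p := by
  have h : Finset.Icc 1 p = Finset.Icc 1 (p - 1) ∪ {p} := by
    ext x; simp [Finset.mem_Icc]; omega
  unfold segF
  rw [h, Finset.image_union, Finset.image_singleton]

lemma seg_right_split {V : Type} [DecidableEq V] (v : ℕ → V) {p m : ℕ} (hp : p ≤ m) :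
    segF v (p + 1) m ∪ {v p} = segF v p m := by
  have h : Finset.Icc p m = Finset.Icc (p + 1) m ∪ {p} := by
    ext x; simp [Finset.mem_Icc]; omega
  unfold segF
  rw [h, Finset.image_union, Finset.image_singleton]

lemma key_lemma {V : Type} [DecidableEq V] (m : ℕ) (v : ℕ → V)
    (hv : Set.InjOn v (Set.Icc 1 m))
    (νi νk : Finset V → ℝ)
    (hi : ∀ X Y : Finset V, X ⊆ Y → νi X ≤ νi Y)
    (hk : ∀ X Y : Finset V, X ⊆ Y → νk X ≤ νk Y)
    (r p q : ℕ) (hr1 : 1 ≤ r) (hrm : r ≤ m)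
    (hp1 : 1 ≤ p) (hqm : q ≤ m)
    (hti : IsLumpyTie v m νi p) (htk : IsLumpyTie v m νk q)
    (hpr : p ≤ r) (hrq : r ≤ q) :
    ∃ Ai Ak : Finset V,
        ((Ai = segF v 1 (r - 1) ∪ {v r} ∧ Ak = segF v (r + 1) m) ∨
         (Ai = segF v 1 (r - 1) ∧ Ak = segF v (r + 1) m ∪ {v r}) ∨
         (Ai = segF v (r + 1) m ∪ {v r} ∧ Ak = segF v 1 (r - 1)) ∨
         (Ai = segF v (r + 1) m ∧ Ak = segF v 1 (r - 1) ∪ {v r})) ∧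
        νi Ai ≥ νi (Ak \ {v r}) ∧
        νk Ak ≥ νk (Ai \ {v r}) ∧
        νi Ai ≥ νi (segF v 1 (r - 1)) ∧ νi Ai ≥ νi (segF v (r + 1) m) ∧
        νk Ak ≥ νk (segF v 1 (r - 1)) ∧ νk Ak ≥ νk (segF v (r + 1) m) := by
  set L := segF v 1 (r - 1) with hL
  set R := segF v (r + 1) m with hR
  -- v r is not in L nor R
  have hnL : v r ∉ L := by
    simp only [hL, segF, Finset.mem_image, Finset.mem_Icc, not_exists]
    rintro x ⟨⟨hx1, hx2⟩, hxe⟩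
    have := hv ⟨hx1, by omega⟩ ⟨hr1, hrm⟩ hxe
    omega
  have hnR : v r ∉ R := by
    simp only [hR, segF, Finset.mem_image, Finset.mem_Icc, not_exists]
    rintro x ⟨⟨hx1, hx2⟩, hxe⟩
    have := hv ⟨by omega, hx2⟩ ⟨hr1, hrm⟩ hxe
    omega
  have hLd : (L ∪ {v r}) \ {v r} = L := by
    ext x
    simp only [Finset.mem_sdiff, Finset.mem_union, Finset.mem_singleton]
    constructor
    · rintro ⟨h1 | h1, h2⟩ <;> tauto
    · intro hx; exact ⟨Or.inl hx, fun h => hnL (h ▸ hx)⟩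
  have hRd : (R ∪ {v r}) \ {v r} = R := by
    ext x
    simp only [Finset.mem_sdiff, Finset.mem_union, Finset.mem_singleton]
    constructor
    · rintro ⟨h1 | h1, h2⟩ <;> tauto
    · intro hx; exact ⟨Or.inl hx, fun h => hnR (h ▸ hx)⟩
  have hLd' : L \ {v r} = L := by
    rw [Finset.sdiff_singleton_eq_erase, Finset.erase_eq_of_notMem hnL]
  have hRd' : R \ {v r} = R := by
    rw [Finset.sdiff_singleton_eq_erase, Finset.erase_eq_of_notMem hnR]
  -- key inequality for i : νi (L ∪ {v r}) ≥ νi R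
  have hαi : νi (L ∪ {v r}) ≥ νi R := by
    have h1 := hti.1
    rw [seg_left_split v hp1] at h1
    have h2 : νi (L ∪ {v r}) ≥ νi (segF v 1 p) := by
      rw [hL, seg_left_split v hr1]
      exact hi _ _ (seg_mono v le_rfl (by omega))
    have h3 : νi (segF v (p + 1) m) ≥ νi R := by
      exact hi _ _ (seg_mono v (by omega) le_rfl)
    linarith
  -- key inequality for k : νk (R ∪ {v r}) ≥ νk L
  have hβk : νk (R ∪ {v r}) ≥ νk L := by
    have h1 := htk.2
    rw [seg_right_split v hqm] at h1
    have h2 : νk (R ∪ {v r}) ≥ νk (segF v q m) := by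
      rw [hR, seg_right_split v hrm]
      exact hk _ _ (seg_mono v (by omega) le_rfl)
    have h3 : νk (segF v 1 (q - 1)) ≥ νk L := by
      exact hk _ _ (seg_mono v le_rfl (by omega))
    linarith
  have hmiL : νi (L ∪ {v r}) ≥ νi L := hi _ _ (Finset.subset_union_left)
  have hmkR : νk (R ∪ {v r}) ≥ νk R := hk _ _ (Finset.subset_union_left)
  rcases le_total (νk L) (νk R) with h | h
  · -- i gets L ∪ {v r}, k gets R
    refine ⟨L ∪ {v r}, R, Or.inl ⟨rfl, rfl⟩, ?_, ?_, hmiL, hαi, h, le_rfl⟩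
    · rw [hRd']; exact hαi
    · rw [hLd]; exact h
  · rcases le_total (νi L) (νi R) with h2 | h2
    · -- i gets R, k gets L ∪ {v r}
      have hkL : νk (L ∪ {v r}) ≥ νk L := hk _ _ (Finset.subset_union_left)
      refine ⟨R, L ∪ {v r}, Or.inr (Or.inr (Or.inr ⟨rfl, rfl⟩)), ?_, ?_, h2, le_rfl,
        hkL, by linarith⟩
      · rw [hLd]; exact h2
      · rw [hRd']; linarith
    · -- i gets L, k gets R ∪ {v r}
      refine ⟨L, R ∪ {v r}, Or.inr (Or.inl ⟨rfl, rfl⟩), ?_, ?_, le_rfl, h2, hβk, hmkR⟩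
      · rw [hRd]; exact h2
      · rw [hLd']; exact hβk

lemma key_lemma' {V : Type} [DecidableEq V] (m : ℕ) (v : ℕ → V)
    (hv : Set.InjOn v (Set.Icc 1 m))
    (νi νk : Finset V → ℝ)
    (hi : ∀ X Y : Finset V, X ⊆ Y → νi X ≤ νi Y)
    (hk : ∀ X Y : Finset V, X ⊆ Y → νk X ≤ νk Y)
    (r p q : ℕ) (hr1 : 1 ≤ r) (hrm : r ≤ m)
    (hp1 : 1 ≤ p) (hpm : p ≤ m) (hq1 : 1 ≤ q) (hqm : q ≤ m)
    (hti : IsLumpyTie v m νi p) (htk : IsLumpyTie v m νk q)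
    (hmed : (p ≤ r ∧ r ≤ q) ∨ (q ≤ r ∧ r ≤ p)) :
    ∃ Ai Ak : Finset V,
        ((Ai = segF v 1 (r - 1) ∪ {v r} ∧ Ak = segF v (r + 1) m) ∨
         (Ai = segF v 1 (r - 1) ∧ Ak = segF v (r + 1) m ∪ {v r}) ∨
         (Ai = segF v (r + 1) m ∪ {v r} ∧ Ak = segF v 1 (r - 1)) ∨
         (Ai = segF v (r + 1) m ∧ Ak = segF v 1 (r - 1) ∪ {v r})) ∧
        νi Ai ≥ νi (Ak \ {v r}) ∧
        νk Ak ≥ νk (Ai \ {v r}) ∧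
        νi Ai ≥ νi (segF v 1 (r - 1)) ∧ νi Ai ≥ νi (segF v (r + 1) m) ∧
        νk Ak ≥ νk (segF v 1 (r - 1)) ∧ νk Ak ≥ νk (segF v (r + 1) m) := by
  rcases hmed with ⟨h1, h2⟩ | ⟨h1, h2⟩
  · exact key_lemma m v hv νi νk hi hk r p q hr1 hrm hp1 hqm hti htk h1 h2
  · obtain ⟨Ak, Ai, hd, e1, e2, e3, e4, e5, e6⟩ :=
      key_lemma m v hv νk νi hk hi r q p hr1 hrm hq1 hpm htk hti h1 h2
    exact ⟨Ai, Ak, by tauto, e2, e1, e5, e6, e3, e4⟩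

/-- Median Lumpy Ties Lemma. If `v r` is a median lumpy tie for three agents with
monotone valuations, then for every pair `{i, k}` of the agents there is an allocation
of all items `v 1, …, v m` to `i` and `k` — one of them getting `L(v_r) ∪ {v_r}` and the
other `R(v_r)`, or one getting `L(v_r)` and the other `R(v_r) ∪ {v_r}` — which is
envy-free up to `{v r}`, and in which each of the two agents values their own bundle at
least as much as each of the bundles `L(v_r)` and `R(v_r)`. -/
theorem stmt_11 {V : Type} [DecidableEq V] (m : ℕ) (v : ℕ → V)
    (hv : Set.InjOn v (Set.Icc 1 m))
    (ν : Fin 3 → Finset V → ℝ)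
    (hν : ∀ i, ν i ∅ = 0 ∧ ∀ X Y : Finset V, X ⊆ Y → ν i X ≤ ν i Y)
    (r : ℕ) (hr1 : 1 ≤ r) (hrm : r ≤ m)
    (hmed : IsMedianLumpyTie v m ν r) :
    ∀ i k : Fin 3, i ≠ k →
      ∃ Ai Ak : Finset V,
        ((Ai = segF v 1 (r - 1) ∪ {v r} ∧ Ak = segF v (r + 1) m) ∨
         (Ai = segF v 1 (r - 1) ∧ Ak = segF v (r + 1) m ∪ {v r}) ∨
         (Ai = segF v (r + 1) m ∪ {v r} ∧ Ak = segF v 1 (r - 1)) ∨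
         (Ai = segF v (r + 1) m ∧ Ak = segF v 1 (r - 1) ∪ {v r})) ∧
        ν i Ai ≥ ν i (Ak \ {v r}) ∧
        ν k Ak ≥ ν k (Ai \ {v r}) ∧
        ν i Ai ≥ ν i (segF v 1 (r - 1)) ∧ ν i Ai ≥ ν i (segF v (r + 1) m) ∧
        ν k Ak ≥ ν k (segF v 1 (r - 1)) ∧ ν k Ak ≥ ν k (segF v (r + 1) m) := by
  obtain ⟨a, b, c, ⟨ha1, ham⟩, ⟨hb1, hbm⟩, ⟨hc1, hcm⟩, hta, htb, htc, hrdef⟩ := hmed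
  intro i k hik
  fin_cases i <;> fin_cases k <;> first
    | exact absurd rfl hik
    | exact key_lemma' m v hv _ _ (hν 0).2 (hν 1).2 r a b hr1 hrm ha1 ham hb1 hbm
        hta htb (by omega)
    | exact key_lemma' m v hv _ _ (hν 0).2 (hν 2).2 r a c hr1 hrm ha1 ham hc1 hcm
        hta htc (by omega)
    | exact key_lemma' m v hv _ _ (hν 1).2 (hν 0).2 r b a hr1 hrm hb1 hbm ha1 ham
        htb hta (by omega)
    | exact key_lemma' m v hv _ _ (hν 1).2 (hν 2).2 r b c hr1 hrm hb1 hbm hc1 hcm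
        htb htc (by omega)
    | exact key_lemma' m v hv _ _ (hν 2).2 (hν 0).2 r c a hr1 hrm hc1 hcm ha1 ham
        htc hta (by omega)
    | exact key_lemma' m v hv _ _ (hν 2).2 (hν 1).2 r c b hr1 hrm hc1 hcm hb1 hbm
        htc htb (by omega)
end

section
/- Let three agents have monotone valuations over the items of an enumeration P = (v₁,…,v_m), and suppose v_r is a median lumpy tie over P. Call agent i a left agent (respectively, right agent) with respect to v_r if every lumpy tie for i appears strictly before (respectively, strictly after) v_r, and a middle agent if v_r is itself a lumpy tie for i. Then at most one of the three agents is a left agent, at most one is a right agent, and at least one is a middle agent. -/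
/-- Agent `i` is a left agent with respect to `v r`: every lumpy tie of `i` appears
strictly before `v r`. -/
def LeftAgent {V : Type} [DecidableEq V] (v : ℕ → V) (m : ℕ) (ν : Finset V → ℝ)
    (r : ℕ) : Prop :=
  ∀ a : ℕ, 1 ≤ a → a ≤ m → IsLumpyTie v m ν a → a < r

/-- Agent `i` is a right agent with respect to `v r`: every lumpy tie of `i` appears
strictly after `v r`. -/
def RightAgent {V : Type} [DecidableEq V] (v : ℕ → V) (m : ℕ) (ν : Finset V → ℝ)
    (r : ℕ) : Prop :=
  ∀ a : ℕ, 1 ≤ a → a ≤ m → IsLumpyTie v m ν a → r < a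

/-- If `v r` is a median lumpy tie for three agents with monotone valuations, then at
most one agent is a left agent, at most one is a right agent, and at least one agent is
a middle agent (i.e. has `v r` as a lumpy tie). -/
theorem stmt_13 {V : Type} [DecidableEq V] (m : ℕ) (v : ℕ → V)
    (hv : Set.InjOn v (Set.Icc 1 m))
    (ν : Fin 3 → Finset V → ℝ)
    (hν : ∀ i, ν i ∅ = 0 ∧ ∀ X Y : Finset V, X ⊆ Y → ν i X ≤ ν i Y)
    (r : ℕ) (hr1 : 1 ≤ r) (hrm : r ≤ m)
    (hmed : IsMedianLumpyTie v m ν r) :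
    (∀ i j : Fin 3, LeftAgent v m (ν i) r → LeftAgent v m (ν j) r → i = j) ∧
    (∀ i j : Fin 3, RightAgent v m (ν i) r → RightAgent v m (ν j) r → i = j) ∧
    (∃ i : Fin 3, IsLumpyTie v m (ν i) r) := by
  obtain ⟨a, b, c, ha, hb, hc, hta, htb, htc, hreq⟩ := hmed
  have hL0 : LeftAgent v m (ν 0) r → a < r := fun H => H a ha.1 ha.2 hta
  have hL1 : LeftAgent v m (ν 1) r → b < r := fun H => H b hb.1 hb.2 htb
  have hL2 : LeftAgent v m (ν 2) r → c < r := fun H => H c hc.1 hc.2 htc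
  have hR0 : RightAgent v m (ν 0) r → r < a := fun H => H a ha.1 ha.2 hta
  have hR1 : RightAgent v m (ν 1) r → r < b := fun H => H b hb.1 hb.2 htb
  have hR2 : RightAgent v m (ν 2) r → r < c := fun H => H c hc.1 hc.2 htc
  have hmem : r = a ∨ r = b ∨ r = c := by omega
  refine ⟨?_, ?_, ?_⟩
  · intro i j hi hj
    fin_cases i <;> fin_cases j <;>
      first
        | rfl
        | (exfalso
           <;> first
             | exact absurd hreq (by have := hL0 hi; have := hL1 hj; omega)
             | exact absurd hreq (by have := hL0 hi; have := hL2 hj; omega)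
             | exact absurd hreq (by have := hL1 hi; have := hL0 hj; omega)
             | exact absurd hreq (by have := hL1 hi; have := hL2 hj; omega)
             | exact absurd hreq (by have := hL2 hi; have := hL0 hj; omega)
             | exact absurd hreq (by have := hL2 hi; have := hL1 hj; omega))
  · intro i j hi hj
    fin_cases i <;> fin_cases j <;>
      first
        | rfl
        | (exfalso
           <;> first
             | exact absurd hreq (by have := hR0 hi; have := hR1 hj; omega)
             | exact absurd hreq (by have := hR0 hi; have := hR2 hj; omega)
             | exact absurd hreq (by have := hR1 hi; have := hR0 hj; omega)
             | exact absurd hreq (by have := hR1 hi; have := hR2 hj; omega)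
             | exact absurd hreq (by have := hR2 hi; have := hR0 hj; omega)
             | exact absurd hreq (by have := hR2 hi; have := hR1 hj; omega))
  · rcases hmem with h | h | h
    · exact ⟨0, h ▸ hta⟩
    · exact ⟨1, h ▸ htb⟩
    · exact ⟨2, h ▸ htc⟩
end

section
/- Let G' be a finite simple graph with a handle decomposition (X, G''): G'' is a subgraph of G', X = (u₁,…,u_k) is a path in G' none of whose vertices lies in G'', and V(G') = V(G'') ∪ V(X). Suppose Y = (w₁,…,w_p) is a bipolar numbering of G'' and the last vertex u_k of X is adjacent in G' to the first vertex w₁ of Y. Then the concatenated enumeration (u₁,…,u_k,w₁,…,w_p) is a bipolar numbering of G'. -/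
section Aux
variable {V : Type} 

lemma aux_induce_mono_conn {H G : SimpleGraph V} (h : H ≤ G) {s : Set V}
    (hc : (H.induce s).Connected) : (G.induce s).Connected :=
  hc.mono (fun a b hab => h hab)

lemma aux_induce_singleton_conn (G : SimpleGraph V) (v : V) :
    (G.induce {v}).Connected := by
  haveI : Nonempty ({v} : Set V) := ⟨⟨v, rfl⟩⟩
  constructor
  rintro ⟨a, ha⟩ ⟨b, hb⟩
  simp only [Set.mem_singleton_iff] at ha hb
  subst ha; subst hb
  exact SimpleGraph.Reachable.refl _

lemma aux_path_conn (G : SimpleGraph V) (k : ℕ) (u : Fin k → V)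
    (hu : ∀ (i : ℕ) (h : i + 1 < k), G.Adj (u ⟨i, by omega⟩) (u ⟨i + 1, h⟩))
    (a : ℕ) : ∀ b : ℕ, a ≤ b → ∀ (hb : b < k),
    (G.induce (u '' {i | a ≤ (i : ℕ) ∧ (i : ℕ) ≤ b})).Connected := by
  intro b hab
  induction b, hab using Nat.le_induction with
  | base =>
    intro hb
    have : (u '' {i | a ≤ (i : ℕ) ∧ (i : ℕ) ≤ a}) = {u ⟨a, hb⟩} := by
      ext x
      constructor
      · rintro ⟨i, ⟨h1, h2⟩, rfl⟩
        have : i = ⟨a, hb⟩ := Fin.ext (show (i:ℕ) = a by omega)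
        simp [this]
      · rintro rfl
        exact ⟨⟨a, hb⟩, ⟨le_refl _, le_refl _⟩, rfl⟩
    rw [this]
    exact aux_induce_singleton_conn G _
  | succ b hab ih =>
    intro hb
    have hbk : b < k := by omega
    have hset : (u '' {i | a ≤ (i : ℕ) ∧ (i : ℕ) ≤ b + 1}) =
        (u '' {i | a ≤ (i : ℕ) ∧ (i : ℕ) ≤ b}) ∪ {u ⟨b + 1, hb⟩} := by
      ext x
      constructor
      · rintro ⟨i, ⟨h1, h2⟩, rfl⟩
        rcases Nat.lt_or_ge (i : ℕ) (b + 1) with h | h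
        · exact Or.inl ⟨i, ⟨h1, by omega⟩, rfl⟩
        · have : i = ⟨b + 1, hb⟩ := Fin.ext (show (i:ℕ) = b + 1 by omega)
          exact Or.inr (by rw [this]; rfl)
      · rintro (⟨i, ⟨h1, h2⟩, rfl⟩ | h)
        · exact ⟨i, ⟨h1, by omega⟩, rfl⟩
        · exact ⟨⟨b + 1, hb⟩, ⟨by simpa using hab.trans (Nat.le_succ b), le_refl _⟩, h.symm⟩
    rw [hset]
    exact SimpleGraph.connected_induce_union (ih hbk).preconnected
      (aux_induce_singleton_conn G _).preconnected
      ⟨⟨b, hbk⟩, ⟨hab, le_refl _⟩, rfl⟩ rfl (hu b hb)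

end Aux

/-- If a graph `G'` has a handle decomposition `(X, G'')` — `G''` a subgraph of `G'`
with vertex set `W`, `X = (u 0, …, u (k-1))` a path in `G'` avoiding `W`, and every
vertex of `G'` in `W` or on `X` — and `Y = (w 0, …, w (q-1))` is a bipolar numbering of
`G''` whose first vertex is adjacent in `G'` to the last vertex of `X`, then the
concatenation `Fin.append u w` is a bipolar numbering of `G'`. -/
theorem stmt_14 {V : Type} [Fintype V] (G' : SimpleGraph V)
    (H : SimpleGraph V) (W : Set V)
    (hHle : H ≤ G')
    (hHW : ∀ x y : V, H.Adj x y → x ∈ W ∧ y ∈ W)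
    (k q : ℕ) (hk : 1 ≤ k) (hq : 1 ≤ q)
    (u : Fin k → V) (w : Fin q → V)
    (hu_inj : Function.Injective u)
    (hu_adj : ∀ (i : ℕ) (h : i + 1 < k), G'.Adj (u ⟨i, by omega⟩) (u ⟨i + 1, h⟩))
    (hXW : ∀ i, u i ∉ W)
    (hcover : ∀ x : V, x ∈ W ∨ ∃ i, u i = x)
    (hw_inj : Function.Injective w)
    (hw_range : Set.range w = W)
    (hbip : ∀ j : Fin q,
      (H.induce (w '' {i | i ≤ j})).Connected ∧ (H.induce (w '' {i | j ≤ i})).Connected)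
    (hadj : G'.Adj (u ⟨k - 1, by omega⟩) (w ⟨0, by omega⟩)) :
    Function.Bijective (Fin.append u w) ∧
    ∀ j : Fin (k + q),
      (G'.induce (Fin.append u w '' {i | i ≤ j})).Connected ∧
      (G'.induce (Fin.append u w '' {i | j ≤ i})).Connected := by
  have happ : ∀ (a : Fin (k + q)) (h : (a : ℕ) < k), Fin.append u w a = u ⟨a, h⟩ := by
    intro a h
    have : a = Fin.castAdd q ⟨(a : ℕ), h⟩ := Fin.ext rfl
    conv_lhs => rw [this]
    rw [Fin.append_left]
  have happ2 : ∀ (a : Fin (k + q)) (h : k ≤ (a : ℕ)),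
      Fin.append u w a = w ⟨(a : ℕ) - k, by omega⟩ := by
    intro a h
    have : a = Fin.natAdd k ⟨(a : ℕ) - k, by omega⟩ := Fin.ext (by simp; omega)
    conv_lhs => rw [this]
    rw [Fin.append_right]
  have hwW : ∀ i, w i ∈ W := fun i => hw_range ▸ Set.mem_range_self i
  have hne : ∀ i j, u i ≠ w j := fun i j h => hXW i (h ▸ hwW j)
  -- the connected w-range
  have hwconn : (G'.induce (Set.range w)).Connected := by
    have h0 := (hbip ⟨0, by omega⟩).2
    have : w '' {i | (⟨0, by omega⟩ : Fin q) ≤ i} = Set.range w := by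
      ext x
      simp [Fin.le_def]
    rw [this] at h0
    exact aux_induce_mono_conn hHle h0
  have hrange_u : Set.range u = u '' {i : Fin k | 0 ≤ (i : ℕ) ∧ (i : ℕ) ≤ k - 1} := by
    ext x
    simp only [Set.mem_range, Set.mem_image, Set.mem_setOf_eq]
    constructor
    · rintro ⟨i, rfl⟩
      exact ⟨i, ⟨Nat.zero_le _, by have := i.isLt; omega⟩, rfl⟩
    · rintro ⟨i, _, rfl⟩
      exact ⟨i, rfl⟩
  refine ⟨⟨?_, ?_⟩, ?_⟩
  · -- injective
    intro a b hab
    rcases Nat.lt_or_ge (a : ℕ) k with ha | ha <;> rcases Nat.lt_or_ge (b : ℕ) k with hb | hb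
    · rw [happ a ha, happ b hb] at hab
      have h2 : (⟨(a : ℕ), ha⟩ : Fin k) = ⟨(b : ℕ), hb⟩ := hu_inj hab
      rw [Fin.mk.injEq] at h2
      exact Fin.ext h2
    · rw [happ a ha, happ2 b hb] at hab
      exact absurd hab (hne _ _)
    · rw [happ2 a ha, happ b hb] at hab
      exact absurd hab.symm (hne _ _)
    · rw [happ2 a ha, happ2 b hb] at hab
      have := congrArg Fin.val (hw_inj hab)
      simp only at this
      exact Fin.ext (by omega)
  · -- surjective
    intro x
    rcases hcover x with hx | ⟨i, hi⟩
    · rw [← hw_range] at hx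
      obtain ⟨i, hi⟩ := hx
      exact ⟨Fin.natAdd k i, by rw [Fin.append_right]; exact hi⟩
    · exact ⟨Fin.castAdd q i, by rw [Fin.append_left]; exact hi⟩
  · intro j
    rcases Nat.lt_or_ge (j : ℕ) k with hj | hj
    · -- j is in the u-part
      constructor
      · -- prefix: just an initial segment of the path
        have h1 : Fin.append u w '' {i | i ≤ j}
            = u '' {i : Fin k | 0 ≤ (i : ℕ) ∧ (i : ℕ) ≤ (j : ℕ)} := by
          ext x
          simp only [Set.mem_image, Set.mem_setOf_eq]
          constructor
          · rintro ⟨i, hi, rfl⟩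
            rw [Fin.le_def] at hi
            have hik : (i : ℕ) < k := lt_of_le_of_lt hi hj
            exact ⟨⟨i, hik⟩, ⟨Nat.zero_le _, hi⟩, (happ i hik).symm⟩
          · rintro ⟨i, ⟨_, hij⟩, rfl⟩
            refine ⟨⟨(i : ℕ), by omega⟩, by rw [Fin.le_def]; exact hij, ?_⟩
            rw [happ ⟨(i : ℕ), by omega⟩ (by exact i.isLt)]
        rw [h1]
        exact aux_path_conn G' k u hu_adj 0 (j : ℕ) (Nat.zero_le _) hj
      · -- suffix: tail of the path glued with all of w
        have h2 : Fin.append u w '' {i | j ≤ i}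
            = u '' {i : Fin k | (j : ℕ) ≤ (i : ℕ) ∧ (i : ℕ) ≤ k - 1} ∪ Set.range w := by
          ext x
          simp only [Set.mem_image, Set.mem_union, Set.mem_setOf_eq, Set.mem_range]
          constructor
          · rintro ⟨i, hi, rfl⟩
            rw [Fin.le_def] at hi
            rcases Nat.lt_or_ge (i : ℕ) k with hik | hik
            · exact Or.inl ⟨⟨i, hik⟩, ⟨hi, by omega⟩, (happ i hik).symm⟩
            · exact Or.inr ⟨⟨(i : ℕ) - k, by have := i.isLt; omega⟩, (happ2 i hik).symm⟩
          · rintro (⟨i, ⟨hji, _⟩, rfl⟩ | ⟨m, rfl⟩)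
            · refine ⟨⟨(i : ℕ), by omega⟩, by rw [Fin.le_def]; exact hji, ?_⟩
              rw [happ ⟨(i : ℕ), by omega⟩ (by exact i.isLt)]
            · refine ⟨⟨k + (m : ℕ), by have := m.isLt; omega⟩,
                by rw [Fin.le_def]; show (j : ℕ) ≤ k + (m : ℕ); omega, ?_⟩
              rw [happ2 ⟨k + (m : ℕ), by have := m.isLt; omega⟩ (by show k ≤ k + (m : ℕ); omega)]
              exact congrArg w (Fin.ext (by show k + (m : ℕ) - k = (m : ℕ); omega))
        rw [h2]
        exact SimpleGraph.connected_induce_union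
          (aux_path_conn G' k u hu_adj (j : ℕ) (k - 1) (by omega) (by omega)).preconnected
          hwconn.preconnected
          ⟨⟨k - 1, by omega⟩, ⟨by show (j : ℕ) ≤ k - 1; omega, le_refl _⟩, rfl⟩
          ⟨⟨0, by omega⟩, rfl⟩ hadj
    · -- j is in the w-part
      constructor
      · -- prefix: all of u glued with initial segment of w
        have h1 : Fin.append u w '' {i | i ≤ j}
            = Set.range u ∪ w '' {i : Fin q | (i : ℕ) ≤ (j : ℕ) - k} := by
          ext x
          simp only [Set.mem_image, Set.mem_union, Set.mem_setOf_eq, Set.mem_range]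
          constructor
          · rintro ⟨i, hi, rfl⟩
            rw [Fin.le_def] at hi
            rcases Nat.lt_or_ge (i : ℕ) k with hik | hik
            · exact Or.inl ⟨⟨i, hik⟩, (happ i hik).symm⟩
            · exact Or.inr ⟨⟨(i : ℕ) - k, by have := i.isLt; omega⟩,
                by show (i : ℕ) - k ≤ (j : ℕ) - k; omega, (happ2 i hik).symm⟩
          · rintro (⟨i, rfl⟩ | ⟨m, hm, rfl⟩)
            · refine ⟨⟨(i : ℕ), by have := i.isLt; omega⟩,
                by rw [Fin.le_def]; show (i : ℕ) ≤ (j : ℕ); have := i.isLt; omega, ?_⟩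
              rw [happ ⟨(i : ℕ), by have := i.isLt; omega⟩ (by exact i.isLt)]
            · refine ⟨⟨k + (m : ℕ), by have := m.isLt; omega⟩,
                by rw [Fin.le_def]; show k + (m : ℕ) ≤ (j : ℕ); have := j.isLt; omega, ?_⟩
              rw [happ2 ⟨k + (m : ℕ), by have := m.isLt; omega⟩ (by show k ≤ k + (m : ℕ); omega)]
              exact congrArg w (Fin.ext (by show k + (m : ℕ) - k = (m : ℕ); omega))
        have hwpre : (G'.induce (w '' {i : Fin q | (i : ℕ) ≤ (j : ℕ) - k})).Connected := by
          have h0 := (hbip ⟨(j : ℕ) - k, by have := j.isLt; omega⟩).1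
          have hset : w '' {i | i ≤ (⟨(j : ℕ) - k, by have := j.isLt; omega⟩ : Fin q)}
              = w '' {i : Fin q | (i : ℕ) ≤ (j : ℕ) - k} := by
            apply congrArg
            ext i
            simp [Fin.le_def]
          rw [hset] at h0
          exact aux_induce_mono_conn hHle h0
        rw [h1]
        rw [hrange_u]
        exact SimpleGraph.connected_induce_union
          (aux_path_conn G' k u hu_adj 0 (k - 1) (Nat.zero_le _) (by omega)).preconnected
          hwpre.preconnected
          ⟨⟨k - 1, by omega⟩, ⟨Nat.zero_le _, le_refl _⟩, rfl⟩
          ⟨⟨0, by omega⟩, by show 0 ≤ (j : ℕ) - k; omega, rfl⟩ hadj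
      · -- suffix: a final segment of w
        have h2 : Fin.append u w '' {i | j ≤ i}
            = w '' {i : Fin q | (j : ℕ) - k ≤ (i : ℕ)} := by
          ext x
          simp only [Set.mem_image, Set.mem_setOf_eq]
          constructor
          · rintro ⟨i, hi, rfl⟩
            rw [Fin.le_def] at hi
            have hik : k ≤ (i : ℕ) := le_trans hj hi
            exact ⟨⟨(i : ℕ) - k, by have := i.isLt; omega⟩,
              by show (j : ℕ) - k ≤ (i : ℕ) - k; omega, (happ2 i hik).symm⟩
          · rintro ⟨m, hm, rfl⟩
            refine ⟨⟨k + (m : ℕ), by have := m.isLt; omega⟩,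
              by rw [Fin.le_def]; show (j : ℕ) ≤ k + (m : ℕ); omega, ?_⟩
            rw [happ2 ⟨k + (m : ℕ), by have := m.isLt; omega⟩ (by show k ≤ k + (m : ℕ); omega)]
            exact congrArg w (Fin.ext (by show k + (m : ℕ) - k = (m : ℕ); omega))
        have h0 := (hbip ⟨(j : ℕ) - k, by have := j.isLt; omega⟩).2
        have hset : w '' {i | (⟨(j : ℕ) - k, by have := j.isLt; omega⟩ : Fin q) ≤ i}
            = w '' {i : Fin q | (j : ℕ) - k ≤ (i : ℕ)} := by
          apply congrArg
          ext i
          simp [Fin.le_def]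
        rw [h2]
        rw [hset] at h0
        exact aux_induce_mono_conn hHle h0
end

section
/- Let G = (V,E) be a finite connected simple graph that admits a bipolar numbering. Then for any two monotone valuations ν₁, ν₂ on subsets of V there exists a contiguous allocation (A₁, A₂) of V to the two agents that is envy-free up to one outer good (EF1_outer). -/
/-- A (possibly empty) set of vertices induces a connected subgraph. -/
def PieceConnected {V : Type} (G : SimpleGraph V) (s : Finset V) : Prop :=
  (G.induce (↑s : Set V)).Preconnected

/-- An allocation is envy-free up to `k` outer goods. -/
def EFkOuter {V : Type} [DecidableEq V] (G : SimpleGraph V) (k : ℕ) {n : ℕ}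
    (ν : Fin n → Finset V → ℝ) (A : Fin n → Finset V) : Prop :=
  ∀ i j, i ≠ j → ∃ S : Finset V, S ⊆ A j ∧ S.card ≤ k ∧
    PieceConnected G (A j \ S) ∧ ν i (A i) ≥ ν i (A j \ S)

/-- `G` admits a bipolar numbering: an enumeration of its vertices all of whose initial
and final segments induce connected subgraphs. -/
def HasBipolarNumbering {V : Type} (G : SimpleGraph V) : Prop :=
  ∃ (k : ℕ) (v : Fin k → V), Function.Bijective v ∧
    ∀ j : Fin k,
      (G.induce (v '' {i | i ≤ j})).Connected ∧ (G.induce (v '' {i | j ≤ i})).Connected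

lemma pieceConnected_empty {V : Type} (G : SimpleGraph V) :
    PieceConnected G (∅ : Finset V) := by
  rintro ⟨a, ha⟩
  simp at ha

lemma pairwise_fin_two {V : Type} (A : Fin 2 → Finset V)
    (h : Disjoint (A 0) (A 1)) : Pairwise fun i j => Disjoint (A i) (A j) := by
  intro i j hij
  fin_cases i <;> fin_cases j <;> simp_all <;> exact h.symm

/-- A finite connected graph admitting a bipolar numbering guarantees contiguous
EF1-outer allocations for two agents with monotone valuations. -/
theorem stmt_17 {V : Type} [Fintype V] [DecidableEq V] (G : SimpleGraph V)
    (hconn : G.Connected) (hbip : HasBipolarNumbering G)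
    (ν : Fin 2 → Finset V → ℝ)
    (hν : ∀ i, ν i ∅ = 0 ∧ ∀ X Y : Finset V, X ⊆ Y → ν i X ≤ ν i Y) :
    ∃ A : Fin 2 → Finset V,
      (Pairwise fun i j => Disjoint (A i) (A j)) ∧
      Finset.univ.biUnion A = Finset.univ ∧
      (∀ i, PieceConnected G (A i)) ∧
      EFkOuter G 1 ν A := by
  classical
  obtain ⟨k, v, hbij, hseg⟩ := hbip
  have hinj := hbij.injective
  set P : ℕ → Finset V := fun t => (Finset.univ.filter fun i : Fin k => (i : ℕ) < t).image v
    with hPdef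
  set Q : ℕ → Finset V := fun t => (Finset.univ.filter fun i : Fin k => t ≤ (i : ℕ)).image v
    with hQdef
  have hmemP : ∀ (t : ℕ) (x : V), x ∈ P t ↔ ∃ i : Fin k, (i : ℕ) < t ∧ v i = x := by
    intro t x; simp [hPdef, Finset.mem_image, Finset.mem_filter, and_comm]
  have hmemQ : ∀ (t : ℕ) (x : V), x ∈ Q t ↔ ∃ i : Fin k, t ≤ (i : ℕ) ∧ v i = x := by
    intro t x; simp [hQdef, Finset.mem_image, Finset.mem_filter, and_comm]
  have hdisj : ∀ t, Disjoint (P t) (Q t) := by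
    intro t
    rw [Finset.disjoint_left]
    intro x hx hy
    obtain ⟨i, hi, rfl⟩ := (hmemP t x).1 hx
    obtain ⟨j, hj, hji⟩ := (hmemQ t _).1 hy
    have : j = i := hinj hji
    omega
  have hunion : ∀ t, P t ∪ Q t = Finset.univ := by
    intro t
    ext x
    obtain ⟨i, rfl⟩ := hbij.surjective x
    simp only [Finset.mem_union, hmemP, hmemQ, Finset.mem_univ, iff_true]
    rcases lt_or_ge (i : ℕ) t with h | h
    · exact Or.inl ⟨i, h, rfl⟩
    · exact Or.inr ⟨i, h, rfl⟩
  have hP0 : P 0 = ∅ := by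
    ext x; simp [hmemP]
  have hQbig : ∀ t, k ≤ t → Q t = ∅ := by
    intro t ht; ext x
    simp only [hmemQ, Finset.notMem_empty, iff_false]
    rintro ⟨i, hi, -⟩
    have := i.isLt; omega
  -- connectivity of prefixes and suffixes
  have hPc : ∀ t, t ≤ k → PieceConnected G (P t) := by
    intro t ht
    rcases Nat.eq_zero_or_pos t with h0 | h1
    · rw [h0, hP0]; exact pieceConnected_empty G
    · have hk : t - 1 < k := by omega
      have hset : (↑(P t) : Set V) = v '' {i : Fin k | i ≤ ⟨t - 1, hk⟩} := by
        ext x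
        simp only [Finset.mem_coe, hmemP, Set.mem_image, Set.mem_setOf_eq, Fin.le_def]
        constructor
        · rintro ⟨i, hi, rfl⟩; exact ⟨i, by omega, rfl⟩
        · rintro ⟨i, hi, rfl⟩; exact ⟨i, by simpa using by omega, rfl⟩
      unfold PieceConnected
      rw [hset]
      exact (hseg ⟨t - 1, hk⟩).1.preconnected
  have hQc : ∀ t, t ≤ k → PieceConnected G (Q t) := by
    intro t ht
    rcases eq_or_lt_of_le ht with h0 | h1
    · rw [hQbig t (le_of_eq h0.symm)]; exact pieceConnected_empty G
    · have hset : (↑(Q t) : Set V) = v '' {i : Fin k | (⟨t, h1⟩ : Fin k) ≤ i} := by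
        ext x
        simp only [Finset.mem_coe, hmemQ, Set.mem_image, Set.mem_setOf_eq, Fin.le_def]
      unfold PieceConnected
      rw [hset]
      exact (hseg ⟨t, h1⟩).2.preconnected
  -- removal lemmas
  have hQsucc : ∀ (t : ℕ) (ht : t < k), Q t \ {v ⟨t, ht⟩} = Q (t + 1) := by
    intro t ht
    ext x
    simp only [Finset.mem_sdiff, hmemQ, Finset.mem_singleton]
    constructor
    · rintro ⟨⟨i, hi, rfl⟩, hne⟩
      refine ⟨i, ?_, rfl⟩
      have : i ≠ ⟨t, ht⟩ := fun h => hne (by rw [h])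
      have : (i : ℕ) ≠ t := fun h => this (Fin.ext h)
      omega
    · rintro ⟨i, hi, rfl⟩
      refine ⟨⟨i, by omega, rfl⟩, fun h => ?_⟩
      have : i = ⟨t, ht⟩ := hinj h
      have : (i : ℕ) = t := by rw [this]
      omega
  have hPpred : ∀ (t : ℕ) (ht : t < k), P (t + 1) \ {v ⟨t, ht⟩} = P t := by
    intro t ht
    ext x
    simp only [Finset.mem_sdiff, hmemP, Finset.mem_singleton]
    constructor
    · rintro ⟨⟨i, hi, rfl⟩, hne⟩
      refine ⟨i, ?_, rfl⟩
      have : i ≠ ⟨t, ht⟩ := fun h => hne (by rw [h])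
      have : (i : ℕ) ≠ t := fun h => this (Fin.ext h)
      omega
    · rintro ⟨i, hi, rfl⟩
      refine ⟨⟨i, by omega, rfl⟩, fun h => ?_⟩
      have : i = ⟨t, ht⟩ := hinj h
      have : (i : ℕ) = t := by rw [this]
      omega
  have hvQ : ∀ (t : ℕ) (ht : t < k), v ⟨t, ht⟩ ∈ Q t := by
    intro t ht; exact (hmemQ t _).2 ⟨⟨t, ht⟩, le_refl t, rfl⟩
  have hvP : ∀ (t : ℕ) (ht : t < k), v ⟨t, ht⟩ ∈ P (t + 1) := by
    intro t ht; exact (hmemP _ _).2 ⟨⟨t, ht⟩, Nat.lt_succ_self t, rfl⟩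
  have hmono : ∀ (i : Fin 2) (X Y : Finset V), X ⊆ Y → ν i X ≤ ν i Y := fun i => (hν i).2
  -- the cut point
  set C : ℕ → Prop := fun t => ν 0 (Q (t + 1)) ≤ ν 0 (P t) with hCdef
  have hCk : C k := by
    rw [hCdef]
    simp only
    rw [hQbig (k + 1) (by omega)]
    exact hmono 0 ∅ (P k) (Finset.empty_subset _)
  have hCdec : DecidablePred C := fun _ => Classical.dec _
  set t₀ : ℕ := @Nat.find C hCdec ⟨k, hCk⟩ with ht₀def
  have hC : C t₀ := @Nat.find_spec C hCdec ⟨k, hCk⟩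
  have hmin : ∀ s, s < t₀ → ¬ C s := fun s hs => @Nat.find_min C hCdec ⟨k, hCk⟩ s hs
  have htk : t₀ ≤ k := @Nat.find_min' C hCdec ⟨k, hCk⟩ k hCk
  -- agent 0 is EF1 toward the other piece in both configurations
  have hA0P : ∃ S : Finset V, S ⊆ Q t₀ ∧ S.card ≤ 1 ∧
      PieceConnected G (Q t₀ \ S) ∧ ν 0 (P t₀) ≥ ν 0 (Q t₀ \ S) := by
    rcases eq_or_lt_of_le htk with hk | hk
    · refine ⟨∅, Finset.empty_subset _, by simp, ?_, ?_⟩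
      · rw [Finset.sdiff_empty, hQbig t₀ (le_of_eq hk.symm)]
        exact pieceConnected_empty G
      · rw [Finset.sdiff_empty, hQbig t₀ (le_of_eq hk.symm)]
        exact hmono 0 ∅ (P t₀) (Finset.empty_subset _)
    · refine ⟨{v ⟨t₀, hk⟩}, Finset.singleton_subset_iff.2 (hvQ t₀ hk), by simp, ?_, ?_⟩
      · rw [hQsucc t₀ hk]
        exact hQc (t₀ + 1) (by omega)
      · rw [hQsucc t₀ hk]
        exact hC
  have hA0Q : ∃ S : Finset V, S ⊆ P t₀ ∧ S.card ≤ 1 ∧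
      PieceConnected G (P t₀ \ S) ∧ ν 0 (Q t₀) ≥ ν 0 (P t₀ \ S) := by
    rcases Nat.eq_zero_or_pos t₀ with h0 | h1
    · refine ⟨∅, Finset.empty_subset _, by simp, ?_, ?_⟩
      · rw [Finset.sdiff_empty, h0, hP0]; exact pieceConnected_empty G
      · rw [Finset.sdiff_empty, h0, hP0]
        exact hmono 0 ∅ (Q 0) (Finset.empty_subset _)
    · have hk : t₀ - 1 < k := by omega
      have hnc := hmin (t₀ - 1) (by omega)
      rw [hCdef] at hnc
      simp only [not_le] at hnc
      have heq : t₀ - 1 + 1 = t₀ := by omega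
      rw [heq] at hnc
      refine ⟨{v ⟨t₀ - 1, hk⟩}, Finset.singleton_subset_iff.2 ?_, by simp, ?_, ?_⟩
      · have := hvP (t₀ - 1) hk; rwa [heq] at this
      · have := hPpred (t₀ - 1) hk; rw [heq] at this; rw [this]
        exact hPc (t₀ - 1) (by omega)
      · have := hPpred (t₀ - 1) hk; rw [heq] at this; rw [this]
        exact le_of_lt hnc
  -- choose allocation according to agent 1's preference
  rcases le_or_gt (ν 1 (P t₀)) (ν 1 (Q t₀)) with hch | hch
  · -- agent 0 gets P, agent 1 gets Q
    refine ⟨![P t₀, Q t₀], pairwise_fin_two _ (by simpa using hdisj t₀), ?_, ?_, ?_⟩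
    · ext x
      simp only [Finset.mem_biUnion, Finset.mem_univ, iff_true, true_and]
      have := hunion t₀
      have hx : x ∈ P t₀ ∪ Q t₀ := this ▸ Finset.mem_univ x
      rcases Finset.mem_union.1 hx with h | h
      · exact ⟨0, by simpa using h⟩
      · exact ⟨1, by simpa using h⟩
    · intro i
      fin_cases i
      · simpa using hPc t₀ htk
      · simpa using hQc t₀ htk
    · intro i j hij
      clear hPdef hQdef hCdef ht₀def
      fin_cases i <;> fin_cases j <;> simp_all
      exact ⟨∅, Finset.empty_subset _, by simp,
        by simpa [Finset.sdiff_empty] using hPc t₀ htk,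
        by simpa [Finset.sdiff_empty] using hch⟩
  · -- agent 0 gets Q, agent 1 gets P
    refine ⟨![Q t₀, P t₀], pairwise_fin_two _ (by simpa using (hdisj t₀).symm), ?_, ?_, ?_⟩
    · ext x
      simp only [Finset.mem_biUnion, Finset.mem_univ, iff_true, true_and]
      have := hunion t₀
      have hx : x ∈ P t₀ ∪ Q t₀ := this ▸ Finset.mem_univ x
      rcases Finset.mem_union.1 hx with h | h
      · exact ⟨1, by simpa using h⟩
      · exact ⟨0, by simpa using h⟩
    · intro i
      fin_cases i
      · simpa using hQc t₀ htk
      · simpa using hPc t₀ htk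
    · intro i j hij
      clear hPdef hQdef hCdef ht₀def
      fin_cases i <;> fin_cases j <;> simp_all
      exact ⟨∅, Finset.empty_subset _, by simp,
        by simpa [Finset.sdiff_empty] using hQc t₀ htk,
        by simpa [Finset.sdiff_empty] using le_of_lt hch⟩
end

section
/- Let G = (V,E) be a finite connected simple graph that contains a trident. Then G does not guarantee EF1_outer allocations for two agents even with identical, additive, binary valuations: there exists a weight function w : V → {0,1} such that, with both agents using the additive valuation ν(S) = Σ_{v∈S} w(v), no contiguous allocation (A₁, A₂) of V is envy-free up to one outer good (EF1_outer). -/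
set_option maxHeartbeats 1000000

lemma walk_in_set {V : Type} {G : SimpleGraph V} {A : Set V}
    (h : (G.induce A).Preconnected) {a b : V} (ha : a ∈ A) (hb : b ∈ A) :
    ∃ p : G.Walk a b, ∀ x ∈ p.support, x ∈ A := by
  obtain ⟨p⟩ := h ⟨a, ha⟩ ⟨b, hb⟩
  refine ⟨p.map ⟨Subtype.val, fun {u v} h => h⟩, fun x hx => ?_⟩
  rw [SimpleGraph.Walk.support_map, List.mem_map] at hx
  obtain ⟨u, -, rfl⟩ := hx
  exact u.2

lemma sum_indicator {V : Type} [DecidableEq V] (W X : Finset V) :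
    ∑ x ∈ X, (if x ∈ W then (1:ℝ) else 0) = ((X ∩ W).card : ℝ) := by
  rw [Finset.sum_boole, Finset.filter_mem_eq_inter]

lemma count_contra {V : Type} [DecidableEq V] {A B S W D Eb : Finset V}
    (hDA : D ⊆ A) (hDW : D ⊆ W) (hBW : B ∩ W ⊆ Eb) (hS : S.card ≤ 1)
    (hlt : Eb.card + 2 ≤ D.card)
    (hsum : ∑ x ∈ B, (if x ∈ W then (1:ℝ) else 0) ≥ ∑ x ∈ A \ S, (if x ∈ W then (1:ℝ) else 0)) :
    False := by
  rw [sum_indicator, sum_indicator] at hsum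
  have h1 : (B ∩ W).card ≤ Eb.card := Finset.card_le_card hBW
  have h2 : D ⊆ ((A \ S) ∩ W) ∪ S := by
    intro x hx
    by_cases hxS : x ∈ S
    · exact Finset.mem_union_right _ hxS
    · exact Finset.mem_union_left _
        (Finset.mem_inter.mpr ⟨Finset.mem_sdiff.mpr ⟨hDA hx, hxS⟩, hDW hx⟩)
  have h3 : D.card ≤ ((A \ S) ∩ W).card + S.card :=
    le_trans (Finset.card_le_card h2) (Finset.card_union_le _ _)
  have hlt2 : (B ∩ W).card < ((A \ S) ∩ W).card := by omega
  have : ((B ∩ W).card : ℝ) < (((A \ S) ∩ W).card : ℝ) := by exact_mod_cast hlt2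
  linarith

lemma pair_contra {V : Type} [DecidableEq V] {G : SimpleGraph V}
    {P Q : Set V} {s s' u t t' v : V} {W : Finset V}
    (hWsub : ∀ x ∈ W, x = s ∨ x = s' ∨ x = u ∨ x = t ∨ x = t' ∨ x = v)
    (hsW : s ∈ W) (hs'W : s' ∈ W) (htW : t ∈ W) (ht'W : t' ∈ W)
    (hsP : s ∈ P) (htP : t ∈ P) (hs'Q : s' ∈ Q) (ht'Q : t' ∈ Q)
    (hsep : ∀ x y : V, x ∈ P → y ∈ Q → ∀ p : G.Walk x y, s ∈ p.support ∧ s' ∈ p.support)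
    (hts : t ≠ s) (ht's' : t' ≠ s')
    (htype : (u = s ∧ s = s') ∨ s ≠ s')
    {A B S : Finset V} (hdisj : Disjoint A B)
    (hA : (G.induce ((A : Finset V) : Set V)).Preconnected)
    (htA : t ∈ A) (ht'A : t' ∈ A) (hS : S.card ≤ 1)
    (hsum : ∑ x ∈ B, (if x ∈ W then (1:ℝ) else 0) ≥ ∑ x ∈ A \ S, (if x ∈ W then (1:ℝ) else 0)) :
    False := by
  have hPQ : ∀ x, x ∈ P → x ∈ Q → x = s ∧ x = s' := by
    intro x hp hq
    have h := hsep x x hp hq SimpleGraph.Walk.nil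
    simp only [SimpleGraph.Walk.support_nil, List.mem_singleton] at h
    exact ⟨h.1.symm, h.2.symm⟩
  have htt' : t ≠ t' := fun h => hts (hPQ t htP (h ▸ ht'Q)).1
  have hts' : t ≠ s' := fun h => hts (hPQ t htP (h ▸ hs'Q)).1
  have ht's : t' ≠ s := fun h => ht's' (hPQ t' (h ▸ hsP) ht'Q).2
  obtain ⟨p, hp⟩ := walk_in_set hA (Finset.mem_coe.mpr htA) (Finset.mem_coe.mpr ht'A)
  have hw := hsep t t' htP ht'Q p
  have hsA : s ∈ A := Finset.mem_coe.mp (hp s hw.1)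
  have hs'A : s' ∈ A := Finset.mem_coe.mp (hp s' hw.2)
  have hnotB : ∀ x, x ∈ A → x ∉ B := fun x hx => Finset.disjoint_left.mp hdisj hx
  rcases htype with ⟨hus, hss'⟩ | hne
  · -- type I
    refine count_contra (A := A) (B := B) (S := S) (W := W)
      (D := {s, t, t'}) (Eb := {v}) ?_ ?_ ?_ hS ?_ hsum
    · intro x hx
      simp only [Finset.mem_insert, Finset.mem_singleton] at hx
      rcases hx with rfl | rfl | rfl <;> assumption
    · intro x hx
      simp only [Finset.mem_insert, Finset.mem_singleton] at hx
      rcases hx with rfl | rfl | rfl <;> assumption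
    · intro x hx
      rw [Finset.mem_inter] at hx
      rcases hWsub x hx.2 with rfl | rfl | rfl | rfl | rfl | rfl
      · exact absurd hx.1 (hnotB _ hsA)
      · exact absurd hx.1 (hnotB _ (hss' ▸ hsA))
      · exact absurd hx.1 (hnotB _ (hus ▸ hsA))
      · exact absurd hx.1 (hnotB _ htA)
      · exact absurd hx.1 (hnotB _ ht'A)
      · exact Finset.mem_singleton_self _
    · have hc : ({s, t, t'} : Finset V).card = 3 := by
        rw [Finset.card_insert_of_notMem (by simp [hts.symm, ht's.symm]),
          Finset.card_insert_of_notMem (by simp [htt']), Finset.card_singleton]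
      rw [hc, Finset.card_singleton]
  · -- type II
    have hst' : s ≠ t' := fun h => hne (hPQ s hsP (h ▸ ht'Q)).2
    have hs't : s' ≠ t := fun h => hne ((hPQ t htP (h ▸ hs'Q)).1.symm.trans (hPQ t htP (h ▸ hs'Q)).2)
    refine count_contra (A := A) (B := B) (S := S) (W := W)
      (D := {s, s', t, t'}) (Eb := {u, v}) ?_ ?_ ?_ hS ?_ hsum
    · intro x hx
      simp only [Finset.mem_insert, Finset.mem_singleton] at hx
      rcases hx with rfl | rfl | rfl | rfl <;> assumption
    · intro x hx
      simp only [Finset.mem_insert, Finset.mem_singleton] at hx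
      rcases hx with rfl | rfl | rfl | rfl <;> assumption
    · intro x hx
      rw [Finset.mem_inter] at hx
      rcases hWsub x hx.2 with rfl | rfl | rfl | rfl | rfl | rfl
      · exact absurd hx.1 (hnotB _ hsA)
      · exact absurd hx.1 (hnotB _ hs'A)
      · exact Finset.mem_insert_self _ _
      · exact absurd hx.1 (hnotB _ htA)
      · exact absurd hx.1 (hnotB _ ht'A)
      · exact Finset.mem_insert_of_mem (Finset.mem_singleton_self _)
    · have hc : ({s, s', t, t'} : Finset V).card = 4 := by
        rw [Finset.card_insert_of_notMem (by simp [hne, hts.symm, hst']),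
          Finset.card_insert_of_notMem (by simp [hs't, ht's'.symm]),
          Finset.card_insert_of_notMem (by simp [htt']), Finset.card_singleton]
      have hEb : ({u, v} : Finset V).card ≤ 2 :=
        le_trans (Finset.card_insert_le _ _) (by rw [Finset.card_singleton])
      omega
/-- `G` contains a trident: connected subgraphs (given by their vertex sets)
`C, P₁, P₂, P₃`, with contact vertices `s₁, s₂, s₃`, such that each `Pᵢ` meets `C`
exactly in `sᵢ`, each `Pᵢ` has at least two vertices, every path between `Pᵢ` and `Pⱼ`
(for `i ≠ j`) passes through both `sᵢ` and `sⱼ`, and either `C` is a single vertex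
(type I) or the three contact vertices are pairwise distinct (type II). -/
def HasTrident {V : Type} (G : SimpleGraph V) : Prop :=
  ∃ (C P₁ P₂ P₃ : Set V) (s₁ s₂ s₃ : V),
    (G.induce C).Connected ∧ (G.induce P₁).Connected ∧
    (G.induce P₂).Connected ∧ (G.induce P₃).Connected ∧
    P₁ ∩ C = {s₁} ∧ P₂ ∩ C = {s₂} ∧ P₃ ∩ C = {s₃} ∧
    2 ≤ P₁.ncard ∧ 2 ≤ P₂.ncard ∧ 2 ≤ P₃.ncard ∧
    (∀ x y : V, x ∈ P₁ → y ∈ P₂ → ∀ p : G.Walk x y, s₁ ∈ p.support ∧ s₂ ∈ p.support) ∧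
    (∀ x y : V, x ∈ P₁ → y ∈ P₃ → ∀ p : G.Walk x y, s₁ ∈ p.support ∧ s₃ ∈ p.support) ∧
    (∀ x y : V, x ∈ P₂ → y ∈ P₃ → ∀ p : G.Walk x y, s₂ ∈ p.support ∧ s₃ ∈ p.support) ∧
    ((∃ s : V, C = {s}) ∨ (s₁ ≠ s₂ ∧ s₁ ≠ s₃ ∧ s₂ ≠ s₃))

/-- A finite connected graph containing a trident fails to guarantee EF1-outer
allocations for two agents, even with identical, additive, binary valuations: there is
a `{0,1}`-weighting such that no contiguous allocation is envy-free up to one outer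
good. -/
theorem stmt_18 {V : Type} [Fintype V] [DecidableEq V] (G : SimpleGraph V)
    (hconn : G.Connected) (htri : HasTrident G) :
    ∃ w : V → ℝ, (∀ v, w v = 0 ∨ w v = 1) ∧
      ∀ A : Fin 2 → Finset V,
        (Pairwise fun i j => Disjoint (A i) (A j)) →
        Finset.univ.biUnion A = Finset.univ →
        (∀ i, (G.induce ((A i : Finset V) : Set V)).Preconnected) →
        ¬ (∀ i j : Fin 2, i ≠ j → ∃ S : Finset V, S ⊆ A j ∧ S.card ≤ 1 ∧
            (G.induce ((A j \ S : Finset V) : Set V)).Preconnected ∧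
            ∑ x ∈ A i, w x ≥ ∑ x ∈ A j \ S, w x) := by
  obtain ⟨C, P₁, P₂, P₃, s₁, s₂, s₃, hC, hP1, hP2, hP3, hI1, hI2, hI3,
    hn1, hn2, hn3, h12, h13, h23, htype⟩ := htri
  have hs1P : s₁ ∈ P₁ := by
    have : s₁ ∈ P₁ ∩ C := hI1 ▸ Set.mem_singleton s₁
    exact this.1
  have hs2P : s₂ ∈ P₂ := by
    have : s₂ ∈ P₂ ∩ C := hI2 ▸ Set.mem_singleton s₂
    exact this.1
  have hs3P : s₃ ∈ P₃ := by
    have : s₃ ∈ P₃ ∩ C := hI3 ▸ Set.mem_singleton s₃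
    exact this.1
  obtain ⟨t₁, ht1P, ht1s⟩ := Set.exists_ne_of_one_lt_ncard (show 1 < P₁.ncard by omega) s₁
  obtain ⟨t₂, ht2P, ht2s⟩ := Set.exists_ne_of_one_lt_ncard (show 1 < P₂.ncard by omega) s₂
  obtain ⟨t₃, ht3P, ht3s⟩ := Set.exists_ne_of_one_lt_ncard (show 1 < P₃.ncard by omega) s₃
  -- the type hypothesis, reformulated
  have htype' : ∀ i j : Fin 3, i ≠ j →
      ((∀ a b : Fin 3, ![s₁,s₂,s₃] a = ![s₁,s₂,s₃] b) ∨
        ![s₁,s₂,s₃] i ≠ ![s₁,s₂,s₃] j) := by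
    rcases htype with ⟨c, hc⟩ | ⟨h1, h2, h3⟩
    · intro i j _
      left
      have e1 : s₁ = c := by
        have : s₁ ∈ C := (hI1 ▸ Set.mem_singleton s₁ : s₁ ∈ P₁ ∩ C).2
        rwa [hc] at this
      have e2 : s₂ = c := by
        have : s₂ ∈ C := (hI2 ▸ Set.mem_singleton s₂ : s₂ ∈ P₂ ∩ C).2
        rwa [hc] at this
      have e3 : s₃ = c := by
        have : s₃ ∈ C := (hI3 ▸ Set.mem_singleton s₃ : s₃ ∈ P₃ ∩ C).2
        rwa [hc] at this
      intro a b
      fin_cases a <;> fin_cases b <;> simp [e1, e2, e3]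
    · intro i j hij
      right
      fin_cases i <;> fin_cases j <;> simp_all <;> first | exact fun h => h1 h.symm | exact fun h => h2 h.symm | exact fun h => h3 h.symm
  set W : Finset V := {s₁, s₂, s₃, t₁, t₂, t₃} with hW
  refine ⟨fun v => if v ∈ W then (1:ℝ) else 0, fun v => by by_cases h : v ∈ W <;> simp [h], ?_⟩
  intro A hdisj hcov hpre hEF
  have hmem : ∀ v : V, ∃ i, v ∈ A i := by
    intro v
    have : v ∈ Finset.univ.biUnion A := hcov ▸ Finset.mem_univ v
    simpa [Finset.mem_biUnion] using this
  obtain ⟨i₁, hi1⟩ := hmem t₁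
  obtain ⟨i₂, hi2⟩ := hmem t₂
  obtain ⟨i₃, hi3⟩ := hmem t₃
  have hother : ∀ m : Fin 2, ∃ m' : Fin 2, m' ≠ m := by
    intro m
    refine ⟨if m = 0 then 1 else 0, ?_⟩
    fin_cases m <;> decide
  -- a wrapper applying pair_contra given two t's in the same bundle
  have key : ∀ (Pa Pb : Set V) (sa sb uu taa tbb vv : V) (m : Fin 2),
      (∀ x ∈ W, x = sa ∨ x = sb ∨ x = uu ∨ x = taa ∨ x = tbb ∨ x = vv) →
      sa ∈ W → sb ∈ W → taa ∈ W → tbb ∈ W →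
      sa ∈ Pa → taa ∈ Pa → sb ∈ Pb → tbb ∈ Pb →
      (∀ x y : V, x ∈ Pa → y ∈ Pb → ∀ p : G.Walk x y, sa ∈ p.support ∧ sb ∈ p.support) →
      taa ≠ sa → tbb ≠ sb → ((uu = sa ∧ sa = sb) ∨ sa ≠ sb) →
      taa ∈ A m → tbb ∈ A m → False := by
    intro Pa Pb sa sb uu taa tbb vv m hWsub hsaW hsbW htaW htbW hsaP htaP hsbP htbP
      hsep htas htbs htyp htam htbm
    obtain ⟨m', hm'⟩ := hother m
    obtain ⟨S, hSsub, hScard, hSpre, hsum⟩ := hEF m' m hm'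
    exact pair_contra hWsub hsaW hsbW htaW htbW hsaP htaP hsbP htbP hsep htas htbs htyp
      (hdisj hm'.symm) (hpre m) htam htbm hScard hsum
  by_cases e12 : i₁ = i₂
  · refine key P₁ P₂ s₁ s₂ s₃ t₁ t₂ t₃ i₁ ?_ ?_ ?_ ?_ ?_ hs1P ht1P hs2P ht2P h12 ht1s ht2s ?_ hi1 (e12 ▸ hi2)
    · intro x hx
      simp only [hW, Finset.mem_insert, Finset.mem_singleton] at hx
      tauto
    · simp [hW]
    · simp [hW]
    · simp [hW]
    · simp [hW]
    · rcases htype' 0 1 (by decide) with h | h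
      · exact Or.inl ⟨by simpa using (h 2 0), by simpa using (h 0 1)⟩
      · exact Or.inr (by simpa using h)
  · by_cases e13 : i₁ = i₃
    · refine key P₁ P₃ s₁ s₃ s₂ t₁ t₃ t₂ i₁ ?_ ?_ ?_ ?_ ?_ hs1P ht1P hs3P ht3P h13 ht1s ht3s ?_ hi1 (e13 ▸ hi3)
      · intro x hx
        simp only [hW, Finset.mem_insert, Finset.mem_singleton] at hx
        tauto
      · simp [hW]
      · simp [hW]
      · simp [hW]
      · simp [hW]
      · rcases htype' 0 2 (by decide) with h | h
        · exact Or.inl ⟨by simpa using (h 1 0), by simpa using (h 0 2)⟩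
        · exact Or.inr (by simpa using h)
    · have e23 : i₂ = i₃ := by
        have v12 : i₁.val ≠ i₂.val := fun h => e12 (Fin.val_injective h)
        have v13 : i₁.val ≠ i₃.val := fun h => e13 (Fin.val_injective h)
        have l1 := i₁.isLt; have l2 := i₂.isLt; have l3 := i₃.isLt
        exact Fin.ext (by omega)
      refine key P₂ P₃ s₂ s₃ s₁ t₂ t₃ t₁ i₂ ?_ ?_ ?_ ?_ ?_ hs2P ht2P hs3P ht3P h23 ht2s ht3s ?_ hi2 (e23 ▸ hi3)
      · intro x hx
        simp only [hW, Finset.mem_insert, Finset.mem_singleton] at hx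
        tauto
      · simp [hW]
      · simp [hW]
      · simp [hW]
      · simp [hW]
      · rcases htype' 1 2 (by decide) with h | h
        · exact Or.inl ⟨by simpa using (h 0 1), by simpa using (h 1 2)⟩
        · exact Or.inr (by simpa using h)
end
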